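/- arXiv:1904.01474 — 7 statements merged into one kernel-verified Lean document; each statement's English description precedes it below -/
import Mathlib

section
/- Let ((J_k, K_k))_{k≥1} be an i.i.d. sequence of pairs of real-valued random variables. Then for every n ≥ 1, the backward weighted sum S̃_n := Σ_{k=1}^{n} (∏_{i=k+1}^{n} J_i)² K_k and the forward weighted sum S_n := Σ_{k=1}^{n} (∏_{i=1}^{k-1} J_i)² K_k have the same distribution. -/
open MeasureTheory ProbabilityTheory Filter

/-- Key lemma: for an i.i.d. sequence `X : ℕ → Ω → E` and an injective `σ : Fin n → ℕ`,
the joint law of `(X (σ i))_i` is the product of the laws of `X 0`. -/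
lemma map_fun_eq_pi {Ω E : Type*} [MeasurableSpace Ω] [MeasurableSpace E]
    (μ : Measure Ω) [IsProbabilityMeasure μ] (X : ℕ → Ω → E)
    (hm : ∀ k, Measurable (X k))
    (hindep : iIndepFun X μ)
    (hident : ∀ k, IdentDistrib (X k) (X 0) μ μ)
    (n : ℕ) (σ : Fin n → ℕ) (hσ : Function.Injective σ) :
    μ.map (fun ω i => X (σ i) ω) = Measure.pi (fun _ : Fin n => μ.map (X 0)) := by
  have : IsProbabilityMeasure (μ.map (X 0)) := Measure.isProbabilityMeasure_map (hm 0).aemeasurable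
  refine (Measure.pi_eq fun s hs => ?_).symm
  classical
  -- extend the family `s` to a family indexed by `ℕ`
  set t : ℕ → Set E := fun j =>
    if h : ∃ i, σ i = j then s h.choose else Set.univ with ht
  have htσ : ∀ i : Fin n, t (σ i) = s i := by
    intro i
    have h : ∃ i' : Fin n, σ i' = σ i := ⟨i, rfl⟩
    have : h.choose = i := hσ h.choose_spec
    simp [ht, dif_pos h, this]
  have htm : ∀ j, MeasurableSet (t j) := by
    intro j
    by_cases h : ∃ i, σ i = j
    · simpa [ht, dif_pos h] using hs h.choose
    · simp [ht, dif_neg h]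
  have hmeasmap : Measurable (fun ω (i : Fin n) => X (σ i) ω) :=
    measurable_pi_lambda _ fun i => hm (σ i)
  rw [Measure.map_apply hmeasmap (MeasurableSet.univ_pi hs)]
  have hpre : (fun ω (i : Fin n) => X (σ i) ω) ⁻¹' Set.pi Set.univ s
      = ⋂ j ∈ Finset.image σ Finset.univ, X j ⁻¹' t j := by
    ext ω
    simp only [Set.mem_preimage, Set.mem_pi, Set.mem_univ, forall_true_left, Set.mem_iInter,
      Finset.mem_image, Finset.mem_univ, true_and]
    constructor
    · rintro h j ⟨i, rfl⟩
      rw [htσ i]; exact h i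
    · intro h i
      have := h (σ i) ⟨i, rfl⟩
      rwa [htσ i] at this
  rw [hpre, hindep.measure_inter_preimage_eq_mul _ (fun j _ => htm j),
    Finset.prod_image (fun a _ b _ h => hσ h)]
  refine Finset.prod_congr rfl fun i _ => ?_
  rw [htσ i, ← Measure.map_apply (hm (σ i)) (hs i), (hident (σ i)).map_eq]

/-- For an i.i.d. sequence of pairs `(J_k, K_k)` of real random variables,
for every `n ≥ 1` the backward weighted sum
`S̃_n = Σ_{k=1}^{n} (∏_{i=k+1}^{n} J_i)² K_k`
and the forward weighted sum
`S_n = Σ_{k=1}^{n} (∏_{i=1}^{k-1} J_i)² K_k`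
have the same distribution.  (Indices are shifted by one: the Lean index `k : ℕ`
corresponds to the paper index `k + 1`.) -/
theorem stmt0 {Ω : Type*} [MeasurableSpace Ω] (μ : Measure Ω) [IsProbabilityMeasure μ]
    (J K : ℕ → Ω → ℝ)
    (hmeas : ∀ k, Measurable fun ω => (J k ω, K k ω))
    (hindep : iIndepFun (fun k ω => (J k ω, K k ω)) μ)
    (hident : ∀ k, IdentDistrib (fun ω => (J k ω, K k ω)) (fun ω => (J 0 ω, K 0 ω)) μ μ)
    (n : ℕ) (hn : 1 ≤ n) :
    IdentDistrib
      (fun ω => ∑ k ∈ Finset.range n, (∏ i ∈ Finset.Ico (k + 1) n, J i ω) ^ 2 * K k ω)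
      (fun ω => ∑ k ∈ Finset.range n, (∏ i ∈ Finset.range k, J i ω) ^ 2 * K k ω) μ μ := by
  classical
  set X : ℕ → Ω → ℝ × ℝ := fun k ω => (J k ω, K k ω) with hX
  -- the two index maps
  have hσ1 : Function.Injective (fun i : Fin n => (i : ℕ)) := Fin.val_injective
  have hσ2 : Function.Injective (fun i : Fin n => n - 1 - (i : ℕ)) := by
    intro a b h
    have ha := a.isLt; have hb := b.isLt
    simp only at h
    exact Fin.ext (by omega)
  have h1 := map_fun_eq_pi μ X hmeas hindep hident n _ hσ1
  have h2 := map_fun_eq_pi μ X hmeas hindep hident n _ hσ2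
  -- the two vector-valued random variables are identically distributed
  have hvec : IdentDistrib (fun ω (i : Fin n) => X i ω)
      (fun ω (i : Fin n) => X (n - 1 - (i : ℕ)) ω) μ μ :=
    ⟨(measurable_pi_lambda (fun ω (i : Fin n) => X i ω) fun i => hmeas i).aemeasurable,
     (measurable_pi_lambda (fun ω (i : Fin n) => X (n - 1 - (i : ℕ)) ω)
       fun i => hmeas _).aemeasurable, h1.trans h2.symm⟩
  -- the summation functional
  set F : (Fin n → ℝ × ℝ) → ℝ := fun v =>
    ∑ k : Fin n, (∏ i : Fin n, if (k : ℕ) < (i : ℕ) then (v i).1 else 1) ^ 2 * (v k).2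
    with hF
  have hFmeas : Measurable F := by
    apply Finset.measurable_sum
    intro k _
    apply Measurable.mul
    · apply Measurable.pow _ measurable_const
      apply Finset.measurable_prod
      intro i _
      by_cases h : (k : ℕ) < (i : ℕ)
      · simpa [h] using (measurable_pi_apply i).fst
      · simp only [h, if_false]; exact measurable_const
    · exact (measurable_pi_apply k).snd
  have key := hvec.comp hFmeas
  -- rewrite the inner product over `Fin n` as a product over `Ico (k+1) n`
  have hprod : ∀ (f : ℕ → ℝ) (k : ℕ),
      (∏ i : Fin n, if k < (i : ℕ) then f i else 1) = ∏ i ∈ Finset.Ico (k + 1) n, f i := by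
    intro f k
    rw [Fin.prod_univ_eq_prod_range (fun i => if k < i then f i else 1) n,
      ← Finset.prod_filter]
    congr 1
    ext i
    simp [Finset.mem_filter, Finset.mem_Ico]
    omega
  have hL : (fun ω => ∑ k ∈ Finset.range n, (∏ i ∈ Finset.Ico (k + 1) n, J i ω) ^ 2 * K k ω)
      = F ∘ (fun ω (i : Fin n) => X i ω) := by
    funext ω
    simp only [Function.comp_apply, hF]
    rw [Fin.sum_univ_eq_sum_range
      (fun k => (∏ i : Fin n, if k < (i : ℕ) then J i ω else 1) ^ 2 * K k ω) n]
    exact Finset.sum_congr rfl fun k _ => by rw [hprod (fun i => J i ω) k]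
  have hR : (fun ω => ∑ k ∈ Finset.range n, (∏ i ∈ Finset.range k, J i ω) ^ 2 * K k ω)
      = F ∘ (fun ω (i : Fin n) => X (n - 1 - (i : ℕ)) ω) := by
    funext ω
    simp only [Function.comp_apply, hF]
    rw [Fin.sum_univ_eq_sum_range
      (fun k => (∏ i : Fin n, if k < (i : ℕ) then J (n - 1 - i) ω else 1) ^ 2
        * K (n - 1 - k) ω) n,
      ← Finset.sum_range_reflect
        (fun k => (∏ i ∈ Finset.range k, J i ω) ^ 2 * K k ω) n]
    refine Finset.sum_congr rfl fun k hk => ?_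
    rw [Finset.mem_range] at hk
    rw [hprod (fun i => J (n - 1 - i) ω) k]
    congr 1
    rw [sq, sq]
    congr 1 <;>
    · refine Finset.prod_nbij' (fun i => n - 1 - i) (fun j => n - 1 - j) ?_ ?_ ?_ ?_ ?_ <;>
        intro a ha <;>
        simp only [Finset.mem_Ico, Finset.mem_range] at ha ⊢ <;>
        first | omega | (congr 1; omega)
  rw [hL, hR]
  exact key
end

section
/- Let ((J_k, K_k, L_k))_{k≥1} be an i.i.d. sequence of triples of real random variables with L_k > 0 almost surely. Define τ_0 = 0, τ_n = L_1 + ⋯ + L_n, and g_t = sup{n ≥ 0 : τ_n ≤ t} for t ≥ 0. Then for every t ≥ 0, the random variables S̃_{g_t} and S_{g_t} have the same distribution, where S̃_n := Σ_{k=1}^{n} (∏_{i=k+1}^{n} J_i)² K_k and S_n := Σ_{k=1}^{n} (∏_{i=1}^{k-1} J_i)² K_k. -/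
open MeasureTheory ProbabilityTheory Filter

/-- The renewal counting variable `g_t = sup { n : τ_n ≤ t }` where
`τ_n = L_1 + ⋯ + L_n` (with `τ_0 = 0`); here `L k` denotes the paper's `L_{k+1}`. -/
noncomputable def renewalCount (L : ℕ → ℝ) (t : ℝ) : ℕ :=
  sSup {n : ℕ | ∑ k ∈ Finset.range n, L k ≤ t}

lemma renewalCount_eq (L : ℕ → ℝ) {t : ℝ} {n : ℕ}
    (h1 : ∑ k ∈ Finset.range n, L k ≤ t)
    (h2 : ∀ m, n < m → t < ∑ k ∈ Finset.range m, L k) :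
    renewalCount L t = n := by
  have hub : n ∈ upperBounds {m : ℕ | ∑ k ∈ Finset.range m, L k ≤ t} := by
    intro m hm
    by_contra hc
    exact absurd hm (not_le.2 (h2 m (lt_of_not_ge hc)))
  exact le_antisymm (csSup_le ⟨n, h1⟩ hub) (le_csSup ⟨n, hub⟩ h1)

lemma renewalCount_eq_iff (L : ℕ → ℝ) {t : ℝ} (ht : 0 ≤ t) {n : ℕ} (hn : n ≠ 0) :
    renewalCount L t = n ↔
      (∑ k ∈ Finset.range n, L k ≤ t ∧ ∀ m, n < m → t < ∑ k ∈ Finset.range m, L k) := by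
  constructor
  · intro h
    by_cases hb : BddAbove {m : ℕ | ∑ k ∈ Finset.range m, L k ≤ t}
    · have hne : ({m : ℕ | ∑ k ∈ Finset.range m, L k ≤ t}).Nonempty := ⟨0, by simpa using ht⟩
      have hmem := Nat.sSup_mem hne hb
      rw [renewalCount] at h
      constructor
      · rw [← h]; exact hmem
      · intro m hm
        by_contra hc
        have : m ≤ sSup {m : ℕ | ∑ k ∈ Finset.range m, L k ≤ t} :=
          le_csSup hb (not_lt.1 hc)
        omega
    · exfalso
      apply hn
      rw [← h, renewalCount, csSup_of_not_bddAbove hb]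
      simp
  · rintro ⟨h1, h2⟩
    exact renewalCount_eq L h1 h2

lemma prod_Ico_reflect (a : ℕ → ℝ) {n k : ℕ} (hk : k < n) :
    ∏ i ∈ Finset.Ico (k + 1) n, a (n - 1 - i) = ∏ i ∈ Finset.range (n - 1 - k), a i := by
  refine Finset.prod_nbij' (fun i => n - 1 - i) (fun j => n - 1 - j) ?_ ?_ ?_ ?_ ?_ <;>
    intros <;> simp_all [Finset.mem_Ico, Finset.mem_range] <;> omega

lemma reflect_sum (a c : ℕ → ℝ) (n : ℕ) :
    ∑ k ∈ Finset.range n, (∏ i ∈ Finset.Ico (k + 1) n, a (n - 1 - i)) ^ 2 * c (n - 1 - k)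
      = ∑ k ∈ Finset.range n, (∏ i ∈ Finset.range k, a i) ^ 2 * c k := by
  rw [← Finset.sum_range_reflect (fun k => (∏ i ∈ Finset.range k, a i) ^ 2 * c k) n]
  refine Finset.sum_congr rfl fun k hk => ?_
  rw [Finset.mem_range] at hk
  rw [prod_Ico_reflect a hk]

lemma measurable_glue {Ω : Type*} [MeasurableSpace Ω] {F : ℕ → Ω → ℝ}
    (hF : ∀ n, Measurable (F n)) {r : Ω → ℕ} (hr : Measurable r) :
    Measurable fun ω => F (r ω) ω := by
  have h : Measurable fun p : Ω × ℕ => F p.2 p.1 :=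
    measurable_from_prod_countable_left fun n => hF n
  exact h.comp (measurable_id.prodMk hr)

/-- For an i.i.d. sequence of triples `(J_k, K_k, L_k)` of real random
variables with `L_k > 0` a.s., and the renewal counting variable
`g_t = sup {n ≥ 0 : τ_n ≤ t}` with `τ_n = L_1 + ⋯ + L_n`, for every `t ≥ 0` the random
variables `S̃_{g_t}` and `S_{g_t}` have the same distribution, where
`S̃_n = Σ_{k=1}^{n} (∏_{i=k+1}^{n} J_i)² K_k` and `S_n = Σ_{k=1}^{n} (∏_{i=1}^{k-1} J_i)² K_k`.
(Lean index `k` corresponds to the paper index `k + 1`.) -/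
theorem stmt1 {Ω : Type*} [MeasurableSpace Ω] (μ : Measure Ω) [IsProbabilityMeasure μ]
    (J K L : ℕ → Ω → ℝ)
    (hmeas : ∀ k, Measurable fun ω => (J k ω, K k ω, L k ω))
    (hindep : iIndepFun (fun k ω => (J k ω, K k ω, L k ω)) μ)
    (hident : ∀ k, IdentDistrib (fun ω => (J k ω, K k ω, L k ω))
      (fun ω => (J 0 ω, K 0 ω, L 0 ω)) μ μ)
    (hLpos : ∀ k, ∀ᵐ ω ∂μ, 0 < L k ω)
    (t : ℝ) (ht : 0 ≤ t) :
    IdentDistrib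
      (fun ω => ∑ k ∈ Finset.range (renewalCount (fun i => L i ω) t),
        (∏ i ∈ Finset.Ico (k + 1) (renewalCount (fun i => L i ω) t), J i ω) ^ 2 * K k ω)
      (fun ω => ∑ k ∈ Finset.range (renewalCount (fun i => L i ω) t),
        (∏ i ∈ Finset.range k, J i ω) ^ 2 * K k ω) μ μ := by
  classical
  set E := ℝ × ℝ × ℝ with hE
  set X : ℕ → Ω → E := fun k ω => (J k ω, K k ω, L k ω) with hX
  have hJ : ∀ k, Measurable (J k) := fun k => measurable_fst.comp (hmeas k)
  have hK : ∀ k, Measurable (K k) := fun k => (measurable_fst.comp measurable_snd).comp (hmeas k)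
  have hL : ∀ k, Measurable (L k) := fun k => (measurable_snd.comp measurable_snd).comp (hmeas k)
  -- partial sums
  set T : ℕ → Ω → ℝ := fun n ω => ∑ k ∈ Finset.range n, L k ω with hT
  have hTmeas : ∀ n, Measurable (T n) := fun n => Finset.measurable_sum _ fun k _ => hL k
  -- renewal count
  set rc : Ω → ℕ := fun ω => renewalCount (fun i => L i ω) t with hrc_def
  -- the two sums as functions of a fixed n
  set Ft : ℕ → Ω → ℝ := fun n ω =>
    ∑ k ∈ Finset.range n, (∏ i ∈ Finset.Ico (k + 1) n, J i ω) ^ 2 * K k ω with hFt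
  set F : ℕ → Ω → ℝ := fun n ω =>
    ∑ k ∈ Finset.range n, (∏ i ∈ Finset.range k, J i ω) ^ 2 * K k ω with hF
  have hFtmeas : ∀ n, Measurable (Ft n) := fun n =>
    Finset.measurable_sum _ fun k _ =>
      ((Finset.measurable_prod _ fun i _ => hJ i).pow_const 2).mul (hK k)
  have hFmeas : ∀ n, Measurable (F n) := fun n =>
    Finset.measurable_sum _ fun k _ =>
      ((Finset.measurable_prod _ fun i _ => hJ i).pow_const 2).mul (hK k)
  -- the good set
  set G : Set Ω := ⋂ k, {ω | 0 < L k ω} with hG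
  have hGmeas : MeasurableSet G :=
    MeasurableSet.iInter fun k => measurableSet_lt measurable_const (hL k)
  have hGc : μ Gᶜ = 0 := by
    have hae : ∀ᵐ ω ∂μ, ∀ k, 0 < L k ω := ae_all_iff.2 hLpos
    rw [ae_iff] at hae
    convert hae using 2
    ext ω
    simp [hG]
  -- characterization of {rc = n} for n ≠ 0
  have hrc_iff : ∀ (ω : Ω) (n : ℕ), n ≠ 0 →
      (rc ω = n ↔ (T n ω ≤ t ∧ ∀ m, n < m → t < T m ω)) := by
    intro ω n hn
    exact renewalCount_eq_iff (fun i => L i ω) ht hn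
  -- measurability of rc
  have hAmeas : ∀ n : ℕ, MeasurableSet {ω | T n ω ≤ t ∧ ∀ m, n < m → t < T m ω} := by
    intro n
    have : {ω | T n ω ≤ t ∧ ∀ m, n < m → t < T m ω}
        = {ω | T n ω ≤ t} ∩ ⋂ m, {ω | n < m → t < T m ω} := by
      ext ω; simp [Set.mem_iInter]
    rw [this]
    refine (measurableSet_le (hTmeas n) measurable_const).inter
      (MeasurableSet.iInter fun m => ?_)
    by_cases h : n < m
    · simp only [h, true_implies]
      exact measurableSet_lt measurable_const (hTmeas m)
    · simp only [h, false_implies]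
      exact MeasurableSet.univ
  have hrc_pre : ∀ n : ℕ, n ≠ 0 →
      rc ⁻¹' {n} = {ω | T n ω ≤ t ∧ ∀ m, n < m → t < T m ω} := by
    intro n hn
    ext ω
    simpa using hrc_iff ω n hn
  have hrcmeas : Measurable rc := by
    apply measurable_to_countable'
    intro n
    match n with
    | Nat.succ m =>
      rw [hrc_pre (m + 1) (Nat.succ_ne_zero m)]
      exact hAmeas (m + 1)
    | 0 =>
      have : rc ⁻¹' {0} = (⋃ m, rc ⁻¹' {m + 1})ᶜ := by
        ext ω
        simp only [Set.mem_preimage, Set.mem_singleton_iff, Set.mem_compl_iff, Set.mem_iUnion,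
          not_exists]
        constructor
        · intro h m hm
          omega
        · intro h
          by_contra hc
          exact h (rc ω - 1) (by omega)
      rw [this]
      exact (MeasurableSet.iUnion fun m => by
        rw [hrc_pre (m + 1) (Nat.succ_ne_zero m)]; exact hAmeas (m + 1)).compl
  -- the two random variables
  set ht1 : Ω → ℝ := fun ω => Ft (rc ω) ω with hht1
  set ht2 : Ω → ℝ := fun ω => F (rc ω) ω with hht2
  have hm1 : Measurable ht1 := measurable_glue hFtmeas hrcmeas
  have hm2 : Measurable ht2 := measurable_glue hFmeas hrcmeas
  -- law of one triple
  set m0 : Measure E := Measure.map (X 0) μ with hm0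
  haveI : IsProbabilityMeasure m0 := Measure.isProbabilityMeasure_map (hmeas 0).aemeasurable
  have hlaw : ∀ k, Measure.map (X k) μ = m0 := fun k => (hident k).map_eq
  -- the key per-n measure equality
  have key : ∀ (s : Set ℝ), MeasurableSet s → ∀ n : ℕ,
      μ (ht1 ⁻¹' s ∩ rc ⁻¹' {n + 1}) = μ (ht2 ⁻¹' s ∩ rc ⁻¹' {n + 1}) := by
    intro s hs n
    set ν : ℕ := n + 1 with hν
    set N : ℕ := ν + 1 with hN
    -- tuple of the first N triples
    set Y : Ω → (Fin N → E) := fun ω i => X i ω with hY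
    have hYmeas : Measurable Y := measurable_pi_lambda _ fun i => hmeas i
    -- law of the tuple is the product measure
    have hmap : Measure.map Y μ = Measure.pi (fun _ : Fin N => m0) := by
      refine (Measure.pi_eq fun u hu => ?_).symm
      rw [Measure.map_apply hYmeas (MeasurableSet.univ_pi hu)]
      set u' : ℕ → Set E := fun k => if h : k < N then u ⟨k, h⟩ else Set.univ with hu'
      have hu'meas : ∀ k, MeasurableSet (u' k) := by
        intro k
        rw [hu']
        dsimp only
        split
        · exact hu _
        · exact MeasurableSet.univ
      have hpre : Y ⁻¹' Set.univ.pi u = ⋂ k ∈ Finset.range N, X k ⁻¹' u' k := by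
        ext ω
        simp only [Set.mem_preimage, Set.mem_pi, Set.mem_univ, true_implies, Set.mem_iInter,
          Finset.mem_range, hY, hu']
        constructor
        · intro h k hk
          simp only [hk, dif_pos]
          exact h ⟨k, hk⟩
        · intro h i
          have := h i.1 i.2
          simpa [i.2] using this
      rw [hpre, hindep.meas_biInter (fun k _ => ⟨u' k, hu'meas k, rfl⟩)]
      rw [← Fin.prod_univ_eq_prod_range (fun k => μ ((fun ω => X k ω) ⁻¹' u' k)) N]
      refine Finset.prod_congr rfl fun i _ => ?_
      have h1 : u' (i : ℕ) = u i := by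
        rw [hu']
        simp [i.2]
      rw [h1, ← hlaw (i : ℕ), Measure.map_apply (hmeas i) (hu i)]
    -- the reversal permutation on Fin N (fixes the last index, reverses the first ν)
    set ρ : ℕ → ℕ := fun k => if k < ν then ν - 1 - k else k with hρ
    have hρlt : ∀ k, k < N → ρ k < N := by
      intro k hk
      rw [hρ]; dsimp only; split <;> omega
    have hρρ : ∀ k, k < N → ρ (ρ k) = k := by
      intro k hk
      rw [hρ]; dsimp only; split_ifs <;> omega
    set σf : Fin N → Fin N := fun i => ⟨ρ i.1, hρlt i.1 i.2⟩ with hσf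
    have hσinv : Function.Involutive σf := by
      intro i
      rw [hσf]
      ext
      exact hρρ i.1 i.2
    set σ : Equiv.Perm (Fin N) := hσinv.toPerm σf with hσ
    have hσapp : ∀ i, σ i = σf i := fun i => rfl
    -- measure preservation of precomposition with σ
    have hsig : MeasurePreserving (fun y : Fin N → E => y ∘ σ)
        (Measure.pi fun _ : Fin N => m0) (Measure.pi fun _ : Fin N => m0) := by
      have h := measurePreserving_piCongrLeft (fun _ : Fin N => m0) σ
      have hco : (fun y : Fin N → E => y ∘ σ)
          = ⇑(MeasurableEquiv.piCongrLeft (fun _ : Fin N => E) σ) := by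
        funext y
        funext j
        have h2 := MeasurableEquiv.piCongrLeft_apply_apply σ (β := fun _ : Fin N => E) y (σ j)
        have h3 : σ (σ j) = j := hσinv j
        rw [h3] at h2
        exact h2.symm
      refine ⟨by rw [hco]; exact (MeasurableEquiv.piCongrLeft (fun _ : Fin N => E) σ).measurable,
        ?_⟩
      rw [hco]
      exact h.map_eq
    -- coordinates of tuples, extended to ℕ
    set ext' : (Fin N → E) → ℕ → E := fun y k => if h : k < N then y ⟨k, h⟩ else y ⟨0, by omega⟩
      with hext'
    have hextmeas : ∀ k, Measurable fun y : Fin N → E => ext' y k := by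
      intro k
      rw [hext']
      dsimp only
      split
      · exact measurable_pi_apply _
      · exact measurable_pi_apply _
    -- functionals on tuples
    set gt' : (Fin N → E) → ℝ := fun y =>
      ∑ k ∈ Finset.range ν, (∏ i ∈ Finset.Ico (k + 1) ν, (ext' y i).1) ^ 2 * (ext' y k).2.1
      with hgt'
    set g' : (Fin N → E) → ℝ := fun y =>
      ∑ k ∈ Finset.range ν, (∏ i ∈ Finset.range k, (ext' y i).1) ^ 2 * (ext' y k).2.1 with hg'
    set τa : (Fin N → E) → ℝ := fun y => ∑ k ∈ Finset.range ν, (ext' y k).2.2 with hτa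
    set τb : (Fin N → E) → ℝ := fun y => ∑ k ∈ Finset.range N, (ext' y k).2.2 with hτb
    have hgt'meas : Measurable gt' :=
      Finset.measurable_sum _ fun k _ =>
        ((Finset.measurable_prod _ fun i _ => (hextmeas i).fst).pow_const 2).mul
          ((hextmeas k).snd.fst)
    have hg'meas : Measurable g' :=
      Finset.measurable_sum _ fun k _ =>
        ((Finset.measurable_prod _ fun i _ => (hextmeas i).fst).pow_const 2).mul
          ((hextmeas k).snd.fst)
    have hτameas : Measurable τa :=
      Finset.measurable_sum _ fun k _ => (hextmeas k).snd.snd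
    have hτbmeas : Measurable τb :=
      Finset.measurable_sum _ fun k _ => (hextmeas k).snd.snd
    -- composition with σ
    have hcomp : ∀ (y : Fin N → E) (k : ℕ), k < N → ext' (y ∘ σ) k = ext' y (ρ k) := by
      intro y k hk
      rw [hext']
      dsimp only
      rw [dif_pos hk, dif_pos (hρlt k hk)]
      rfl
    have hρsmall : ∀ k, k < ν → ρ k = ν - 1 - k := by
      intro k hk; rw [hρ]; simp [hk]
    have hρν : ρ ν = ν := by rw [hρ]; simp
    -- reflection identities
    have hgtσ : ∀ y : Fin N → E, gt' (y ∘ σ) = g' y := by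
      intro y
      rw [hgt', hg']
      dsimp only
      rw [← reflect_sum (fun i => (ext' y i).1) (fun k => (ext' y k).2.1) ν]
      refine Finset.sum_congr rfl fun k hk => ?_
      rw [Finset.mem_range] at hk
      congr 1
      · congr 1
        refine Finset.prod_congr rfl fun i hi => ?_
        rw [Finset.mem_Ico] at hi
        rw [hcomp y i (by omega), hρsmall i hi.2]
      · rw [hcomp y k (by omega), hρsmall k hk]
    have hτaσ : ∀ y : Fin N → E, τa (y ∘ σ) = τa y := by
      intro y
      rw [hτa]
      dsimp only
      rw [← Finset.sum_range_reflect (fun k => (ext' y k).2.2) ν]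
      refine Finset.sum_congr rfl fun k hk => ?_
      rw [Finset.mem_range] at hk
      rw [hcomp y k (by omega), hρsmall k hk]
    have hτbσ : ∀ y : Fin N → E, τb (y ∘ σ) = τb y := by
      intro y
      have hNsum : ∀ f : ℕ → ℝ,
          ∑ k ∈ Finset.range N, f k = (∑ k ∈ Finset.range ν, f k) + f ν :=
        fun f => Finset.sum_range_succ f ν
      rw [hτb]
      dsimp only
      rw [hNsum fun k => (ext' (y ∘ ⇑σ) k).2.2, hNsum fun k => (ext' y k).2.2]
      congr 1
      · exact hτaσ y
      · rw [hcomp y ν (by omega), hρν]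
    -- relating tuple functionals to the process
    have hextY : ∀ (ω : Ω) (k : ℕ), k < N → ext' (Y ω) k = X k ω := by
      intro ω k hk
      rw [hext']
      dsimp only
      rw [dif_pos hk]
    have hgtY : ∀ ω, gt' (Y ω) = Ft ν ω := by
      intro ω
      rw [hgt', hFt]
      dsimp only
      refine Finset.sum_congr rfl fun k hk => ?_
      rw [Finset.mem_range] at hk
      congr 1
      · congr 1
        refine Finset.prod_congr rfl fun i hi => ?_
        rw [Finset.mem_Ico] at hi
        rw [hextY ω i (by omega)]
      · rw [hextY ω k (by omega)]
    have hgY : ∀ ω, g' (Y ω) = F ν ω := by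
      intro ω
      rw [hg', hF]
      dsimp only
      refine Finset.sum_congr rfl fun k hk => ?_
      rw [Finset.mem_range] at hk
      congr 1
      · congr 1
        refine Finset.prod_congr rfl fun i hi => ?_
        rw [Finset.mem_range] at hi
        rw [hextY ω i (by omega)]
      · rw [hextY ω k (by omega)]
    have hτaY : ∀ ω, τa (Y ω) = T ν ω := by
      intro ω
      rw [hτa, hT]
      dsimp only
      refine Finset.sum_congr rfl fun k hk => ?_
      rw [Finset.mem_range] at hk
      rw [hextY ω k (by omega)]
    have hτbY : ∀ ω, τb (Y ω) = T N ω := by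
      intro ω
      rw [hτb, hT]
      dsimp only
      refine Finset.sum_congr rfl fun k hk => ?_
      rw [Finset.mem_range] at hk
      rw [hextY ω k (by omega)]
    -- the target sets on tuple space
    set Bt : Set (Fin N → E) := {y | τa y ≤ t ∧ t < τb y ∧ gt' y ∈ s} with hBt
    set B : Set (Fin N → E) := {y | τa y ≤ t ∧ t < τb y ∧ g' y ∈ s} with hB
    have hBtmeas : MeasurableSet Bt := by
      refine MeasurableSet.inter (measurableSet_le hτameas measurable_const) ?_
      exact MeasurableSet.inter (measurableSet_lt measurable_const hτbmeas) (hgt'meas hs)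
    have hBmeas : MeasurableSet B := by
      refine MeasurableSet.inter (measurableSet_le hτameas measurable_const) ?_
      exact MeasurableSet.inter (measurableSet_lt measurable_const hτbmeas) (hg'meas hs)
    have hBσ : (fun y : Fin N → E => y ∘ σ) ⁻¹' Bt = B := by
      ext y
      simp only [Set.mem_preimage, hBt, hB, Set.mem_setOf_eq, hτaσ, hτbσ, hgtσ]
    -- equal measures on tuple space
    have hpiBB : Measure.pi (fun _ : Fin N => m0) Bt = Measure.pi (fun _ : Fin N => m0) B := by
      conv_lhs => rw [← hsig.map_eq]
      rw [Measure.map_apply hsig.measurable hBtmeas, hBσ]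
    -- monotonicity of T on G
    have hTmono : ∀ ω ∈ G, ∀ a b : ℕ, a ≤ b → T a ω ≤ T b ω := by
      intro ω hω a b hab
      rw [hT]
      dsimp only
      refine Finset.sum_le_sum_of_subset_of_nonneg (Finset.range_subset_range.2 hab) ?_
      intro k _ _
      have : 0 < L k ω := Set.mem_iInter.1 hω k
      linarith
    -- identification of the events up to G
    have hset1 : ht1 ⁻¹' s ∩ rc ⁻¹' {ν} ∩ G = Y ⁻¹' Bt ∩ G := by
      ext ω
      simp only [Set.mem_inter_iff, Set.mem_preimage, Set.mem_singleton_iff, hBt,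
        Set.mem_setOf_eq]
      constructor
      · rintro ⟨⟨h1, h2⟩, hG'⟩
        have hch := (hrc_iff ω ν (by omega)).1 h2
        refine ⟨⟨?_, ?_, ?_⟩, hG'⟩
        · rw [hτaY]; exact hch.1
        · rw [hτbY]; exact hch.2 N (by omega)
        · rw [hgtY]
          rw [hht1] at h1
          simp only at h1
          rwa [h2] at h1
      · rintro ⟨⟨h1, h2, h3⟩, hG'⟩
        rw [hτaY] at h1
        rw [hτbY] at h2
        have hrcν : rc ω = ν := by
          refine (hrc_iff ω ν (by omega)).2 ⟨h1, fun m hm => lt_of_lt_of_le h2 ?_⟩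
          exact hTmono ω hG' N m (by omega)
        refine ⟨⟨?_, hrcν⟩, hG'⟩
        rw [hht1]
        simp only
        rw [hrcν, ← hgtY]
        exact h3
    have hset2 : ht2 ⁻¹' s ∩ rc ⁻¹' {ν} ∩ G = Y ⁻¹' B ∩ G := by
      ext ω
      simp only [Set.mem_inter_iff, Set.mem_preimage, Set.mem_singleton_iff, hB,
        Set.mem_setOf_eq]
      constructor
      · rintro ⟨⟨h1, h2⟩, hG'⟩
        have hch := (hrc_iff ω ν (by omega)).1 h2
        refine ⟨⟨?_, ?_, ?_⟩, hG'⟩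
        · rw [hτaY]; exact hch.1
        · rw [hτbY]; exact hch.2 N (by omega)
        · rw [hgY]
          rw [hht2] at h1
          simp only at h1
          rwa [h2] at h1
      · rintro ⟨⟨h1, h2, h3⟩, hG'⟩
        rw [hτaY] at h1
        rw [hτbY] at h2
        have hrcν : rc ω = ν := by
          refine (hrc_iff ω ν (by omega)).2 ⟨h1, fun m hm => lt_of_lt_of_le h2 ?_⟩
          exact hTmono ω hG' N m (by omega)
        refine ⟨⟨?_, hrcν⟩, hG'⟩
        rw [hht2]
        simp only
        rw [hrcν, ← hgY]
        exact h3
    -- put everything together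
    calc μ (ht1 ⁻¹' s ∩ rc ⁻¹' {ν})
        = μ (ht1 ⁻¹' s ∩ rc ⁻¹' {ν} ∩ G) := (measure_inter_conull hGc).symm
      _ = μ (Y ⁻¹' Bt ∩ G) := by rw [hset1]
      _ = μ (Y ⁻¹' Bt) := measure_inter_conull hGc
      _ = Measure.pi (fun _ : Fin N => m0) Bt := by
            rw [← hmap, Measure.map_apply hYmeas hBtmeas]
      _ = Measure.pi (fun _ : Fin N => m0) B := hpiBB
      _ = μ (Y ⁻¹' B) := by rw [← hmap, Measure.map_apply hYmeas hBmeas]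
      _ = μ (Y ⁻¹' B ∩ G) := (measure_inter_conull hGc).symm
      _ = μ (ht2 ⁻¹' s ∩ rc ⁻¹' {ν} ∩ G) := by rw [hset2]
      _ = μ (ht2 ⁻¹' s ∩ rc ⁻¹' {ν}) := measure_inter_conull hGc
  -- assemble: decompose over the value of rc
  refine ⟨hm1.aemeasurable, hm2.aemeasurable, ?_⟩
  refine Measure.ext fun s hs => ?_
  rw [Measure.map_apply hm1 hs, Measure.map_apply hm2 hs]
  have hpart : ∀ (f : Ω → ℝ), Measurable f →
      μ (f ⁻¹' s) = ∑' n : ℕ, μ (f ⁻¹' s ∩ rc ⁻¹' {n}) := by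
    intro f hf
    have hU : f ⁻¹' s = ⋃ n : ℕ, f ⁻¹' s ∩ rc ⁻¹' {n} := by
      ext ω
      simp only [Set.mem_iUnion, Set.mem_inter_iff, Set.mem_preimage, Set.mem_singleton_iff]
      exact ⟨fun h => ⟨rc ω, h, rfl⟩, fun ⟨n, h, _⟩ => h⟩
    conv_lhs => rw [hU]
    refine measure_iUnion ?_ fun n => (hf hs).inter (hrcmeas (measurableSet_singleton n))
    intro a b hab
    refine Set.disjoint_left.2 fun ω hωa hωb => hab ?_
    rw [← hωa.2, ← hωb.2]
  rw [hpart ht1 hm1, hpart ht2 hm2]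
  refine tsum_congr fun n => ?_
  match n with
  | 0 =>
    have : ht1 ⁻¹' s ∩ rc ⁻¹' {0} = ht2 ⁻¹' s ∩ rc ⁻¹' {0} := by
      ext ω
      simp only [Set.mem_inter_iff, Set.mem_preimage, Set.mem_singleton_iff]
      constructor
      · rintro ⟨h1, h2⟩
        refine ⟨?_, h2⟩
        rw [hht2]
        simp only
        rw [h2, hF]
        rw [hht1] at h1
        simp only at h1
        rw [h2, hFt] at h1
        simpa using h1
      · rintro ⟨h1, h2⟩
        refine ⟨?_, h2⟩
        rw [hht1]
        simp only
        rw [h2, hFt]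
        rw [hht2] at h1
        simp only at h1
        rw [h2, hF] at h1
        simpa using h1
    rw [this]
  | Nat.succ m => exact key s hs m
end

section
/- Let ((J_k, K_k))_{k≥1} be an i.i.d. sequence of pairs of real random variables with J_k > 0 almost surely, K_k ≥ 0 almost surely, E[log J₁] < 0 and E[log⁺ K₁] < ∞. Then the series S_∞ := Σ_{k=1}^{∞} (∏_{i=1}^{k-1} J_i²) K_k converges almost surely to a finite random variable; moreover, writing S'_∞ := Σ_{k=1}^{∞} (∏_{i=1}^{k-1} J_{i+1}²) K_{k+1}, one has S_∞ = K₁ + J₁² S'_∞ almost surely, S'_∞ has the same distribution as S_∞, and S'_∞ is independent of (J₁, K₁); in particular the law of S_∞ solves the distributional fixed-point equation Z =d A Z + B with (A, B) := (J₁², K₁) and Z independent of (A, B). -/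
open MeasureTheory ProbabilityTheory Filter Topology



lemma my_measurableSet_summable {α : Type*} {m : MeasurableSpace α} {f : ℕ → α → ℝ}
    (hf : ∀ n, Measurable (f n)) :
    MeasurableSet {x | Summable fun n => f n x} := by
  have hiff : ∀ x, (Summable fun n => f n x) ↔
      ∀ k : ℕ, ∃ s : Finset ℕ, ∀ t : Finset ℕ, Disjoint t s →
        |∑ i ∈ t, f i x| < ((k : ℝ) + 1)⁻¹ := by
    intro x
    rw [summable_iff_vanishing]
    constructor
    · intro h k
      obtain ⟨s, hs⟩ := h (Metric.ball 0 ((k : ℝ) + 1)⁻¹)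
        (Metric.ball_mem_nhds _ (by positivity))
      exact ⟨s, fun t ht => by simpa [Real.dist_eq] using hs t ht⟩
    · intro h e he
      obtain ⟨ε, εpos, hε⟩ := Metric.mem_nhds_iff.1 he
      obtain ⟨k, hk⟩ := exists_nat_one_div_lt εpos
      obtain ⟨s, hs⟩ := h k
      refine ⟨s, fun t ht => hε ?_⟩
      have := hs t ht
      rw [Metric.mem_ball, Real.dist_eq, sub_zero]
      calc |∑ i ∈ t, f i x| < ((k : ℝ) + 1)⁻¹ := this
        _ < ε := by rwa [one_div] at hk
  have : {x | Summable fun n => f n x} =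
      ⋂ k : ℕ, ⋃ s : Finset ℕ, ⋂ t : Finset ℕ,
        {x | Disjoint t s → |∑ i ∈ t, f i x| < ((k : ℝ) + 1)⁻¹} := by
    ext x
    simp only [Set.mem_setOf_eq, Set.mem_iInter, Set.mem_iUnion, hiff]
  rw [this]
  refine MeasurableSet.iInter fun k => MeasurableSet.iUnion fun s =>
    MeasurableSet.iInter fun t => ?_
  by_cases h : Disjoint t s
  · simp only [h, forall_true_left]
    exact measurableSet_lt ((Finset.measurable_sum t fun i _ => hf i).abs) measurable_const
  · simp [h]

lemma my_measurable_tsum {α : Type*} {m : MeasurableSpace α} {f : ℕ → α → ℝ}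
    (hf : ∀ n, Measurable (f n)) :
    Measurable fun x => ∑' n, f n x := by
  classical
  set S := {x | Summable fun n => f n x} with hS_def
  have hS : MeasurableSet S := my_measurableSet_summable hf
  set f' : ℕ → α → ℝ := fun n => S.indicator (f n) with hf'_def
  have hf' : ∀ n, Measurable (f' n) := fun n => (hf n).indicator hS
  have hsum' : ∀ x, Summable fun n => f' n x := by
    intro x
    by_cases hx : x ∈ S
    · have : (fun n => f' n x) = fun n => f n x := by
        funext n; simp [f', Set.indicator_of_mem hx]
      rw [this]; exact hx
    · have : (fun n => f' n x) = fun _ => 0 := by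
        funext n; simp [f', Set.indicator_of_notMem hx]
      rw [this]; exact summable_zero
  have heq : (fun x => ∑' n, f n x) = fun x => ∑' n, f' n x := by
    funext x
    by_cases hx : x ∈ S
    · exact tsum_congr fun n => by simp [f', Set.indicator_of_mem hx]
    · rw [tsum_eq_zero_of_not_summable hx]
      have : (fun n => f' n x) = fun _ => 0 := by
        funext n; simp [f', Set.indicator_of_notMem hx]
      rw [this, tsum_zero]
  rw [heq]
  apply measurable_of_tendsto_metrizable
    (f := fun n x => ∑ i ∈ Finset.range n, f' i x)
    (fun n => Finset.measurable_sum _ fun i _ => hf' i)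
  rw [tendsto_pi_nhds]
  exact fun x => (hsum' x).hasSum.tendsto_sum_nat


lemma my_map_restrict_eq_pi {Ω α : Type*} [MeasurableSpace Ω] [MeasurableSpace α]
    (μ : Measure Ω) [IsProbabilityMeasure μ] (X : ℕ → Ω → α)
    (hX : ∀ k, Measurable (X k))
    (hXi : iIndepFun X μ) (s : Finset ℕ) :
    Measure.map (fun ω (i : s) => X i ω) μ = Measure.pi (fun i : s => Measure.map (X i) μ) := by
  classical
  haveI : ∀ i : s, IsProbabilityMeasure (Measure.map (X (i : ℕ)) μ) :=
    fun i => Measure.isProbabilityMeasure_map (hX i).aemeasurable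
  have hmeas : Measurable (fun ω (i : s) => X i ω) :=
    measurable_pi_lambda _ fun i => hX i
  refine (Measure.pi_eq fun sets hsets => ?_).symm
  rw [Measure.map_apply hmeas (MeasurableSet.univ_pi hsets)]
  set sets' : ℕ → Set α := fun j => if h : j ∈ s then sets ⟨j, h⟩ else Set.univ with hsets'
  have hpre : (fun ω (i : s) => X i ω) ⁻¹' (Set.univ.pi sets)
      = ⋂ j ∈ s, X j ⁻¹' sets' j := by
    ext ω
    simp only [Set.mem_preimage, Set.mem_univ_pi, Set.mem_iInter, sets']
    constructor
    · intro h j hj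
      simp only [dif_pos hj]
      exact h ⟨j, hj⟩
    · intro h i
      have := h i i.2
      simpa only [dif_pos i.2] using this
  rw [hpre, hXi.measure_inter_preimage_eq_mul s
    (fun j hj => by simp only [sets', dif_pos hj]; exact hsets ⟨j, hj⟩)]
  rw [← Finset.prod_coe_sort s (fun j => μ (X j ⁻¹' sets' j))]
  refine Finset.prod_congr rfl fun i _ => ?_
  rw [Measure.map_apply (hX i) (hsets i)]
  congr 1
  simp only [sets', dif_pos i.2]

lemma my_map_process_eq {Ω α : Type*} [MeasurableSpace Ω] [MeasurableSpace α]
    (μ : Measure Ω) [IsProbabilityMeasure μ] (X Y : ℕ → Ω → α)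
    (hX : ∀ k, Measurable (X k)) (hY : ∀ k, Measurable (Y k))
    (hXi : iIndepFun X μ)
    (hYi : iIndepFun Y μ)
    (hid : ∀ k, Measure.map (X k) μ = Measure.map (Y k) μ) :
    Measure.map (fun ω k => X k ω) μ = Measure.map (fun ω k => Y k ω) μ := by
  have hΦX : Measurable (fun ω k => X k ω) := measurable_pi_lambda _ hX
  have hΦY : Measurable (fun ω k => Y k ω) := measurable_pi_lambda _ hY
  haveI : IsProbabilityMeasure (Measure.map (fun ω k => X k ω) μ) :=
    Measure.isProbabilityMeasure_map hΦX.aemeasurable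
  haveI : IsProbabilityMeasure (Measure.map (fun ω k => Y k ω) μ) :=
    Measure.isProbabilityMeasure_map hΦY.aemeasurable
  refine ext_of_generate_finite (measurableCylinders fun _ : ℕ => α)
    generateFrom_measurableCylinders.symm isPiSystem_measurableCylinders
    (fun t ht => ?_) (by simp)
  have hcylm : MeasurableSet t := MeasurableSet.of_mem_measurableCylinders ht
  obtain ⟨s, S, hS, rfl⟩ := (mem_measurableCylinders t).1 ht
  rw [Measure.map_apply hΦX hcylm, Measure.map_apply hΦY hcylm]
  have h1 : (fun ω k => X k ω) ⁻¹' cylinder s S = (fun ω (i : s) => X i ω) ⁻¹' S := rfl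
  have h2 : (fun ω k => Y k ω) ⁻¹' cylinder s S = (fun ω (i : s) => Y i ω) ⁻¹' S := rfl
  have h3 : μ ((fun ω (i : s) => X i ω) ⁻¹' S) = Measure.map (fun ω (i : s) => X i ω) μ S :=
    (Measure.map_apply (f := fun ω (i : s) => X i ω) (measurable_pi_lambda _ fun i => hX i) hS).symm
  have h4 : μ ((fun ω (i : s) => Y i ω) ⁻¹' S) = Measure.map (fun ω (i : s) => Y i ω) μ S :=
    (Measure.map_apply (f := fun ω (i : s) => Y i ω) (measurable_pi_lambda _ fun i => hY i) hS).symm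
  rw [h1, h2, h3, h4,
    my_map_restrict_eq_pi μ X hX hXi s, my_map_restrict_eq_pi μ Y hY hYi s,
    show (fun i : s => Measure.map (X (i : ℕ)) μ) = (fun i : s => Measure.map (Y (i : ℕ)) μ)
      from funext fun i => hid i]


lemma my_iIndepFun_shift {Ω α : Type*} [MeasurableSpace Ω] [MeasurableSpace α]
    {μ : Measure Ω} {X : ℕ → Ω → α}
    (h : iIndepFun X μ) :
    iIndepFun (fun k => X (k + 1)) μ := by
  classical
  rw [iIndepFun_iff_measure_inter_preimage_eq_mul]
  intro S sets hsets
  have hkey := h.measure_inter_preimage_eq_mul (S.image (· + 1))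
    (sets := fun j => sets (j - 1))
    (fun j hj => by
      obtain ⟨i, hi, rfl⟩ := Finset.mem_image.1 hj
      simpa using hsets i hi)
  have hIn : (⋂ j ∈ S.image (· + 1), X j ⁻¹' sets (j - 1))
      = ⋂ i ∈ S, X (i + 1) ⁻¹' sets i := by
    ext ω
    simp only [Set.mem_iInter, Finset.mem_image]
    constructor
    · intro hh i hi
      have := hh (i + 1) ⟨i, hi, rfl⟩
      simpa using this
    · rintro hh j ⟨i, hi, rfl⟩
      simpa using hh i hi
  have hProd : (∏ j ∈ S.image (· + 1), μ (X j ⁻¹' sets (j - 1)))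
      = ∏ i ∈ S, μ (X (i + 1) ⁻¹' sets i) := by
    rw [Finset.prod_image (fun x _ y _ hxy => by omega)]
    simp
  rw [hIn, hProd] at hkey
  exact hkey

/-- Let `((J_k, K_k))_{k≥1}` be i.i.d. pairs of real random variables
with `J_k > 0` a.s., `K_k ≥ 0` a.s., `E[log J₁] < 0` and `E[log⁺ K₁] < ∞`.  Then the
series `S_∞ = Σ_{k=1}^∞ (∏_{i=1}^{k-1} J_i²) K_k` converges a.s. (to a finite random
variable); writing `S'_∞ = Σ_{k=1}^∞ (∏_{i=1}^{k-1} J_{i+1}²) K_{k+1}`, one has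
`S_∞ = K₁ + J₁² S'_∞` a.s., `S'_∞` has the same distribution as `S_∞`, `S'_∞` is
independent of `(J₁, K₁)`; in particular the law of `S_∞` solves the fixed-point
equation `Z =d A Z + B` with `(A, B) = (J₁², K₁)` and `Z ⫫ (A, B)`.
(Lean index `k` corresponds to the paper index `k + 1`.) -/
theorem stmt4 {Ω : Type*} [MeasurableSpace Ω] (μ : Measure Ω) [IsProbabilityMeasure μ]
    (J K : ℕ → Ω → ℝ)
    (hmeas : ∀ k, Measurable fun ω => (J k ω, K k ω))
    (hindep : iIndepFun (fun k ω => (J k ω, K k ω)) μ)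
    (hident : ∀ k, IdentDistrib (fun ω => (J k ω, K k ω)) (fun ω => (J 0 ω, K 0 ω)) μ μ)
    (hJpos : ∀ k, ∀ᵐ ω ∂μ, 0 < J k ω)
    (hKnonneg : ∀ k, ∀ᵐ ω ∂μ, 0 ≤ K k ω)
    (hlogJint : Integrable (fun ω => Real.log (J 0 ω)) μ)
    (hlogJneg : ∫ ω, Real.log (J 0 ω) ∂μ < 0)
    (hlogKint : Integrable (fun ω => Real.log (max (K 0 ω) 1)) μ) :
    (∀ᵐ ω ∂μ, Summable fun k => (∏ i ∈ Finset.range k, (J i ω) ^ 2) * K k ω) ∧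
    (∀ᵐ ω ∂μ, (∑' k, (∏ i ∈ Finset.range k, (J i ω) ^ 2) * K k ω)
        = K 0 ω + (J 0 ω) ^ 2
            * ∑' k, (∏ i ∈ Finset.range k, (J (i + 1) ω) ^ 2) * K (k + 1) ω) ∧
    IdentDistrib
      (fun ω => ∑' k, (∏ i ∈ Finset.range k, (J (i + 1) ω) ^ 2) * K (k + 1) ω)
      (fun ω => ∑' k, (∏ i ∈ Finset.range k, (J i ω) ^ 2) * K k ω) μ μ ∧
    IndepFun
      (fun ω => ∑' k, (∏ i ∈ Finset.range k, (J (i + 1) ω) ^ 2) * K (k + 1) ω)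
      (fun ω => (J 0 ω, K 0 ω)) μ ∧
    IdentDistrib
      (fun ω => ∑' k, (∏ i ∈ Finset.range k, (J i ω) ^ 2) * K k ω)
      (fun ω => (J 0 ω) ^ 2
          * (∑' k, (∏ i ∈ Finset.range k, (J (i + 1) ω) ^ 2) * K (k + 1) ω) + K 0 ω)
      μ μ := by
  classical
  -- ### Part 1: almost sure summability
  have hsummable : ∀ᵐ ω ∂μ, Summable fun k => (∏ i ∈ Finset.range k, (J i ω) ^ 2) * K k ω := by
    set a : ℝ := ∫ ω, Real.log (J 0 ω) ∂μ with ha_def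
    have hlog1 : Measurable fun p : ℝ × ℝ => Real.log p.1 :=
      Real.measurable_log.comp measurable_fst
    have hlog2 : Measurable fun p : ℝ × ℝ => Real.log (max p.2 1) :=
      Real.measurable_log.comp (measurable_snd.max measurable_const)
    have hL : ∀ᵐ ω ∂μ, Tendsto (fun n : ℕ =>
        (∑ i ∈ Finset.range n, Real.log (J i ω)) / n) atTop (𝓝 a) := by
      have := strong_law_ae_real (fun k ω => Real.log (J k ω)) hlogJint
        (fun i j hij => (hindep.indepFun hij).comp hlog1 hlog1)
        (fun i => (hident i).comp hlog1)
      exact this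
    have hM : ∀ᵐ ω ∂μ, Tendsto (fun n : ℕ =>
        (∑ i ∈ Finset.range n, Real.log (max (K i ω) 1)) / n) atTop
        (𝓝 (∫ ω, Real.log (max (K 0 ω) 1) ∂μ)) := by
      have := strong_law_ae_real (fun k ω => Real.log (max (K k ω) 1)) hlogKint
        (fun i j hij => (hindep.indepFun hij).comp hlog2 hlog2)
        (fun i => (hident i).comp hlog2)
      exact this
    filter_upwards [hL, hM, ae_all_iff.2 hJpos, ae_all_iff.2 hKnonneg] with ω hLω hMω hJω hKω
    set b : ℝ := ∫ ω, Real.log (max (K 0 ω) 1) ∂μ with hb_def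
    set M : ℕ → ℝ := fun n => Real.log (max (K n ω) 1) with hM_def
    set sM : ℕ → ℝ := fun n => ∑ i ∈ Finset.range n, M i with hsM_def
    have hM0 : Tendsto (fun n : ℕ => M n / n) atTop (𝓝 0) := by
      have h1 : Tendsto (fun n : ℕ => sM n / n) atTop (𝓝 b) := hMω
      have hplus : Tendsto (fun n : ℕ => sM (n + 1) / ((n : ℝ) + 1)) atTop (𝓝 b) := by
        refine (h1.comp (tendsto_add_atTop_nat 1)).congr fun n => ?_
        simp [Function.comp]
      have hratio : Tendsto (fun n : ℕ => ((n : ℝ) + 1) / n) atTop (𝓝 1) := by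
        have : (fun n : ℕ => ((n : ℝ) + 1) / n) =ᶠ[atTop] fun n : ℕ => 1 + 1 / n := by
          filter_upwards [eventually_ge_atTop 1] with n hn
          have hn' : (n : ℝ) ≠ 0 := by positivity
          field_simp
        rw [tendsto_congr' this]
        have := tendsto_one_div_atTop_nhds_zero_nat (𝕜 := ℝ)
        simpa using tendsto_const_nhds.add this
      have h2 : Tendsto (fun n : ℕ => sM (n + 1) / n) atTop (𝓝 b) := by
        have := hplus.mul hratio
        rw [mul_one] at this
        refine this.congr fun n => ?_
        rcases Nat.eq_zero_or_pos n with rfl | hn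
        · simp
        · have hn' : (n : ℝ) ≠ 0 := by positivity
          have hn1 : ((n : ℝ) + 1) ≠ 0 := by positivity
          field_simp
      have h3 := h2.sub h1
      rw [sub_self] at h3
      refine h3.congr fun n => ?_
      have : sM (n + 1) - sM n = M n := by
        simp [sM, Finset.sum_range_succ]
      rw [div_sub_div_same, this]
    have hT : Tendsto (fun k : ℕ =>
        (2 * (∑ i ∈ Finset.range k, Real.log (J i ω)) + M k) / k) atTop (𝓝 (2 * a)) := by
      have := (hLω.const_mul 2).add hM0
      rw [add_zero] at this
      refine this.congr fun k => ?_
      rw [add_div, mul_div_assoc]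
    have hev : ∀ᶠ k : ℕ in atTop,
        (2 * (∑ i ∈ Finset.range k, Real.log (J i ω)) + M k) / k < a ∧ 1 ≤ k :=
      (hT.eventually_lt_const (by linarith)).and (eventually_ge_atTop 1)
    obtain ⟨N, hN⟩ := eventually_atTop.1 hev
    set r : ℝ := Real.exp a with hr_def
    have hr0 : 0 ≤ r := (Real.exp_pos a).le
    have hr1 : r < 1 := Real.exp_lt_one_iff.2 hlogJneg
    rw [← summable_nat_add_iff N]
    have hbound : ∀ k : ℕ,
        (∏ i ∈ Finset.range (k + N), (J i ω) ^ 2) * K (k + N) ω ≤ r ^ (k + N) := by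
      intro k
      obtain ⟨hlt, hk1⟩ := hN (k + N) (Nat.le_add_left N k)
      set n := k + N
      have hn0 : (0 : ℝ) < n := by exact_mod_cast hk1
      have hprod : (∏ i ∈ Finset.range n, (J i ω) ^ 2)
          = Real.exp (2 * ∑ i ∈ Finset.range n, Real.log (J i ω)) := by
        rw [Finset.mul_sum, Real.exp_sum]
        refine Finset.prod_congr rfl fun i _ => ?_
        rw [show (2 : ℝ) * Real.log (J i ω) = ((2 : ℕ) : ℝ) * Real.log (J i ω) by norm_num,
          Real.exp_nat_mul, Real.exp_log (hJω i)]
      have hKle : K n ω ≤ Real.exp (M n) := by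
        rw [hM_def, Real.exp_log (lt_of_lt_of_le one_pos (le_max_right _ _))]
        exact le_max_left _ _
      calc (∏ i ∈ Finset.range n, (J i ω) ^ 2) * K n ω
          ≤ (∏ i ∈ Finset.range n, (J i ω) ^ 2) * Real.exp (M n) := by
            refine mul_le_mul_of_nonneg_left hKle ?_
            exact Finset.prod_nonneg fun i _ => sq_nonneg _
        _ = Real.exp (2 * (∑ i ∈ Finset.range n, Real.log (J i ω)) + M n) := by
            rw [hprod, ← Real.exp_add]
        _ ≤ Real.exp ((n : ℝ) * a) := by
            apply Real.exp_le_exp.2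
            have := (div_lt_iff₀ hn0).1 hlt
            linarith [this]
        _ = r ^ n := Real.exp_nat_mul a n
    refine Summable.of_nonneg_of_le
      (fun k => mul_nonneg (Finset.prod_nonneg fun i _ => sq_nonneg _) (hKω (k + N)))
      (fun k => hbound k) ?_
    have : Summable fun k : ℕ => r ^ k * r ^ N :=
      (summable_geometric_of_lt_one hr0 hr1).mul_right _
    refine this.congr fun k => ?_
    rw [← pow_add]
  -- ### Measurability helpers
  have hterm_meas : ∀ k : ℕ,
      Measurable fun ω => (∏ i ∈ Finset.range k, (J i ω) ^ 2) * K k ω := fun k =>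
    (Finset.measurable_prod _ fun i _ => (hmeas i).fst.pow_const 2).mul (hmeas k).snd
  have hS_meas : Measurable fun ω => ∑' k, (∏ i ∈ Finset.range k, (J i ω) ^ 2) * K k ω :=
    my_measurable_tsum hterm_meas
  -- ### Part 2: the recursion
  have hrec : ∀ᵐ ω ∂μ, (∑' k, (∏ i ∈ Finset.range k, (J i ω) ^ 2) * K k ω)
      = K 0 ω + (J 0 ω) ^ 2
          * ∑' k, (∏ i ∈ Finset.range k, (J (i + 1) ω) ^ 2) * K (k + 1) ω := by
    filter_upwards [hsummable] with ω hs
    rw [Summable.tsum_eq_zero_add hs]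
    congr 1
    · simp
    · rw [← tsum_mul_left]
      refine tsum_congr fun k => ?_
      rw [Finset.prod_range_succ']
      ring
  -- ### Part 3: equality in distribution of the shifted sum
  have hΦ : Measurable fun ω (k : ℕ) => (J k ω, K k ω) := measurable_pi_lambda _ hmeas
  have hΦ' : Measurable fun ω (k : ℕ) => (J (k + 1) ω, K (k + 1) ω) :=
    measurable_pi_lambda _ fun k => hmeas (k + 1)
  have hG : Measurable fun x : ℕ → ℝ × ℝ =>
      ∑' k, (∏ i ∈ Finset.range k, (x i).1 ^ 2) * (x k).2 :=
    my_measurable_tsum fun k =>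
      (Finset.measurable_prod _ fun i _ =>
        (measurable_pi_apply i).fst.pow_const 2).mul (measurable_pi_apply k).snd
  have hmap : Measure.map (fun ω (k : ℕ) => (J (k + 1) ω, K (k + 1) ω)) μ
      = Measure.map (fun ω (k : ℕ) => (J k ω, K k ω)) μ :=
    my_map_process_eq μ _ _ (fun k => hmeas (k + 1)) hmeas
      (my_iIndepFun_shift hindep) hindep
      (fun k => ((hident (k + 1)).trans (hident k).symm).map_eq)
  have hid3 : IdentDistrib
      (fun ω => ∑' k, (∏ i ∈ Finset.range k, (J (i + 1) ω) ^ 2) * K (k + 1) ω)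
      (fun ω => ∑' k, (∏ i ∈ Finset.range k, (J i ω) ^ 2) * K k ω) μ μ := by
    refine ⟨(hG.comp hΦ').aemeasurable, (hG.comp hΦ).aemeasurable, ?_⟩
    have e1 : (fun ω => ∑' k, (∏ i ∈ Finset.range k, (J (i + 1) ω) ^ 2) * K (k + 1) ω)
        = (fun x : ℕ → ℝ × ℝ => ∑' k, (∏ i ∈ Finset.range k, (x i).1 ^ 2) * (x k).2)
          ∘ (fun ω (k : ℕ) => (J (k + 1) ω, K (k + 1) ω)) := rfl
    have e2 : (fun ω => ∑' k, (∏ i ∈ Finset.range k, (J i ω) ^ 2) * K k ω)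
        = (fun x : ℕ → ℝ × ℝ => ∑' k, (∏ i ∈ Finset.range k, (x i).1 ^ 2) * (x k).2)
          ∘ (fun ω (k : ℕ) => (J k ω, K k ω)) := rfl
    rw [e1, e2, ← Measure.map_map hG hΦ', ← Measure.map_map hG hΦ, hmap]
  -- ### Part 4: independence
  have hindep4 : IndepFun
      (fun ω => ∑' k, (∏ i ∈ Finset.range k, (J (i + 1) ω) ^ 2) * K (k + 1) ω)
      (fun ω => (J 0 ω, K 0 ω)) μ := by
    have h_le : ∀ n : ℕ,
        MeasurableSpace.comap (fun ω => (J n ω, K n ω)) Prod.instMeasurableSpace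
          ≤ ‹MeasurableSpace Ω› := fun n => (hmeas n).comap_le
    have hII := indep_biSup_compl h_le hindep.iIndep {0}
    set m' : MeasurableSpace Ω := ⨆ n ∈ ({0} : Set ℕ)ᶜ,
      MeasurableSpace.comap (fun ω => (J n ω, K n ω)) Prod.instMeasurableSpace with hm'_def
    have hX' : ∀ k : ℕ, Measurable[m'] fun ω => (J (k + 1) ω, K (k + 1) ω) := by
      intro k
      rw [measurable_iff_comap_le, hm'_def]
      exact le_iSup₂ (f := fun (n : ℕ) (_ : n ∈ ({0} : Set ℕ)ᶜ) =>
        MeasurableSpace.comap (fun ω => (J n ω, K n ω)) Prod.instMeasurableSpace)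
        (k + 1) (by simp)
    have hS'm' : Measurable[m'] fun ω =>
        ∑' k, (∏ i ∈ Finset.range k, (J (i + 1) ω) ^ 2) * K (k + 1) ω :=
      my_measurable_tsum fun k =>
        Measurable.mul (m := m')
          (Finset.measurable_prod _ fun i _ => (hX' i).fst.pow_const 2) (hX' k).snd
    have h1 : MeasurableSpace.comap
        (fun ω => ∑' k, (∏ i ∈ Finset.range k, (J (i + 1) ω) ^ 2) * K (k + 1) ω)
        Real.measurableSpace ≤ m' := measurable_iff_comap_le.1 hS'm'
    have h2 : MeasurableSpace.comap (fun ω => (J 0 ω, K 0 ω)) Prod.instMeasurableSpace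
        ≤ ⨆ n ∈ ({0} : Set ℕ), MeasurableSpace.comap (fun ω => (J n ω, K n ω))
            Prod.instMeasurableSpace :=
      le_iSup₂ (f := fun (n : ℕ) (_ : n ∈ ({0} : Set ℕ)) =>
        MeasurableSpace.comap (fun ω => (J n ω, K n ω)) Prod.instMeasurableSpace) 0 rfl
    exact indep_of_indep_of_le_right (indep_of_indep_of_le_left hII.symm h1) h2
  -- ### Part 5: the fixed-point identity in law
  have hid5 : IdentDistrib
      (fun ω => ∑' k, (∏ i ∈ Finset.range k, (J i ω) ^ 2) * K k ω)
      (fun ω => (J 0 ω) ^ 2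
          * (∑' k, (∏ i ∈ Finset.range k, (J (i + 1) ω) ^ 2) * K (k + 1) ω) + K 0 ω)
      μ μ := by
    refine IdentDistrib.of_ae_eq hS_meas.aemeasurable ?_
    filter_upwards [hrec] with ω h
    rw [h]
    ring
  exact ⟨hsummable, hrec, hid3, hindep4, hid5⟩
end

section
/- Let ((J_k, K_k, L_k))_{k≥1} be an i.i.d. sequence of triples of real random variables with J_k > 0 a.s., K_k ≥ 0 a.s., L_k > 0 a.s., E[L₁] < ∞, E[log J₁] < 0 and E[log⁺ K₁] < ∞. Define τ_0 = 0, τ_n = L_1 + ⋯ + L_n, g_t = sup{n ≥ 0 : τ_n ≤ t}, and S̃_n := Σ_{k=1}^{n} (∏_{i=k+1}^{n} J_i)² K_k. Then S̃_{g_t} converges in distribution, as t → ∞, to S_∞ := Σ_{k=1}^{∞} (∏_{i=1}^{k-1} J_i²) K_k (which converges almost surely to a finite limit). -/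
open MeasureTheory ProbabilityTheory Filter Topology

namespace Stmt5Aux

abbrev E : Type := ℝ × ℝ × ℝ

/-- `τ_m` as a function of the sequence of triples. -/
noncomputable def tauF (m : ℕ) (z : ℕ → E) : ℝ := ∑ k ∈ Finset.range m, (z k).2.2

/-- backward sum -/
noncomputable def StlF (n : ℕ) (z : ℕ → E) : ℝ :=
  ∑ k ∈ Finset.range n, (∏ i ∈ Finset.Ico (k + 1) n, (z i).1) ^ 2 * (z k).2.1

/-- forward sum -/
noncomputable def SfwF (n : ℕ) (z : ℕ → E) : ℝ :=
  ∑ k ∈ Finset.range n, (∏ i ∈ Finset.range k, (z i).1 ^ 2) * (z k).2.1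

/-- reversal of `{0, …, n-1}`, fixing everything else. -/
def rn (n k : ℕ) : ℕ := if k < n then n - 1 - k else k

lemma rn_rn (n k : ℕ) : rn n (rn n k) = k := by
  unfold rn; split_ifs <;> omega

lemma rn_lt {n k m : ℕ} (hnm : n ≤ m) (hk : k < m) : rn n k < m := by
  unfold rn; split_ifs <;> omega

lemma sum_rn (c : ℕ → ℝ) {n m : ℕ} (h : n ≤ m) :
    ∑ k ∈ Finset.range m, c (rn n k) = ∑ k ∈ Finset.range m, c k := by
  refine Finset.sum_nbij' (fun k => rn n k) (fun k => rn n k) ?_ ?_ ?_ ?_ ?_ <;>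
    simp only [Finset.mem_range]
  · exact fun a ha => rn_lt h ha
  · exact fun a ha => rn_lt h ha
  · exact fun a _ => rn_rn n a
  · exact fun a _ => rn_rn n a
  · intro a _; trivial

lemma tauF_rn (n m : ℕ) (h : n ≤ m) (z : ℕ → E) :
    tauF m (fun k => z (rn n k)) = tauF m z :=
  sum_rn (fun k => (z k).2.2) h

lemma StlF_rn (n : ℕ) (z : ℕ → E) :
    StlF n (fun k => z (rn n k)) = SfwF n z := by
  unfold StlF SfwF
  refine Finset.sum_nbij' (fun k => n - 1 - k) (fun k => n - 1 - k) ?_ ?_ ?_ ?_ ?_ <;>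
    simp only [Finset.mem_range]
  · intro a ha; omega
  · intro a ha; omega
  · intro a ha; omega
  · intro a ha; omega
  · intro a ha
    have h1 : rn n a = n - 1 - a := by unfold rn; rw [if_pos ha]
    have h2 : ∏ i ∈ Finset.Ico (a + 1) n, (z (rn n i)).1
        = ∏ i ∈ Finset.range (n - 1 - a), (z i).1 := by
      refine Finset.prod_nbij' (fun i => n - 1 - i) (fun i => n - 1 - i) ?_ ?_ ?_ ?_ ?_ <;>
        simp only [Finset.mem_range, Finset.mem_Ico]
      · intro i hi; omega
      · intro i hi; omega
      · intro i hi; omega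
      · intro i hi; omega
      · intro i hi
        have : rn n i = n - 1 - i := by unfold rn; rw [if_pos (by omega)]
        rw [this]
    rw [h1, h2, ← Finset.prod_pow]

/-! ### Renewal lemmas -/

lemma tau_mono {L : ℕ → ℝ} (hL : ∀ k, 0 < L k) :
    Monotone (fun m => ∑ k ∈ Finset.range m, L k) := fun a b hab =>
  Finset.sum_le_sum_of_subset_of_nonneg (Finset.range_subset_range.2 hab)
    (fun i _ _ => (hL i).le)

lemma renewal_bddAbove {L : ℕ → ℝ} {t : ℝ}
    (hT : Tendsto (fun m => ∑ k ∈ Finset.range m, L k) atTop atTop) :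
    BddAbove {n : ℕ | ∑ k ∈ Finset.range n, L k ≤ t} := by
  obtain ⟨N, hN⟩ := (tendsto_atTop.1 hT (t + 1)).exists_forall_of_atTop
  exact ⟨N, fun n hn => by
    by_contra hc
    exact absurd (hN n (by omega)) (by simp only [Set.mem_setOf_eq] at hn; linarith)⟩

lemma renewalCount_eq {L : ℕ → ℝ} {t : ℝ} {n : ℕ} (hL : ∀ k, 0 < L k)
    (h1 : ∑ k ∈ Finset.range n, L k ≤ t) (h2 : t < ∑ k ∈ Finset.range (n + 1), L k) :
    renewalCount L t = n := by
  have hset : {m : ℕ | ∑ k ∈ Finset.range m, L k ≤ t} = Set.Iic n := by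
    ext m
    simp only [Set.mem_setOf_eq, Set.mem_Iic]
    constructor
    · intro hm
      by_contra hc
      have : ∑ k ∈ Finset.range (n + 1), L k ≤ ∑ k ∈ Finset.range m, L k :=
        tau_mono hL (by omega)
      linarith
    · intro hm
      exact le_trans (tau_mono hL hm) h1
  rw [renewalCount, hset, csSup_Iic]

lemma renewalCount_spec {L : ℕ → ℝ} {t : ℝ} (hL : ∀ k, 0 < L k) (ht : 0 ≤ t)
    (hT : Tendsto (fun m => ∑ k ∈ Finset.range m, L k) atTop atTop) :
    ∑ k ∈ Finset.range (renewalCount L t), L k ≤ t ∧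
      t < ∑ k ∈ Finset.range (renewalCount L t + 1), L k := by
  have hne : {n : ℕ | ∑ k ∈ Finset.range n, L k ≤ t}.Nonempty :=
    ⟨0, by simp [ht]⟩
  have hb := renewal_bddAbove (L := L) (t := t) hT
  have hmem := Nat.sSup_mem hne hb
  refine ⟨hmem, ?_⟩
  by_contra hc
  push_neg at hc
  have : renewalCount L t + 1 ≤ renewalCount L t :=
    le_csSup hb (by simpa [Set.mem_setOf_eq] using hc)
  omega

lemma renewalCount_ge {L : ℕ → ℝ} {t : ℝ} {N : ℕ}
    (hT : Tendsto (fun m => ∑ k ∈ Finset.range m, L k) atTop atTop)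
    (h : ∑ k ∈ Finset.range N, L k ≤ t) : N ≤ renewalCount L t :=
  le_csSup (renewal_bddAbove hT) h

lemma renewalCount_tendsto {L : ℕ → ℝ} (hL : ∀ k, 0 < L k)
    (hT : Tendsto (fun m => ∑ k ∈ Finset.range m, L k) atTop atTop) :
    Tendsto (fun t => renewalCount L t) atTop atTop := by
  refine tendsto_atTop.2 fun N => ?_
  filter_upwards [eventually_ge_atTop (∑ k ∈ Finset.range N, L k)] with t ht
  exact renewalCount_ge hT ht



lemma tendsto_atTop_of_avg {s : ℕ → ℝ} {c : ℝ} (hc : 0 < c)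
    (h : Tendsto (fun n => s n / n) atTop (𝓝 c)) : Tendsto s atTop atTop := by
  have h1 : ∀ᶠ n : ℕ in atTop, c / 2 < s n / n := (tendsto_order.1 h).1 _ (by linarith)
  refine tendsto_atTop_mono' atTop (f₁ := fun n : ℕ => c / 2 * n) ?_ ?_
  · filter_upwards [h1, eventually_ge_atTop 1] with n hn hn1
    have hnpos : (0 : ℝ) < n := by exact_mod_cast hn1
    rw [lt_div_iff₀ hnpos] at hn
    linarith
  · exact Tendsto.const_mul_atTop (by linarith) tendsto_natCast_atTop_atTop

lemma tendsto_div_of_avg {W : ℕ → ℝ} {c : ℝ}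
    (h : Tendsto (fun n => (∑ i ∈ Finset.range n, W i) / n) atTop (𝓝 c)) :
    Tendsto (fun n => W n / n) atTop (𝓝 0) := by
  set a : ℕ → ℝ := fun n => ∑ i ∈ Finset.range n, W i with ha
  have h1 : Tendsto (fun n => a (n + 1) / (n + 1)) atTop (𝓝 c) := by
    have h0 := h.comp (tendsto_add_atTop_nat 1)
    refine h0.congr fun n => ?_
    simp only [Function.comp_apply, Nat.cast_add, Nat.cast_one]
    rfl
  have hq : Tendsto (fun n : ℕ => ((n : ℝ) + 1) / n) atTop (𝓝 1) := by
    have : Tendsto (fun n : ℕ => 1 + 1 / (n : ℝ)) atTop (𝓝 (1 + 0)) :=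
      tendsto_const_nhds.add tendsto_one_div_atTop_nhds_zero_nat
    rw [add_zero] at this
    refine this.congr' ?_
    filter_upwards [eventually_ge_atTop 1] with n hn
    have hnpos : (0 : ℝ) < n := by exact_mod_cast hn
    field_simp
  have h2 : Tendsto (fun n : ℕ => ((n : ℝ) + 1) / n * (a (n + 1) / (n + 1)) - a n / n)
      atTop (𝓝 (1 * c - c)) := (hq.mul h1).sub h
  rw [show (1 : ℝ) * c - c = 0 by ring] at h2
  refine h2.congr' ?_
  filter_upwards [eventually_ge_atTop 1] with n hn
  have hnpos : (0 : ℝ) < n := by exact_mod_cast hn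
  have hsucc : a (n + 1) = a n + W n := Finset.sum_range_succ W n
  have hn1 : ((n : ℝ) + 1) ≠ 0 := by positivity
  rw [hsucc]
  field_simp
  ring

lemma summable_aux {Jd Kd : ℕ → ℝ} (hJ : ∀ k, 0 < Jd k) (hK : ∀ k, 0 ≤ Kd k) {m : ℝ}
    (hm : m < 0)
    (h1 : Tendsto (fun n : ℕ => (∑ i ∈ Finset.range n, Real.log (Jd i)) / n) atTop (𝓝 m))
    (h2 : Tendsto (fun n : ℕ => Real.log (max (Kd n) 1) / n) atTop (𝓝 0)) :
    Summable fun k => (∏ i ∈ Finset.range k, Jd i ^ 2) * Kd k := by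
  set ε : ℝ := -m / 8 with hε
  have hεpos : 0 < ε := by rw [hε]; linarith
  set c : ℝ := 2 * m + 3 * ε with hc
  have hcneg : c < 0 := by rw [hc, hε]; linarith
  have e1 : ∀ᶠ n : ℕ in atTop, (∑ i ∈ Finset.range n, Real.log (Jd i)) / n < m + ε :=
    (tendsto_order.1 h1).2 _ (by linarith)
  have e2 : ∀ᶠ n : ℕ in atTop, Real.log (max (Kd n) 1) / n < ε :=
    (tendsto_order.1 h2).2 _ hεpos
  have e3 : ∀ᶠ n : ℕ in atTop,
      (∏ i ∈ Finset.range n, Jd i ^ 2) * Kd n ≤ Real.exp c ^ n := by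
    filter_upwards [e1, e2, eventually_ge_atTop 1] with n hn1 hn2 hn3
    have hnpos : (0 : ℝ) < n := by exact_mod_cast hn3
    have hsum : ∑ i ∈ Finset.range n, Real.log (Jd i) ≤ (m + ε) * n := by
      rw [div_lt_iff₀ hnpos] at hn1; linarith
    have hW : Real.log (max (Kd n) 1) ≤ ε * n := by
      rw [div_lt_iff₀ hnpos] at hn2; linarith
    have hprod : ∏ i ∈ Finset.range n, Jd i ^ 2
        = Real.exp (∑ i ∈ Finset.range n, 2 * Real.log (Jd i)) := by
      rw [Real.exp_sum]
      refine Finset.prod_congr rfl fun i _ => ?_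
      rw [show (2 : ℝ) * Real.log (Jd i) = (2 : ℕ) * Real.log (Jd i) by norm_num,
        Real.exp_nat_mul, Real.exp_log (hJ i)]
    have hmax : max (Kd n) 1 = Real.exp (Real.log (max (Kd n) 1)) := by
      rw [Real.exp_log (lt_of_lt_of_le one_pos (le_max_right _ _))]
    calc (∏ i ∈ Finset.range n, Jd i ^ 2) * Kd n
        ≤ (∏ i ∈ Finset.range n, Jd i ^ 2) * max (Kd n) 1 := by
          refine mul_le_mul_of_nonneg_left (le_max_left _ _) ?_
          exact Finset.prod_nonneg fun i _ => sq_nonneg _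
      _ = Real.exp (∑ i ∈ Finset.range n, 2 * Real.log (Jd i)
            + Real.log (max (Kd n) 1)) := by
          rw [hprod, Real.exp_add, ← hmax]
      _ ≤ Real.exp (c * n) := by
          apply Real.exp_le_exp.2
          have hS : ∑ i ∈ Finset.range n, 2 * Real.log (Jd i)
              = 2 * ∑ i ∈ Finset.range n, Real.log (Jd i) := by
            rw [Finset.mul_sum]
          rw [hS, hc]
          nlinarith
      _ = Real.exp c ^ n := by rw [← Real.exp_nat_mul, mul_comm]
  obtain ⟨N, hN⟩ := e3.exists_forall_of_atTop
  have hterm_nonneg : ∀ k, 0 ≤ (∏ i ∈ Finset.range k, Jd i ^ 2) * Kd k := fun k =>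
    mul_nonneg (Finset.prod_nonneg fun i _ => sq_nonneg _) (hK k)
  have hgeo : Summable fun k : ℕ => Real.exp c ^ (k + N) := by
    have : Summable fun k : ℕ => Real.exp c ^ k :=
      summable_geometric_of_lt_one (Real.exp_nonneg c) (Real.exp_lt_one_iff.2 hcneg)
    simpa [pow_add] using this.mul_right (Real.exp c ^ N)
  have : Summable fun k : ℕ => (∏ i ∈ Finset.range (k + N), Jd i ^ 2) * Kd (k + N) := by
    refine Summable.of_nonneg_of_le (fun k => hterm_nonneg _) (fun k => ?_) hgeo
    exact hN (k + N) (by omega)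
  exact (summable_nat_add_iff N).1 this

lemma tauF_meas (m : ℕ) : Measurable (tauF m) :=
  Finset.measurable_sum _ fun k _ => (measurable_pi_apply k).snd.snd

lemma StlF_meas (n : ℕ) : Measurable (StlF n) :=
  Finset.measurable_sum _ fun k _ =>
    ((Finset.measurable_prod _ fun i _ => (measurable_pi_apply i).fst).pow_const 2).mul
      (measurable_pi_apply k).snd.fst

lemma SfwF_meas (n : ℕ) : Measurable (SfwF n) :=
  Finset.measurable_sum _ fun k _ =>
    (Finset.measurable_prod _ fun i _ => (measurable_pi_apply i).fst.pow_const 2).mul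
      (measurable_pi_apply k).snd.fst

lemma tauF_congr {m : ℕ} {z w : ℕ → E} (h : ∀ k < m, z k = w k) : tauF m z = tauF m w :=
  Finset.sum_congr rfl fun k hk => by rw [h k (Finset.mem_range.1 hk)]

lemma StlF_congr {n : ℕ} {z w : ℕ → E} (h : ∀ k < n, z k = w k) : StlF n z = StlF n w :=
  Finset.sum_congr rfl fun k hk => by
    rw [h k (Finset.mem_range.1 hk),
      Finset.prod_congr rfl fun i hi => by rw [h i (Finset.mem_Ico.1 hi).2]]

lemma SfwF_congr {n : ℕ} {z w : ℕ → E} (h : ∀ k < n, z k = w k) : SfwF n z = SfwF n w :=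
  Finset.sum_congr rfl fun k hk => by
    have hk' := Finset.mem_range.1 hk
    rw [h k hk',
      Finset.prod_congr rfl fun i hi => by rw [h i (lt_trans (Finset.mem_range.1 hi) hk')]]

lemma exchange {Ω : Type*} [MeasurableSpace Ω] (μ : Measure Ω) [IsProbabilityMeasure μ]
    (X : ℕ → Ω → E) (hXm : ∀ k, Measurable (X k))
    (hindep : iIndepFun X μ)
    (hident : ∀ k, IdentDistrib (X k) (X 0) μ μ) (n : ℕ) (t : ℝ)
    (f : BoundedContinuousFunction ℝ ℝ) :
    ∫ ω in {ω | tauF n (fun k => X k ω) ≤ t ∧ t < tauF (n + 1) (fun k => X k ω)},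
      f (StlF n (fun k => X k ω)) ∂μ
    = ∫ ω in {ω | tauF n (fun k => X k ω) ≤ t ∧ t < tauF (n + 1) (fun k => X k ω)},
      f (SfwF n (fun k => X k ω)) ∂μ := by
  classical
  set ν : Measure E := μ.map (X 0) with hν
  have hνprob : IsProbabilityMeasure ν := Measure.isProbabilityMeasure_map (hXm 0).aemeasurable
  set π : Measure (Fin (n + 1) → E) := Measure.pi (fun _ => ν) with hπ
  set Xvec : Ω → Fin (n + 1) → E := fun ω i => X i ω with hXvec
  have hXv : Measurable Xvec := measurable_pi_lambda _ fun i => hXm i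
  set y : (Fin (n + 1) → E) → ℕ → E :=
    fun x k => if h : k < n + 1 then x ⟨k, h⟩ else 0 with hy
  have hy_meas : Measurable y := by
    refine measurable_pi_lambda _ fun k => ?_
    by_cases h : k < n + 1
    · simp only [hy, dif_pos h]; exact measurable_pi_apply _
    · simp only [hy, dif_neg h]; exact measurable_const
  have hyXv : ∀ ω, ∀ k < n + 1, y (Xvec ω) k = X k ω := by
    intro ω k h; simp only [hy, dif_pos h, hXvec]
  -- joint law is the product measure
  have hmap : μ.map Xvec = π := by
    rw [hπ]
    refine (Measure.pi_eq fun s hs => ?_).symm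
    rw [Measure.map_apply hXv (MeasurableSet.univ_pi hs)]
    set sets : ℕ → Set E := fun k => if h : k < n + 1 then s ⟨k, h⟩ else Set.univ
      with hsets
    have hpre : Xvec ⁻¹' Set.pi Set.univ s = ⋂ k ∈ Finset.range (n + 1), X k ⁻¹' sets k := by
      ext ω
      simp only [Set.mem_preimage, Set.mem_pi, Set.mem_univ, true_implies,
        Finset.mem_range, Set.mem_iInter, Set.mem_setOf_eq]
      constructor
      · intro h k hk
        simp only [hsets, dif_pos hk, Set.mem_preimage]
        exact h ⟨k, hk⟩
      · intro h i
        have := h i.1 i.2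
        simpa only [hsets, dif_pos i.2, Set.mem_preimage, Fin.eta] using this
    have hsets_meas : ∀ k ∈ Finset.range (n + 1), MeasurableSet (sets k) := by
      intro k _
      simp only [hsets]
      split_ifs with h
      · exact hs _
      · exact MeasurableSet.univ
    rw [hpre, hindep.measure_inter_preimage_eq_mul (Finset.range (n + 1)) hsets_meas,
      ← Fin.prod_univ_eq_prod_range (fun k => μ (X k ⁻¹' sets k)) (n + 1)]
    refine Finset.prod_congr rfl fun i _ => ?_
    have hsi : sets i.1 = s i := by simp only [hsets, dif_pos i.2, Fin.eta]
    rw [hsi, ← Measure.map_apply (hXm i.1) (hs i), (hident i.1).map_eq]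
  -- the reversal and its measure-preservation
  set rfin : Fin (n + 1) → Fin (n + 1) := fun i => ⟨rn n i.1, rn_lt (by omega) i.2⟩
    with hrfin_def
  have hrfin : Function.Involutive rfin := by
    intro i; apply Fin.ext; simp only [hrfin_def]; exact rn_rn n i.1
  set comp_r : (Fin (n + 1) → E) → Fin (n + 1) → E := fun x => x ∘ rfin with hcomp_def
  have hcomp_meas : Measurable comp_r :=
    measurable_pi_lambda _ fun i => measurable_pi_apply _
  have hpres : MeasurePreserving comp_r π π := by
    refine ⟨hcomp_meas, ?_⟩
    rw [hπ]
    refine (Measure.pi_eq fun s hs => ?_).symm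
    rw [Measure.map_apply hcomp_meas (MeasurableSet.univ_pi hs)]
    have hpre : comp_r ⁻¹' Set.pi Set.univ s = Set.pi Set.univ fun j => s (rfin j) := by
      ext x
      simp only [Set.mem_preimage, Set.mem_pi, Set.mem_univ, true_implies,
        hcomp_def, Function.comp]
      constructor
      · intro h j; have := h (rfin j); rwa [hrfin j] at this
      · intro h i; have := h (rfin i); rwa [hrfin i] at this
    rw [hpre, Measure.pi_pi]
    exact Equiv.prod_comp hrfin.toPerm fun j => ν (s j)
  have y_comp : ∀ x, y (comp_r x) = fun k => y x (rn n k) := by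
    intro x; funext k
    by_cases h : k < n + 1
    · have h2 : rn n k < n + 1 := rn_lt (by omega) h
      simp only [hy, dif_pos h, dif_pos h2, hcomp_def, Function.comp]
      rfl
    · have h2 : rn n k = k := by unfold rn; rw [if_neg (by omega)]
      simp only [hy, dif_neg h, h2]
  -- the generic reduction to an integral over the product space
  have hZ : Measurable (fun ω => (fun k => X k ω : ℕ → E)) :=
    measurable_pi_lambda _ fun k => hXm k
  set Bset : Set Ω :=
    {ω | tauF n (fun k => X k ω) ≤ t ∧ t < tauF (n + 1) (fun k => X k ω)} with hBset
  have hB : MeasurableSet Bset := by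
    refine MeasurableSet.inter ?_ ?_
    · exact measurableSet_le ((tauF_meas n).comp hZ) measurable_const
    · exact measurableSet_lt measurable_const ((tauF_meas (n + 1)).comp hZ)
  have key : ∀ S : (ℕ → E) → ℝ, Measurable S →
      (∀ z w : ℕ → E, (∀ k < n + 1, z k = w k) → S z = S w) →
      ∫ ω in Bset, f (S (fun k => X k ω)) ∂μ
        = ∫ x, (if tauF n (y x) ≤ t ∧ t < tauF (n + 1) (y x) then f (S (y x)) else 0) ∂π := by
    intro S hSm hSc
    have hcond : MeasurableSet {x : Fin (n + 1) → E |
        tauF n (y x) ≤ t ∧ t < tauF (n + 1) (y x)} := by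
      refine MeasurableSet.inter ?_ ?_
      · exact measurableSet_le ((tauF_meas n).comp hy_meas) measurable_const
      · exact measurableSet_lt measurable_const ((tauF_meas (n + 1)).comp hy_meas)
    have hΦ : Measurable fun x : Fin (n + 1) → E =>
        (if tauF n (y x) ≤ t ∧ t < tauF (n + 1) (y x) then f (S (y x)) else 0) :=
      Measurable.ite hcond
        (f.continuous.measurable.comp (hSm.comp hy_meas)) measurable_const
    rw [← integral_indicator hB]
    have heq : ∀ ω, Bset.indicator (fun ω => f (S (fun k => X k ω))) ω
        = (fun x => if tauF n (y x) ≤ t ∧ t < tauF (n + 1) (y x) then f (S (y x)) else 0)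
            (Xvec ω) := by
      intro ω
      have h1 : tauF n (y (Xvec ω)) = tauF n (fun k => X k ω) :=
        tauF_congr fun k hk => hyXv ω k (by omega)
      have h2 : tauF (n + 1) (y (Xvec ω)) = tauF (n + 1) (fun k => X k ω) :=
        tauF_congr fun k hk => hyXv ω k hk
      have h3 : S (y (Xvec ω)) = S (fun k => X k ω) := hSc _ _ fun k hk => hyXv ω k hk
      rw [Set.indicator_apply]
      simp only [hBset, Set.mem_setOf_eq, h1, h2, h3]
    rw [show (fun ω => Bset.indicator (fun ω => f (S (fun k => X k ω))) ω)
        = fun ω => (fun x => if tauF n (y x) ≤ t ∧ t < tauF (n + 1) (y x)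
            then f (S (y x)) else 0) (Xvec ω) from funext heq]
    rw [← integral_map hXv.aemeasurable hΦ.aestronglyMeasurable, hmap]
  have h_tl := key (StlF n) (StlF_meas n) (fun z w h => StlF_congr fun k hk => h k (by omega))
  have h_fw := key (SfwF n) (SfwF_meas n) (fun z w h => SfwF_congr fun k hk => h k (by omega))
  rw [h_tl, h_fw]
  have hΦtl : Measurable fun x : Fin (n + 1) → E =>
      (if tauF n (y x) ≤ t ∧ t < tauF (n + 1) (y x) then f (StlF n (y x)) else 0) := by
    refine Measurable.ite ?_ (f.continuous.measurable.comp ((StlF_meas n).comp hy_meas))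
      measurable_const
    refine MeasurableSet.inter ?_ ?_
    · exact measurableSet_le ((tauF_meas n).comp hy_meas) measurable_const
    · exact measurableSet_lt measurable_const ((tauF_meas (n + 1)).comp hy_meas)
  calc ∫ x, (if tauF n (y x) ≤ t ∧ t < tauF (n + 1) (y x) then f (StlF n (y x)) else 0) ∂π
      = ∫ x, (if tauF n (y x) ≤ t ∧ t < tauF (n + 1) (y x)
          then f (StlF n (y x)) else 0) ∂(π.map comp_r) := by rw [hpres.map_eq]
    _ = ∫ x, (if tauF n (y (comp_r x)) ≤ t ∧ t < tauF (n + 1) (y (comp_r x))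
          then f (StlF n (y (comp_r x))) else 0) ∂π :=
        integral_map hcomp_meas.aemeasurable hΦtl.aestronglyMeasurable
    _ = ∫ x, (if tauF n (y x) ≤ t ∧ t < tauF (n + 1) (y x) then f (SfwF n (y x)) else 0) ∂π := by
        refine integral_congr_ae (Filter.EventuallyEq.of_eq (funext fun x => ?_))
        rw [y_comp x, tauF_rn n n (le_refl n), tauF_rn n (n + 1) (by omega), StlF_rn n (y x)]

end Stmt5Aux

open Stmt5Aux in
/-- For i.i.d. triples `(J_k, K_k, L_k)` with `J_k > 0`, `K_k ≥ 0`,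
`L_k > 0` a.s., `E[L₁] < ∞`, `E[log J₁] < 0` and `E[log⁺ K₁] < ∞`, the backward sums
`S̃_{g_t} = Σ_{k=1}^{g_t} (∏_{i=k+1}^{g_t} J_i)² K_k` evaluated at the renewal counting
variable `g_t` converge in distribution, as `t → ∞`, to
`S_∞ = Σ_{k=1}^∞ (∏_{i=1}^{k-1} J_i²) K_k` (which converges a.s. to a finite limit).
Convergence in distribution is expressed by testing against bounded continuous
functions.  (Lean index `k` corresponds to the paper index `k + 1`.) -/
theorem stmt5 {Ω : Type*} [MeasurableSpace Ω] (μ : Measure Ω) [IsProbabilityMeasure μ]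
    (J K L : ℕ → Ω → ℝ)
    (hmeas : ∀ k, Measurable fun ω => (J k ω, K k ω, L k ω))
    (hindep : iIndepFun (fun k ω => (J k ω, K k ω, L k ω)) μ)
    (hident : ∀ k, IdentDistrib (fun ω => (J k ω, K k ω, L k ω))
      (fun ω => (J 0 ω, K 0 ω, L 0 ω)) μ μ)
    (hJpos : ∀ k, ∀ᵐ ω ∂μ, 0 < J k ω)
    (hKnonneg : ∀ k, ∀ᵐ ω ∂μ, 0 ≤ K k ω)
    (hLpos : ∀ k, ∀ᵐ ω ∂μ, 0 < L k ω)
    (hLint : Integrable (L 0) μ)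
    (hlogJint : Integrable (fun ω => Real.log (J 0 ω)) μ)
    (hlogJneg : ∫ ω, Real.log (J 0 ω) ∂μ < 0)
    (hlogKint : Integrable (fun ω => Real.log (max (K 0 ω) 1)) μ) :
    (∀ᵐ ω ∂μ, Summable fun k => (∏ i ∈ Finset.range k, (J i ω) ^ 2) * K k ω) ∧
    ∀ f : BoundedContinuousFunction ℝ ℝ,
      Tendsto (fun t : ℝ => ∫ ω,
          f (∑ k ∈ Finset.range (renewalCount (fun i => L i ω) t),
            (∏ i ∈ Finset.Ico (k + 1) (renewalCount (fun i => L i ω) t), J i ω) ^ 2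
              * K k ω) ∂μ)
        atTop
        (𝓝 (∫ ω, f (∑' k, (∏ i ∈ Finset.range k, (J i ω) ^ 2) * K k ω) ∂μ)) := by
  classical
  have hLmeas : ∀ k, Measurable (L k) := fun k => (hmeas k).snd.snd
  -- strong law facts
  have hφ1 : Measurable fun p : Stmt5Aux.E => Real.log p.1 :=
    Real.measurable_log.comp measurable_fst
  have hφ2 : Measurable fun p : Stmt5Aux.E => Real.log (max p.2.1 1) :=
    Real.measurable_log.comp ((measurable_fst.comp measurable_snd).max measurable_const)
  have hφ3 : Measurable fun p : Stmt5Aux.E => p.2.2 := measurable_snd.snd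
  have hSLLN_J := strong_law_ae_real (fun k ω => Real.log (J k ω)) hlogJint
    (fun i j hij => (hindep.indepFun hij).comp hφ1 hφ1)
    (fun k => (hident k).comp hφ1)
  have hSLLN_K := strong_law_ae_real (fun k ω => Real.log (max (K k ω) 1)) hlogKint
    (fun i j hij => (hindep.indepFun hij).comp hφ2 hφ2)
    (fun k => (hident k).comp hφ2)
  have hSLLN_L := strong_law_ae_real (fun k ω => L k ω) hLint
    (fun i j hij => (hindep.indepFun hij).comp hφ3 hφ3)
    (fun k => (hident k).comp hφ3)
  have hELpos : 0 < ∫ ω, L 0 ω ∂μ := by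
    have h0 : 0 ≤ᵐ[μ] L 0 := (hLpos 0).mono fun ω h => h.le
    rcases (integral_nonneg_of_ae h0).lt_or_eq with h | h
    · exact h
    · exfalso
      have hz : L 0 =ᵐ[μ] 0 := (integral_eq_zero_iff_of_nonneg_ae h0 hLint).1 h.symm
      have : ∀ᵐ ω ∂μ, False := by
        filter_upwards [hLpos 0, hz] with ω h1 h2
        rw [Pi.zero_apply] at h2
        exact absurd (h2 ▸ h1) (lt_irrefl 0)
      rw [ae_iff] at this
      simp only [not_false_eq_true, Set.setOf_true, measure_univ] at this
      exact one_ne_zero this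
  have hae_main : ∀ᵐ ω ∂μ, (∀ k, 0 < J k ω) ∧ (∀ k, 0 ≤ K k ω) ∧ (∀ k, 0 < L k ω)
      ∧ Tendsto (fun n : ℕ => (∑ i ∈ Finset.range n, Real.log (J i ω)) / n) atTop
          (𝓝 (∫ ω, Real.log (J 0 ω) ∂μ))
      ∧ Tendsto (fun n : ℕ => Real.log (max (K n ω) 1) / n) atTop (𝓝 0)
      ∧ Tendsto (fun n : ℕ => ∑ k ∈ Finset.range n, L k ω) atTop atTop := by
    filter_upwards [ae_all_iff.2 hJpos, ae_all_iff.2 hKnonneg, ae_all_iff.2 hLpos,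
      hSLLN_J, hSLLN_K, hSLLN_L] with ω h1 h2 h3 h4 h5 h6
    exact ⟨h1, h2, h3, h4, tendsto_div_of_avg h5, tendsto_atTop_of_avg hELpos h6⟩
  have hsummable : ∀ᵐ ω ∂μ, Summable fun k => (∏ i ∈ Finset.range k, (J i ω) ^ 2) * K k ω :=
    hae_main.mono fun ω h =>
      summable_aux h.1 h.2.1 hlogJneg h.2.2.2.1 h.2.2.2.2.1
  refine ⟨hsummable, fun f => ?_⟩
  -- the good set
  set Gset : Set Ω := {ω | (∀ k, 0 < L k ω) ∧
    ∀ M : ℕ, ∃ m, (M : ℝ) < ∑ k ∈ Finset.range m, L k ω} with hGset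
  have hGmeas : MeasurableSet Gset := by
    have : Gset = (⋂ k, {ω | 0 < L k ω}) ∩
        ⋂ M : ℕ, ⋃ m, {ω | (M : ℝ) < ∑ k ∈ Finset.range m, L k ω} := by
      ext ω
      simp only [hGset, Set.mem_setOf_eq, Set.mem_inter_iff, Set.mem_iInter, Set.mem_iUnion]
    rw [this]
    exact (MeasurableSet.iInter fun k =>
        measurableSet_lt measurable_const (hLmeas k)).inter
      (MeasurableSet.iInter fun M => MeasurableSet.iUnion fun m =>
        measurableSet_lt measurable_const (Finset.measurable_sum _ fun k _ => hLmeas k))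
  have hGae : ∀ᵐ ω ∂μ, ω ∈ Gset := by
    filter_upwards [hae_main] with ω h
    refine ⟨h.2.2.1, fun M => ?_⟩
    obtain ⟨m, hm⟩ := (tendsto_atTop.1 h.2.2.2.2.2 ((M : ℝ) + 1)).exists
    exact ⟨m, by linarith⟩
  have hGtau : ∀ ω ∈ Gset, Tendsto (fun m => ∑ k ∈ Finset.range m, L k ω) atTop atTop := by
    intro ω hω
    refine tendsto_atTop_atTop_of_monotone (tau_mono fun k => hω.1 k) fun b => ?_
    obtain ⟨M, hM⟩ := exists_nat_ge b
    obtain ⟨m, hm⟩ := hω.2 M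
    exact ⟨m, le_trans hM hm.le⟩
  -- events
  set Bn : ℝ → ℕ → Set Ω := fun t n => {ω | (∑ k ∈ Finset.range n, L k ω) ≤ t ∧
    t < ∑ k ∈ Finset.range (n + 1), L k ω} with hBn
  have hBmeas : ∀ t n, MeasurableSet (Bn t n) := fun t n =>
    (measurableSet_le (Finset.measurable_sum _ fun k _ => hLmeas k) measurable_const).inter
      (measurableSet_lt measurable_const (Finset.measurable_sum _ fun k _ => hLmeas k))
  set ghat : ℝ → Ω → ℕ := fun t ω => if ω ∈ Gset then renewalCount (fun i => L i ω) t else 0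
    with hghat
  have hg_mem : ∀ {t : ℝ}, 0 ≤ t → ∀ {ω}, ω ∈ Gset → ∀ {n : ℕ},
      (renewalCount (fun i => L i ω) t = n ↔ ω ∈ Bn t n) := by
    intro t ht ω hω n
    constructor
    · rintro rfl
      exact renewalCount_spec (fun k => hω.1 k) ht (hGtau ω hω)
    · intro h
      exact renewalCount_eq (fun k => hω.1 k) h.1 h.2
  have hghat_meas : ∀ t : ℝ, 0 ≤ t → Measurable (ghat t) := by
    intro t ht
    refine measurable_to_countable' fun n => ?_
    match n with
    | 0 =>
      have : ghat t ⁻¹' {0} = Gsetᶜ ∪ (Gset ∩ Bn t 0) := by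
        ext ω
        simp only [Set.mem_preimage, Set.mem_singleton_iff, Set.mem_union, Set.mem_compl_iff,
          Set.mem_inter_iff, hghat]
        by_cases hω : ω ∈ Gset
        · simp only [if_pos hω, hω, not_true_eq_false, false_or, true_and]
          exact hg_mem ht hω
        · simp [hghat, hω]
      rw [this]
      exact hGmeas.compl.union (hGmeas.inter (hBmeas t 0))
    | (m + 1) =>
      have : ghat t ⁻¹' {m + 1} = Gset ∩ Bn t (m + 1) := by
        ext ω
        simp only [Set.mem_preimage, Set.mem_singleton_iff, Set.mem_inter_iff, hghat]
        by_cases hω : ω ∈ Gset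
        · simp only [if_pos hω, hω, true_and]
          exact hg_mem ht hω
        · simp only [if_neg hω, hω, false_and, iff_false]
          simp
      rw [this]
      exact hGmeas.inter (hBmeas t (m + 1))
  -- the two sum processes
  set Stl : ℕ → Ω → ℝ := fun n ω => StlF n (fun k => (J k ω, K k ω, L k ω)) with hStl
  set Sfw : ℕ → Ω → ℝ := fun n ω => SfwF n (fun k => (J k ω, K k ω, L k ω)) with hSfw
  have hZmeas : Measurable fun ω => (fun k => (J k ω, K k ω, L k ω) : ℕ → Stmt5Aux.E) :=
    measurable_pi_lambda _ fun k => hmeas k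
  have hStl_meas : ∀ n, Measurable (Stl n) := fun n => (StlF_meas n).comp hZmeas
  have hSfw_meas : ∀ n, Measurable (Sfw n) := fun n => (SfwF_meas n).comp hZmeas
  -- generic decomposition
  have decomp : ∀ (t : ℝ), 0 ≤ t → ∀ (S : ℕ → Ω → ℝ), (∀ n, Measurable (S n)) →
      ∫ ω, f (S (ghat t ω) ω) ∂μ = ∑' n, ∫ ω in Bn t n, f (S n ω) ∂μ := by
    intro t ht S hS
    have huncur : Measurable fun p : Ω × ℕ => f (S p.2 p.1) :=
      measurable_from_prod_countable_left fun n => f.continuous.measurable.comp (hS n)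
    have hmeasH : Measurable fun ω => f (S (ghat t ω) ω) :=
      huncur.comp (measurable_id.prodMk (hghat_meas t ht))
    have hint : Integrable (fun ω => f (S (ghat t ω) ω)) μ := by
      refine Integrable.mono' (integrable_const ‖f‖) hmeasH.aestronglyMeasurable ?_
      exact Filter.Eventually.of_forall fun ω => f.norm_coe_le_norm _
    have hres : μ.restrict Gset = μ := Measure.restrict_eq_self_of_ae_mem hGae
    have hcover : Gset = ⋃ n, (Gset ∩ Bn t n) := by
      ext ω
      constructor
      · intro hω
        exact Set.mem_iUnion.2 ⟨renewalCount (fun i => L i ω) t, hω,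
          (hg_mem ht hω).1 rfl⟩
      · intro hω
        obtain ⟨n, hn⟩ := Set.mem_iUnion.1 hω
        exact hn.1
    have hdisj : Pairwise (Function.onFun Disjoint fun n => Gset ∩ Bn t n) := by
      intro a b hab
      refine Set.disjoint_left.2 fun ω ha hb => hab ?_
      rw [← (hg_mem ht ha.1).2 ha.2, (hg_mem ht hb.1).2 hb.2]
    calc ∫ ω, f (S (ghat t ω) ω) ∂μ
        = ∫ ω in Gset, f (S (ghat t ω) ω) ∂μ := by rw [hres]
      _ = ∑' n, ∫ ω in Gset ∩ Bn t n, f (S (ghat t ω) ω) ∂μ := by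
          conv_lhs => rw [hcover]
          exact integral_iUnion (fun n => hGmeas.inter (hBmeas t n)) hdisj
            hint.integrableOn
      _ = ∑' n, ∫ ω in Bn t n, f (S n ω) ∂μ := by
          refine tsum_congr fun n => ?_
          rw [setIntegral_congr_fun (hGmeas.inter (hBmeas t n))
            (fun ω hω => by
              have hg : ghat t ω = n := by
                simp only [hghat, if_pos hω.1]
                exact (hg_mem ht hω.1).2 hω.2
              rw [hg])]
          refine setIntegral_congr_set ?_
          refine Filter.eventuallyEq_set.2 ?_
          filter_upwards [hGae] with ω hω
          simp [hω]
  -- Step 1: equality of the two integrals for t ≥ 0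
  have step1 : ∀ t : ℝ, 0 ≤ t →
      (∫ ω, f (∑ k ∈ Finset.range (renewalCount (fun i => L i ω) t),
          (∏ i ∈ Finset.Ico (k + 1) (renewalCount (fun i => L i ω) t), J i ω) ^ 2
            * K k ω) ∂μ)
      = ∫ ω, f (Sfw (ghat t ω) ω) ∂μ := by
    intro t ht
    have hid1 : (fun ω => f (∑ k ∈ Finset.range (renewalCount (fun i => L i ω) t),
        (∏ i ∈ Finset.Ico (k + 1) (renewalCount (fun i => L i ω) t), J i ω) ^ 2
          * K k ω)) =ᵐ[μ] fun ω => f (Stl (ghat t ω) ω) := by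
      filter_upwards [hGae] with ω hω
      simp only [hghat, if_pos hω, hStl]
      rfl
    rw [integral_congr_ae hid1, decomp t ht Stl hStl_meas, decomp t ht Sfw hSfw_meas]
    refine tsum_congr fun n => ?_
    exact exchange μ (fun k ω => (J k ω, K k ω, L k ω)) hmeas hindep hident n t f
  -- Step 2: convergence of the forward integrals
  have step2 : Tendsto (fun t : ℝ => ∫ ω, f (Sfw (ghat t ω) ω) ∂μ) atTop
      (𝓝 (∫ ω, f (∑' k, (∏ i ∈ Finset.range k, (J i ω) ^ 2) * K k ω) ∂μ)) := by
    refine tendsto_integral_filter_of_dominated_convergence (fun _ => ‖f‖) ?_ ?_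
      (integrable_const _) ?_
    · filter_upwards [eventually_ge_atTop (0 : ℝ)] with t ht
      have huncur : Measurable fun p : Ω × ℕ => f (Sfw p.2 p.1) :=
        measurable_from_prod_countable_left fun n => f.continuous.measurable.comp (hSfw_meas n)
      exact (huncur.comp (measurable_id.prodMk (hghat_meas t ht))).aestronglyMeasurable
    · exact Filter.Eventually.of_forall fun t =>
        Filter.Eventually.of_forall fun ω => f.norm_coe_le_norm _
    · filter_upwards [hGae, hsummable] with ω hG hsum
      have hg : ∀ t : ℝ, ghat t ω = renewalCount (fun i => L i ω) t := fun t => if_pos hG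
      have hgt : Tendsto (fun t : ℝ => ghat t ω) atTop atTop := by
        rw [show (fun t : ℝ => ghat t ω) = fun t => renewalCount (fun i => L i ω) t
          from funext hg]
        exact renewalCount_tendsto (fun k => hG.1 k) (hGtau ω hG)
      have hpartial : Tendsto (fun n => Sfw n ω) atTop
          (𝓝 (∑' k, (∏ i ∈ Finset.range k, (J i ω) ^ 2) * K k ω)) :=
        hsum.hasSum.tendsto_sum_nat
      exact ((f.continuous.tendsto _).comp (hpartial.comp hgt))
  refine step2.congr' ?_
  filter_upwards [eventually_ge_atTop (0 : ℝ)] with t ht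
  exact (step1 t ht).symm
end

section
/- Let (ξ_k)_{k≥1} be an i.i.d. sequence of real random variables with E[ξ₁] = 0 and Var(ξ₁) = σ² ∈ (0, ∞). Let S_k = ξ_1 + ⋯ + ξ_k and M_n = max_{1≤k≤n} S_k. Then the sequence (M_n/√n) satisfies Anscombe's uniform continuity in probability condition: for every γ > 0 and η > 0 there exist δ > 0 and n₀ ∈ ℕ such that for all n ≥ n₀, P[ max_{k∈ℕ, |k−n| < δn} | M_k/√k − M_n/√n | > γ ] < η. -/
open MeasureTheory ProbabilityTheory Filter Topology

/-- `runMax ξ n = max_{1 ≤ k ≤ n} S_k` where `S_k = ξ_1 + ⋯ + ξ_k` is the `k`-th partial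
sum (the paper's `ξ_k` is `ξ (k-1)` in Lean, so `S_k = ∑ i ∈ Finset.range k, ξ i`);
by convention `runMax ξ 0 = 0`. -/
noncomputable def runMax (ξ : ℕ → ℝ) (n : ℕ) : ℝ :=
  if h : n = 0 then 0
  else (Finset.range n).sup' (Finset.nonempty_range_iff.mpr h)
    (fun j => ∑ i ∈ Finset.range (j + 1), ξ i)


lemma le_runMax (f : ℕ → ℝ) {j n : ℕ} (h1 : 1 ≤ j) (h2 : j ≤ n) :
    (∑ i ∈ Finset.range j, f i) ≤ runMax f n := by
  have hn : n ≠ 0 := by omega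
  rw [runMax, dif_neg hn]
  have hmem : j - 1 ∈ Finset.range n := by simp; omega
  have := Finset.le_sup' (fun j => ∑ i ∈ Finset.range (j + 1), f i) hmem
  simpa only [Nat.sub_add_cancel h1] using this

lemma runMax_exists (f : ℕ → ℝ) {n : ℕ} (hn : n ≠ 0) :
    ∃ j, 1 ≤ j ∧ j ≤ n ∧ runMax f n = ∑ i ∈ Finset.range j, f i := by
  rw [runMax, dif_neg hn]
  obtain ⟨i, hi, h⟩ := Finset.exists_mem_eq_sup' (Finset.nonempty_range_iff.mpr hn)
    (fun j => ∑ i ∈ Finset.range (j + 1), f i)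
  exact ⟨i + 1, by omega, by simpa using Finset.mem_range.mp hi, h⟩

lemma runMax_mono (f : ℕ → ℝ) {p q : ℕ} (hp : p ≠ 0) (hpq : p ≤ q) :
    runMax f p ≤ runMax f q := by
  obtain ⟨j, h1, h2, h3⟩ := runMax_exists f hp
  rw [h3]; exact le_runMax f h1 (h2.trans hpq)

lemma cheb {Ω : Type*} [MeasurableSpace Ω] (μ : Measure Ω) [IsProbabilityMeasure μ]
    (ξ : ℕ → Ω → ℝ) (σ : ℝ)
    (hmeas : ∀ k, Measurable (ξ k))
    (hindep : iIndepFun ξ μ)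
    (hident : ∀ k, IdentDistrib (ξ k) (ξ 0) μ μ)
    (hmean : ∫ ω, ξ 0 ω ∂μ = 0)
    (hsqint : Integrable (fun ω => (ξ 0 ω) ^ 2) μ)
    (hvar : ∫ ω, (ξ 0 ω) ^ 2 ∂μ = σ ^ 2)
    (s : Finset ℕ) {c : ℝ} (hc : 0 < c) :
    μ {ω | c ≤ |∑ i ∈ s, ξ i ω|} ≤ ENNReal.ofReal (s.card * σ ^ 2 / c ^ 2) := by
  have hm0 : MemLp (ξ 0) 2 μ :=
    (memLp_two_iff_integrable_sq (hmeas 0).aestronglyMeasurable).2 hsqint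
  have hmi : ∀ i, MemLp (ξ i) 2 μ := fun i => (hident i).symm.memLp_snd hm0
  have hinti : ∀ i, Integrable (ξ i) μ := fun i => (hmi i).integrable one_le_two
  set X : Ω → ℝ := fun ω => ∑ i ∈ s, ξ i ω with hXdef
  have hXsum : X = ∑ i ∈ s, ξ i := by ext ω; simp [hXdef]
  have hmX : MemLp X 2 μ := by rw [hXsum]; exact memLp_finset_sum' s fun i _ => hmi i
  have hEX : μ[X] = 0 := by
    rw [hXdef]
    simp only
    rw [integral_finset_sum s fun i _ => hinti i]
    refine Finset.sum_eq_zero fun i _ => ?_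
    rw [(hident i).integral_eq]; exact hmean
  have hvX : variance X μ = s.card * σ ^ 2 := by
    have hv : ∀ i, variance (ξ i) μ = σ ^ 2 := by
      intro i
      have h2 : IdentDistrib (fun ω => (ξ i ω) ^ 2) (fun ω => (ξ 0 ω) ^ 2) μ μ :=
        (hident i).comp (measurable_id.pow_const 2)
      rw [variance_eq_sub (hmi i)]
      have hsq : μ[(ξ i) ^ 2] = σ ^ 2 := by
        have h3 := h2.integral_eq
        rw [hvar] at h3
        simpa [Pi.pow_apply] using h3
      rw [hsq, (hident i).integral_eq, hmean]
      ring
    rw [hXsum, IndepFun.variance_sum (fun i _ => hmi i)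
      (fun i _ j _ hij => hindep.indepFun hij)]
    simp [hv, Finset.sum_const, nsmul_eq_mul]
  have hcheb := meas_ge_le_variance_div_sq (μ := μ) hmX hc
  rw [hEX, hvX] at hcheb
  simpa using hcheb

lemma etemadi {Ω : Type*} [MeasurableSpace Ω] (μ : Measure Ω) [IsProbabilityMeasure μ]
    (ξ : ℕ → Ω → ℝ) (σ : ℝ)
    (hmeas : ∀ k, Measurable (ξ k))
    (hindep : iIndepFun ξ μ)
    (hident : ∀ k, IdentDistrib (ξ k) (ξ 0) μ μ)
    (hmean : ∫ ω, ξ 0 ω ∂μ = 0)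
    (hsqint : Integrable (fun ω => (ξ 0 ω) ^ 2) μ)
    (hvar : ∫ ω, (ξ 0 ω) ^ 2 ∂μ = σ ^ 2)
    (a m : ℕ) {lam : ℝ} (hlam : 0 < lam) :
    μ {ω | ∃ j, 1 ≤ j ∧ j ≤ m ∧ 3 * lam ≤ |∑ i ∈ Finset.Ico a (a + j), ξ i ω|}
      ≤ ENNReal.ofReal (2 * m * σ ^ 2 / lam ^ 2) := by
  classical
  set T : ℕ → Ω → ℝ := fun j ω => ∑ i ∈ Finset.Ico a (a + j), ξ i ω with hT
  have hTmeas : ∀ j, Measurable (T j) := fun j => Finset.measurable_sum _ fun i _ => hmeas i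
  set A : ℕ → Set Ω := fun j =>
    {ω | 3 * lam ≤ |T j ω| ∧ ∀ i, 1 ≤ i → i < j → |T i ω| < 3 * lam} with hA
  set Bs : ℕ → Set Ω := fun j => {ω | 2 * lam ≤ |T m ω - T j ω|} with hBs
  have hAmeas : ∀ j, MeasurableSet (A j) := by
    intro j
    have h1 : MeasurableSet {ω | 3 * lam ≤ |T j ω|} :=
      measurableSet_le measurable_const (hTmeas j).abs
    have h2 : MeasurableSet {ω | ∀ i, 1 ≤ i → i < j → |T i ω| < 3 * lam} := by
      have heq : {ω | ∀ i, 1 ≤ i → i < j → |T i ω| < 3 * lam}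
          = ⋂ i, ⋂ (_ : 1 ≤ i), ⋂ (_ : i < j), {ω | |T i ω| < 3 * lam} := by
        ext ω; simp
      rw [heq]
      exact MeasurableSet.iInter fun i => MeasurableSet.iInter fun _ =>
        MeasurableSet.iInter fun _ => measurableSet_lt (hTmeas i).abs measurable_const
    exact h1.inter h2
  have hdisj : (↑(Finset.Icc 1 m) : Set ℕ).PairwiseDisjoint A := by
    intro i hi j hj hij
    rw [Finset.mem_coe, Finset.mem_Icc] at hi hj
    rcases hij.lt_or_gt with h | h
    · exact Set.disjoint_left.mpr fun ω hωi hωj =>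
        absurd hωi.1 (not_le.mpr (hωj.2 i hi.1 h))
    · exact (Set.disjoint_left.mpr fun ω hωj hωi =>
        absurd hωj.1 (not_le.mpr (hωi.2 j hj.1 h))).symm
  have hsub : {ω | ∃ j, 1 ≤ j ∧ j ≤ m ∧ 3 * lam ≤ |T j ω|} ⊆ ⋃ j ∈ Finset.Icc 1 m, A j := by
    intro ω hω
    have hex : ∃ j, 1 ≤ j ∧ j ≤ m ∧ 3 * lam ≤ |T j ω| := hω
    obtain ⟨h1, h2, h3⟩ := Nat.find_spec hex
    refine Set.mem_iUnion₂.mpr ⟨Nat.find hex, Finset.mem_Icc.mpr ⟨h1, h2⟩, h3, fun i hi1 hi2 => ?_⟩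
    by_contra hcon
    push_neg at hcon
    exact Nat.find_min hex hi2 ⟨hi1, by omega, hcon⟩
  have hsplit : ∀ j, j ≤ m → ∀ ω, T m ω - T j ω = ∑ i ∈ Finset.Ico (a + j) (a + m), ξ i ω := by
    intro j hj ω
    have : T j ω + ∑ i ∈ Finset.Ico (a + j) (a + m), ξ i ω = T m ω := by
      rw [hT]
      simp only
      rw [← Finset.sum_union (Finset.Ico_disjoint_Ico_consecutive _ _ _),
        Finset.Ico_union_Ico_eq_Ico (by omega) (by omega)]
    linarith
  have key : ∀ j, 1 ≤ j → j ≤ m → μ (A j ∩ Bs j) = μ (A j) * μ (Bs j) := by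
    intro j hj1 hj2
    set S1 := Finset.Ico a (a + j) with hS1
    set S2 := Finset.Ico (a + j) (a + m) with hS2
    set φ : ((i : S1) → ℝ) → (ℕ → ℝ) :=
      fun y l => if h : a + l ∈ S1 then y ⟨a + l, h⟩ else 0 with hφdef
    set ψ : ((i : S2) → ℝ) → (ℕ → ℝ) :=
      fun y l => if h : a + j + l ∈ S2 then y ⟨a + j + l, h⟩ else 0 with hψdef
    have hφ : Measurable φ := measurable_pi_lambda _ fun l => by
      by_cases h : a + l ∈ S1
      · simp only [hφdef, dif_pos h]; exact measurable_pi_apply _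
      · simp only [hφdef, dif_neg h]; exact measurable_const
    have hψ : Measurable ψ := measurable_pi_lambda _ fun l => by
      by_cases h : a + j + l ∈ S2
      · simp only [hψdef, dif_pos h]; exact measurable_pi_apply _
      · simp only [hψdef, dif_neg h]; exact measurable_const
    set F : Ω → ℕ → ℝ := fun ω => φ fun i : S1 => ξ i ω with hFdef
    set G : Ω → ℕ → ℝ := fun ω => ψ fun i : S2 => ξ i ω with hGdef
    have hFG : IndepFun F G μ :=
      (hindep.indepFun_finset S1 S2 (Finset.Ico_disjoint_Ico_consecutive a (a + j) (a + m))
        hmeas).comp hφ hψ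
    have hFco : ∀ ω, ∀ l, l < j → F ω l = ξ (a + l) ω := by
      intro ω l hl
      have hmem : a + l ∈ S1 := by rw [hS1, Finset.mem_Ico]; omega
      simp only [hFdef, hφdef, dif_pos hmem]
    have hGco : ∀ ω, ∀ l, l < m - j → G ω l = ξ (a + j + l) ω := by
      intro ω l hl
      have hmem : a + j + l ∈ S2 := by rw [hS2, Finset.mem_Ico]; omega
      simp only [hGdef, hψdef, dif_pos hmem]
    have hTsum : ∀ ω, ∀ i, i ≤ j → T i ω = ∑ l ∈ Finset.range i, F ω l := by
      intro ω i hij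
      rw [hT]
      simp only
      rw [Finset.sum_Ico_eq_sum_range]
      simp only [Nat.add_sub_cancel_left]
      exact Finset.sum_congr rfl fun l hl =>
        (hFco ω l (lt_of_lt_of_le (Finset.mem_range.mp hl) hij)).symm
    have hTG : ∀ ω, T m ω - T j ω = ∑ l ∈ Finset.range (m - j), G ω l := by
      intro ω
      rw [hsplit j hj2 ω, ← hS2, Finset.sum_Ico_eq_sum_range]
      have hc : a + m - (a + j) = m - j := by omega
      rw [hc]
      exact Finset.sum_congr rfl fun l hl =>
        (hGco ω l (Finset.mem_range.mp hl)).symm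
    set SA : Set (ℕ → ℝ) := {x | 3 * lam ≤ |∑ l ∈ Finset.range j, x l| ∧
      ∀ i, 1 ≤ i → i < j → |∑ l ∈ Finset.range i, x l| < 3 * lam} with hSAdef
    set SB : Set (ℕ → ℝ) := {x | 2 * lam ≤ |∑ l ∈ Finset.range (m - j), x l|} with hSBdef
    have hmsum : ∀ r : ℕ, Measurable fun x : ℕ → ℝ => ∑ l ∈ Finset.range r, x l :=
      fun r => Finset.measurable_sum _ fun l _ => measurable_pi_apply l
    have hSA : MeasurableSet SA := by
      rw [hSAdef, Set.setOf_and]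
      refine (measurableSet_le measurable_const (hmsum j).abs).inter ?_
      have heq : {x : ℕ → ℝ | ∀ i, 1 ≤ i → i < j → |∑ l ∈ Finset.range i, x l| < 3 * lam}
          = ⋂ i, ⋂ (_ : 1 ≤ i), ⋂ (_ : i < j),
            {x : ℕ → ℝ | |∑ l ∈ Finset.range i, x l| < 3 * lam} := by
        ext x; simp
      rw [heq]
      exact MeasurableSet.iInter fun i => MeasurableSet.iInter fun _ =>
        MeasurableSet.iInter fun _ => measurableSet_lt (hmsum i).abs measurable_const
    have hSB : MeasurableSet SB := measurableSet_le measurable_const (hmsum (m - j)).abs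
    have hAeq : A j = F ⁻¹' SA := by
      ext ω
      simp only [hA, hSAdef, Set.mem_setOf_eq, Set.mem_preimage]
      constructor
      · rintro ⟨h1, h2⟩
        exact ⟨by rw [← hTsum ω j le_rfl]; exact h1,
          fun i hi1 hi2 => by rw [← hTsum ω i hi2.le]; exact h2 i hi1 hi2⟩
      · rintro ⟨h1, h2⟩
        exact ⟨by rw [hTsum ω j le_rfl]; exact h1,
          fun i hi1 hi2 => by rw [hTsum ω i hi2.le]; exact h2 i hi1 hi2⟩
    have hBeq : Bs j = G ⁻¹' SB := by
      ext ω
      simp only [hBs, hSBdef, Set.mem_setOf_eq, Set.mem_preimage]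
      rw [hTG ω]
    rw [hAeq, hBeq]
    exact hFG.measure_inter_preimage_eq_mul _ _ hSA hSB
  have hBsbound : ∀ j, j ≤ m → μ (Bs j) ≤ ENNReal.ofReal (m * σ ^ 2 / (4 * lam ^ 2)) := by
    intro j hj
    have heq : Bs j = {ω | 2 * lam ≤ |∑ i ∈ Finset.Ico (a + j) (a + m), ξ i ω|} := by
      ext ω
      simp only [hBs, Set.mem_setOf_eq, hsplit j hj ω]
    rw [heq]
    refine (cheb μ ξ σ hmeas hindep hident hmean hsqint hvar _ (by positivity)).trans
      (ENNReal.ofReal_le_ofReal ?_)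
    rw [Nat.card_Ico]
    have hc : a + m - (a + j) = m - j := by omega
    rw [hc]
    have h1 : ((m - j : ℕ) : ℝ) ≤ (m : ℝ) := by
      exact_mod_cast Nat.sub_le m j
    have h2 : (2 * lam) ^ 2 = 4 * lam ^ 2 := by ring
    rw [h2]
    gcongr
  have hTmb : μ {ω | lam ≤ |T m ω|} ≤ ENNReal.ofReal (m * σ ^ 2 / lam ^ 2) := by
    have heq : {ω | lam ≤ |T m ω|} = {ω | lam ≤ |∑ i ∈ Finset.Ico a (a + m), ξ i ω|} := rfl
    rw [heq]
    refine (cheb μ ξ σ hmeas hindep hident hmean hsqint hvar _ hlam).trans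
      (ENNReal.ofReal_le_ofReal ?_)
    rw [Nat.card_Ico]
    have hc : a + m - a = m := by omega
    rw [hc]
  have hsum1 : ∑ j ∈ Finset.Icc 1 m, μ (A j) ≤ 1 := by
    rw [← measure_biUnion_finset hdisj fun j _ => hAmeas j]
    exact prob_le_one
  have hcompl : ∀ j ∈ Finset.Icc 1 m, A j ∩ (Bs j)ᶜ ⊆ {ω | lam ≤ |T m ω|} := by
    intro j hj ω hω
    obtain ⟨⟨h1, _⟩, h2⟩ := hω
    simp only [hBs, Set.mem_compl_iff, Set.mem_setOf_eq, not_le] at h2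
    simp only [Set.mem_setOf_eq]
    have habs : |T j ω| - |T m ω| ≤ |T m ω - T j ω| := by
      have := abs_sub_abs_le_abs_sub (T j ω) (T m ω)
      rw [abs_sub_comm] at this
      linarith
    linarith
  calc μ {ω | ∃ j, 1 ≤ j ∧ j ≤ m ∧ 3 * lam ≤ |∑ i ∈ Finset.Ico a (a + j), ξ i ω|}
      ≤ μ (⋃ j ∈ Finset.Icc 1 m, A j) := measure_mono hsub
    _ ≤ μ (⋃ j ∈ Finset.Icc 1 m, (A j ∩ Bs j)) + μ (⋃ j ∈ Finset.Icc 1 m, (A j ∩ (Bs j)ᶜ)) := by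
        refine (measure_mono ?_).trans (measure_union_le _ _)
        intro ω hω
        obtain ⟨j, hj, hmem⟩ := Set.mem_iUnion₂.mp hω
        by_cases hb : ω ∈ Bs j
        · exact Set.mem_union_left _ (Set.mem_iUnion₂.mpr ⟨j, hj, hmem, hb⟩)
        · exact Set.mem_union_right _ (Set.mem_iUnion₂.mpr ⟨j, hj, hmem, hb⟩)
    _ ≤ (∑ j ∈ Finset.Icc 1 m, μ (A j ∩ Bs j)) + μ {ω | lam ≤ |T m ω|} := by
        exact add_le_add (measure_biUnion_finset_le _ _)
          (measure_mono (Set.iUnion₂_subset hcompl))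
    _ ≤ (∑ j ∈ Finset.Icc 1 m, μ (A j) * ENNReal.ofReal (m * σ ^ 2 / (4 * lam ^ 2)))
        + ENNReal.ofReal (m * σ ^ 2 / lam ^ 2) := by
        gcongr with j hj
        rw [Finset.mem_Icc] at hj
        rw [key j hj.1 hj.2]
        exact mul_le_mul_right (hBsbound j hj.2) _
    _ ≤ 1 * ENNReal.ofReal (m * σ ^ 2 / (4 * lam ^ 2)) + ENNReal.ofReal (m * σ ^ 2 / lam ^ 2) := by
        rw [← Finset.sum_mul]
        gcongr
    _ ≤ ENNReal.ofReal (2 * m * σ ^ 2 / lam ^ 2) := by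
        rw [one_mul, ← ENNReal.ofReal_add (by positivity) (by positivity)]
        refine ENNReal.ofReal_le_ofReal ?_
        have h1 : m * σ ^ 2 / (4 * lam ^ 2) = (m * σ ^ 2 / lam ^ 2) / 4 := by
          ring
        have h2 : (0:ℝ) ≤ m * σ ^ 2 / lam ^ 2 := by positivity
        have h3 : 2 * m * σ ^ 2 / lam ^ 2 = 2 * (m * σ ^ 2 / lam ^ 2) := by ring
        rw [h1, h3]
        linarith

lemma pointwise (f : ℕ → ℝ) {γ δ : ℝ} {a n b k : ℕ}
    (hγ : 0 < γ) (hδpos : 0 < δ)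
    (ha1 : 1 ≤ a) (hak : a ≤ k) (hkb : k ≤ b) (han : a ≤ n) (hnb : n ≤ b)
    (hk0 : k ≠ 0) (hn0 : n ≠ 0)
    (hk2n : (n : ℝ) ≤ 2 * k) (hkn : |(n : ℝ) - k| < δ * n)
    (hc1 : ∀ j, 1 ≤ j → j ≤ b - a →
      |(∑ i ∈ Finset.range (a + j), f i) - ∑ i ∈ Finset.range a, f i|
        < 3 * (γ * Real.sqrt n / 12))
    (hc2 : ∀ j, 1 ≤ j → j ≤ n →
      |∑ i ∈ Finset.range j, f i| < 3 * (γ * Real.sqrt n / (9 * δ))) :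
    |runMax f k / Real.sqrt k - runMax f n / Real.sqrt n| ≤ γ := by
  have hnpos : (0 : ℝ) < n := by exact_mod_cast Nat.pos_of_ne_zero hn0
  have hkpos : (0 : ℝ) < k := by exact_mod_cast Nat.pos_of_ne_zero hk0
  set u := Real.sqrt k with hu
  set v := Real.sqrt n with hv
  have hupos : 0 < u := Real.sqrt_pos.mpr hkpos
  have hvpos : 0 < v := Real.sqrt_pos.mpr hnpos
  have hu2 : u ^ 2 = k := Real.sq_sqrt hkpos.le
  have hv2 : v ^ 2 = n := Real.sq_sqrt hnpos.le
  set lam1 := γ * v / 12 with hlam1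
  set lam2 := γ * v / (9 * δ) with hlam2
  have h3l1 : (0 : ℝ) ≤ 3 * lam1 := by positivity
  have hb0 : b ≠ 0 := by omega
  have ha0 : a ≠ 0 := by omega
  -- C1 : M b - M a ≤ 3 lam1
  have hC1 : runMax f b - runMax f a ≤ 3 * lam1 := by
    obtain ⟨j₀, hj1, hj2, hj3⟩ := runMax_exists f hb0
    by_cases hja : j₀ ≤ a
    · have h := le_runMax f hj1 hja
      rw [hj3]; linarith
    · push_neg at hja
      have hsa := le_runMax f (show 1 ≤ a from ha1) (le_refl a)
      have hjeq : a + (j₀ - a) = j₀ := by omega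
      have h := hc1 (j₀ - a) (by omega) (by omega)
      rw [hjeq] at h
      have habs := (abs_lt.mp h).2
      rw [hj3]; linarith
  -- C2 : |M n| ≤ 3 lam2
  have hC2 : |runMax f n| ≤ 3 * lam2 := by
    obtain ⟨j₁, hj1, hj2, hj3⟩ := runMax_exists f hn0
    rw [hj3]; exact (hc2 j₁ hj1 hj2).le
  have hMk1 := runMax_mono f ha0 hak
  have hMk2 := runMax_mono f hk0 hkb
  have hMn1 := runMax_mono f ha0 han
  have hMn2 := runMax_mono f hn0 hnb
  have hC4 : |runMax f k - runMax f n| ≤ 3 * lam1 :=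
    abs_le.mpr ⟨by linarith, by linarith⟩
  -- sqrt estimates
  have hvu : v ≤ Real.sqrt 2 * u := by
    calc v ≤ Real.sqrt (2 * k) := Real.sqrt_le_sqrt hk2n
      _ = Real.sqrt 2 * u := Real.sqrt_mul (by norm_num) _
  have hvu2 : |v - u| ≤ δ * v := by
    have hprod : |v - u| * (v + u) < δ * (v * v) := by
      have h1 : |v - u| * (v + u) = |(n : ℝ) - k| := by
        rw [show v + u = |v + u| from (abs_of_pos (by linarith)).symm, ← abs_mul]
        rw [show (v - u) * (v + u) = v ^ 2 - u ^ 2 by ring, hv2, hu2]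
      have h2 : δ * (v * v) = δ * n := by rw [show v * v = v ^ 2 by ring, hv2]
      rw [h1, h2]; exact hkn
    by_contra hcc
    push_neg at hcc
    have h1 : δ * v * (v + u) < |v - u| * (v + u) :=
      mul_lt_mul_of_pos_right hcc (by linarith)
    nlinarith [mul_pos (mul_pos hδpos hvpos) hupos, h1, hprod]
  -- main estimate
  have hid : runMax f k / u - runMax f n / v
      = (runMax f k - runMax f n) / u + runMax f n * (v - u) / (u * v) := by
    field_simp
    ring
  have huv : 0 < u * v := mul_pos hupos hvpos
  have h1 : |(runMax f k - runMax f n) / u| ≤ 3 * lam1 / u := by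
    rw [abs_div, abs_of_pos hupos]
    exact (div_le_div_iff_of_pos_right hupos).mpr hC4
  have h2 : |runMax f n * (v - u) / (u * v)| ≤ (3 * lam2) * (δ * v) / (u * v) := by
    rw [abs_div, abs_of_pos huv, abs_mul]
    refine (div_le_div_iff_of_pos_right huv).mpr ?_
    exact mul_le_mul hC2 hvu2 (abs_nonneg _) (by positivity)
  calc |runMax f k / u - runMax f n / v|
      ≤ |(runMax f k - runMax f n) / u| + |runMax f n * (v - u) / (u * v)| := by
        rw [hid]; exact abs_add_le _ _
    _ ≤ 3 * lam1 / u + (3 * lam2) * (δ * v) / (u * v) := add_le_add h1 h2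
    _ = (7 / 12) * γ * (v / u) := by
        have hune : u ≠ 0 := ne_of_gt hupos
        have hvne : v ≠ 0 := ne_of_gt hvpos
        have hδne : δ ≠ 0 := ne_of_gt hδpos
        have e1 : 3 * lam1 / u = (γ / 4) * (v / u) := by rw [hlam1]; ring
        have e2 : (3 * lam2) * (δ * v) / (u * v) = (γ / 3) * (v / u) := by
          rw [hlam2]
          field_simp
          ring
        rw [e1, e2]; ring
    _ ≤ (7 / 12) * γ * Real.sqrt 2 := by
        have hdiv : v / u ≤ Real.sqrt 2 := (div_le_iff₀ hupos).mpr (by linarith)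
        exact mul_le_mul_of_nonneg_left hdiv (by positivity)
    _ ≤ γ := by
        have hs2 : Real.sqrt 2 ≤ 1.5 := by
          rw [show (1.5 : ℝ) = Real.sqrt (1.5 ^ 2) from (Real.sqrt_sq (by norm_num)).symm]
          exact Real.sqrt_le_sqrt (by norm_num)
        have h3 := mul_le_mul_of_nonneg_left hs2
          (show (0:ℝ) ≤ (7 / 12) * γ by positivity)
        linarith

lemma arith1 {γ η σ δ T N : ℝ} (hγ : 0 < γ) (hη : 0 < η) (hσ2 : 0 < σ ^ 2) (hδpos : 0 < δ)
    (hδη : δ * (4000 * σ ^ 2) ≤ γ ^ 2 * η) (hN : 0 < N) (hT : T ≤ δ * N + 1)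
    (hnσ : 4000 * σ ^ 2 < γ ^ 2 * η * N) :
    2 * (2 * T) * σ ^ 2 < 1152 * η / 4000 * (γ ^ 2 * N / 144) := by
  nlinarith [mul_le_mul_of_nonneg_right hδη hN.le,
    mul_le_mul_of_nonneg_right hT (by positivity : (0:ℝ) ≤ 4 * σ ^ 2)]

lemma arith2 {γ η σ δ N : ℝ} (hγ : 0 < γ) (hη : 0 < η) (hσ2 : 0 < σ ^ 2) (hδpos : 0 < δ)
    (hδ1 : δ ≤ 1) (hδη : δ * (4000 * σ ^ 2) ≤ γ ^ 2 * η) (hN : 0 < N) :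
    2 * N * σ ^ 2 ≤ 162 * η / 4000 * (γ ^ 2 * N / (81 * δ ^ 2)) := by
  have hδsq : δ ^ 2 ≤ δ := by nlinarith [mul_nonneg hδpos.le (sub_nonneg.mpr hδ1)]
  have h1 : δ ^ 2 * (4000 * σ ^ 2) ≤ γ ^ 2 * η :=
    le_trans (mul_le_mul_of_nonneg_right hδsq (by positivity : (0:ℝ) ≤ 4000 * σ ^ 2)) hδη
  have heq : 162 * η / 4000 * (γ ^ 2 * N / (81 * δ ^ 2))
      = (162 * (η * (γ ^ 2 * N))) / (4000 * (81 * δ ^ 2)) := by ring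
  rw [heq, le_div_iff₀ (by positivity)]
  nlinarith [mul_le_mul_of_nonneg_right h1 hN.le]


/-- **Anscombe's condition for the running maximum.**
Let `(ξ_k)_{k≥1}` be i.i.d. real random variables with `E[ξ₁] = 0` and
`Var(ξ₁) = σ² ∈ (0, ∞)`, and let `M_n = max_{1≤k≤n} S_k` with `S_k = ξ_1 + ⋯ + ξ_k`.
Then `(M_n/√n)` is uniformly continuous in probability: for every `γ > 0` and `η > 0`
there exist `δ > 0` and `n₀` such that for all `n ≥ n₀`,
`P[ max_{k : |k−n| < δn} |M_k/√k − M_n/√n| > γ ] < η`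
(the event being expressed by an existential over `k`). -/
theorem stmt8 {Ω : Type*} [MeasurableSpace Ω] (μ : Measure Ω) [IsProbabilityMeasure μ]
    (ξ : ℕ → Ω → ℝ) (σ : ℝ) (hσ : 0 < σ)
    (hmeas : ∀ k, Measurable (ξ k))
    (hindep : iIndepFun ξ μ)
    (hident : ∀ k, IdentDistrib (ξ k) (ξ 0) μ μ)
    (hint : Integrable (ξ 0) μ)
    (hmean : ∫ ω, ξ 0 ω ∂μ = 0)
    (hsqint : Integrable (fun ω => (ξ 0 ω) ^ 2) μ)
    (hvar : ∫ ω, (ξ 0 ω) ^ 2 ∂μ = σ ^ 2) :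
    ∀ γ > (0 : ℝ), ∀ η > (0 : ℝ), ∃ δ > (0 : ℝ), ∃ n₀ : ℕ, ∀ n ≥ n₀,
      μ {ω | ∃ k : ℕ, |(k : ℝ) - (n : ℝ)| < δ * n ∧
          γ < |runMax (fun i => ξ i ω) k / Real.sqrt k
                - runMax (fun i => ξ i ω) n / Real.sqrt n|}
        < ENNReal.ofReal η := by
  intro γ hγ η hη
  have hσ2 : (0 : ℝ) < σ ^ 2 := by positivity
  have hγη : (0 : ℝ) < γ ^ 2 * η := by positivity
  refine ⟨min (1 / 2) (γ ^ 2 * η / (4000 * σ ^ 2)), lt_min (by norm_num) (by positivity),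
    max 4 (Nat.ceil (4000 * σ ^ 2 / (γ ^ 2 * η)) + 1), fun n hn => ?_⟩
  set δ : ℝ := min (1 / 2) (γ ^ 2 * η / (4000 * σ ^ 2)) with hδdef
  have hδpos : 0 < δ := lt_min (by norm_num) (by positivity)
  have hδhalf : δ ≤ 1 / 2 := min_le_left _ _
  have hδη : δ * (4000 * σ ^ 2) ≤ γ ^ 2 * η := by
    have h := min_le_right (1 / 2 : ℝ) (γ ^ 2 * η / (4000 * σ ^ 2))
    rw [← hδdef] at h
    exact (le_div_iff₀ (by positivity)).mp h
  have hn4 : 4 ≤ n := le_trans (le_max_left _ _) hn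
  have hnR : (4 : ℝ) ≤ (n : ℝ) := by exact_mod_cast hn4
  have hnpos : (0 : ℝ) < n := by linarith
  have hnceil : 4000 * σ ^ 2 / (γ ^ 2 * η) < (n : ℝ) := by
    have h1 : Nat.ceil (4000 * σ ^ 2 / (γ ^ 2 * η)) + 1 ≤ n := le_trans (le_max_right _ _) hn
    have h2 : (4000 * σ ^ 2 / (γ ^ 2 * η)) ≤ (Nat.ceil (4000 * σ ^ 2 / (γ ^ 2 * η)) : ℝ) :=
      Nat.le_ceil _
    have h3 : ((Nat.ceil (4000 * σ ^ 2 / (γ ^ 2 * η)) : ℕ) : ℝ) + 1 ≤ (n : ℝ) := by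
      exact_mod_cast h1
    linarith
  have hnσ : 4000 * σ ^ 2 < γ ^ 2 * η * n := by
    have := (div_lt_iff₀ hγη).mp hnceil
    linarith
  set t : ℕ := Nat.floor (δ * n) + 1 with htdef
  have hfl := Nat.floor_le (show (0 : ℝ) ≤ δ * n by positivity)
  have htle : (t : ℝ) ≤ δ * n + 1 := by
    rw [htdef]; push_cast; linarith
  have htgt : δ * n < (t : ℝ) := by
    rw [htdef]; push_cast; exact Nat.lt_floor_add_one _
  have hδn2 : δ * n ≤ n / 2 := by nlinarith
  have htn : t + 1 ≤ n := by
    have h : (t : ℝ) + 1 ≤ (n : ℝ) := by linarith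
    exact_mod_cast h
  set a : ℕ := n - t with hadef
  set b : ℕ := n + t with hbdef
  have ha1 : 1 ≤ a := by omega
  have han : a ≤ n := by omega
  have hnb : n ≤ b := by omega
  have hba : b - a = 2 * t := by omega
  have haR : (a : ℝ) = (n : ℝ) - (t : ℝ) := by
    rw [hadef, Nat.cast_sub (by omega : t ≤ n)]
  have hbR : (b : ℝ) = (n : ℝ) + (t : ℝ) := by rw [hbdef]; push_cast; ring
  have hvpos : 0 < Real.sqrt n := Real.sqrt_pos.mpr hnpos
  have hv2 : Real.sqrt n ^ 2 = n := Real.sq_sqrt hnpos.le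
  have hlam1 : (0 : ℝ) < γ * Real.sqrt n / 12 := by positivity
  have hlam2 : (0 : ℝ) < γ * Real.sqrt n / (9 * δ) :=
    div_pos (mul_pos hγ hvpos) (mul_pos (by norm_num) hδpos)
  set E1 : Set Ω := {ω | ∃ j, 1 ≤ j ∧ j ≤ b - a ∧
    3 * (γ * Real.sqrt n / 12) ≤ |∑ i ∈ Finset.Ico a (a + j), ξ i ω|} with hE1
  set E2 : Set Ω := {ω | ∃ j, 1 ≤ j ∧ j ≤ n ∧
    3 * (γ * Real.sqrt n / (9 * δ)) ≤ |∑ i ∈ Finset.Ico 0 (0 + j), ξ i ω|} with hE2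
  have hincl : {ω | ∃ k : ℕ, |(k : ℝ) - (n : ℝ)| < δ * n ∧
      γ < |runMax (fun i => ξ i ω) k / Real.sqrt k
            - runMax (fun i => ξ i ω) n / Real.sqrt n|} ⊆ E1 ∪ E2 := by
    intro ω hω
    obtain ⟨k, hk1, hk2⟩ := hω
    by_contra hcon
    rw [Set.mem_union] at hcon
    push_neg at hcon
    obtain ⟨hc1', hc2'⟩ := hcon
    simp only [hE1, Set.mem_setOf_eq, not_exists, not_and, not_le] at hc1'
    simp only [hE2, Set.mem_setOf_eq, not_exists, not_and, not_le] at hc2'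
    have hc1 : ∀ j, 1 ≤ j → j ≤ b - a →
        |(∑ i ∈ Finset.range (a + j), ξ i ω) - ∑ i ∈ Finset.range a, ξ i ω|
          < 3 * (γ * Real.sqrt n / 12) := by
      intro j h1 h2
      have h := hc1' j h1 h2
      rwa [Finset.sum_Ico_eq_sub (fun i => ξ i ω) (by omega : a ≤ a + j)] at h
    have hc2 : ∀ j, 1 ≤ j → j ≤ n →
        |∑ i ∈ Finset.range j, ξ i ω| < 3 * (γ * Real.sqrt n / (9 * δ)) := by
      intro j h1 h2
      have h := hc2' j h1 h2
      rwa [zero_add, ← Finset.range_eq_Ico] at h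
    rw [abs_sub_lt_iff] at hk1
    obtain ⟨hk1a, hk1b⟩ := hk1
    have hkn2 : (n : ℝ) / 2 < k := by linarith
    have hk0 : k ≠ 0 := by
      intro h0
      rw [h0, Nat.cast_zero] at hkn2
      linarith
    have hak : a ≤ k := by
      have h : (a : ℝ) < k := by rw [haR]; linarith
      exact_mod_cast h.le
    have hkb : k ≤ b := by
      have h : (k : ℝ) < b := by rw [hbR]; linarith
      exact_mod_cast h.le
    have hfin := pointwise (fun i => ξ i ω) hγ hδpos ha1 hak hkb han hnb hk0 (by omega)
      (by linarith) (abs_sub_lt_iff.mpr ⟨by linarith, by linarith⟩) hc1 hc2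
    exact absurd hk2 (not_lt.mpr hfin)
  clear_value δ t a b E1 E2
  have hb1 := etemadi μ ξ σ hmeas hindep hident hmean hsqint hvar a (b - a) hlam1
  rw [← hE1] at hb1
  have hb2 := etemadi μ ξ σ hmeas hindep hident hmean hsqint hvar 0 n hlam2
  rw [← hE2] at hb2
  have hx1 : 2 * ((b - a : ℕ) : ℝ) * σ ^ 2 / (γ * Real.sqrt n / 12) ^ 2 < 1152 * η / 4000 := by
    have hbaR : ((b - a : ℕ) : ℝ) = 2 * t := by rw [hba]; push_cast; ring
    have hl : (γ * Real.sqrt n / 12) ^ 2 = γ ^ 2 * n / 144 := by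
      rw [div_pow, mul_pow, hv2]; ring
    rw [hbaR, hl, div_lt_iff₀ (by positivity : (0:ℝ) < γ ^ 2 * n / 144)]
    exact arith1 hγ hη hσ2 hδpos hδη hnpos htle hnσ
  have hx2 : 2 * (n : ℝ) * σ ^ 2 / (γ * Real.sqrt n / (9 * δ)) ^ 2 ≤ 162 * η / 4000 := by
    have hl : (γ * Real.sqrt n / (9 * δ)) ^ 2 = γ ^ 2 * n / (81 * δ ^ 2) := by
      rw [div_pow, mul_pow, hv2]; ring
    rw [hl, div_le_iff₀ (by positivity : (0:ℝ) < γ ^ 2 * n / (81 * δ ^ 2))]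
    exact arith2 hγ hη hσ2 hδpos (by linarith) hδη hnpos
  calc μ {ω | ∃ k : ℕ, |(k : ℝ) - (n : ℝ)| < δ * n ∧
          γ < |runMax (fun i => ξ i ω) k / Real.sqrt k
                - runMax (fun i => ξ i ω) n / Real.sqrt n|}
      ≤ μ (E1 ∪ E2) := measure_mono hincl
    _ ≤ μ E1 + μ E2 := measure_union_le _ _
    _ ≤ ENNReal.ofReal (2 * (b - a : ℕ) * σ ^ 2 / (γ * Real.sqrt n / 12) ^ 2)
        + ENNReal.ofReal (2 * n * σ ^ 2 / (γ * Real.sqrt n / (9 * δ)) ^ 2) :=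
        add_le_add hb1 hb2
    _ = ENNReal.ofReal (2 * (b - a : ℕ) * σ ^ 2 / (γ * Real.sqrt n / 12) ^ 2
        + 2 * n * σ ^ 2 / (γ * Real.sqrt n / (9 * δ)) ^ 2) :=
        (ENNReal.ofReal_add (by positivity) (by positivity)).symm
    _ < ENNReal.ofReal η := by
        rw [ENNReal.ofReal_lt_ofReal_iff hη]
        linarith
end

section
/- Let ((ξ_k, L_k))_{k≥1} be an i.i.d. sequence of pairs of real random variables with E[ξ₁] = 0, Var(ξ₁) = σ² ∈ (0, ∞), L_k > 0 a.s. and E[L₁] < ∞. Define τ_0 = 0, τ_n = L_1 + ⋯ + L_n, g_t = sup{n ≥ 0 : τ_n ≤ t}, S_k = ξ_1 + ⋯ + ξ_k and M_n = max_{1≤k≤n} S_k (with M_0 := 0). Let ε : (0,∞) → (0,∞) be an increasing function with ε(t) → ∞ and ε(t)/t → 0 as t → ∞. Then M_{g_t}/√t − M_{g_{t−ε(t)}}/√(t−ε(t)) → 0 in probability as t → ∞. -/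
open MeasureTheory ProbabilityTheory Filter Topology

set_option maxHeartbeats 2000000

section Kolm

variable {Ω : Type*} [MeasurableSpace Ω] {μ : Measure Ω} [IsProbabilityMeasure μ]

lemma aux_integrable_mul {f g : Ω → ℝ} (hf : MemLp f 2 μ) (hg : MemLp g 2 μ) :
    Integrable (fun ω => f ω * g ω) μ := by
  have hf2 : Integrable (fun ω => f ω ^ 2) μ :=
    (memLp_two_iff_integrable_sq hf.aestronglyMeasurable).mp hf
  have hg2 : Integrable (fun ω => g ω ^ 2) μ :=
    (memLp_two_iff_integrable_sq hg.aestronglyMeasurable).mp hg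
  refine Integrable.mono (hf2.add hg2) (hf.aestronglyMeasurable.mul hg.aestronglyMeasurable) ?_
  filter_upwards with ω
  simp only [Real.norm_eq_abs]
  have h1 : |f ω * g ω| ≤ f ω ^ 2 + g ω ^ 2 := by
    rw [abs_mul]
    nlinarith [sq_nonneg (|f ω| - |g ω|), sq_abs (f ω), sq_abs (g ω), abs_nonneg (f ω),
      abs_nonneg (g ω)]
  calc |f ω * g ω| ≤ f ω ^ 2 + g ω ^ 2 := h1
    _ ≤ |f ω ^ 2 + g ω ^ 2| := le_abs_self _

/-- Kolmogorov's maximal inequality for blocks of an i.i.d. mean-zero sequence. -/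
lemma kolmogorov_max_ineq (ξ : ℕ → Ω → ℝ) (hm : ∀ k, Measurable (ξ k))
    (hind : iIndepFun ξ μ)
    (hid : ∀ k, IdentDistrib (ξ k) (ξ 0) μ μ)
    (hmean : ∫ ω, ξ 0 ω ∂μ = 0) (hsq : Integrable (fun ω => ξ 0 ω ^ 2) μ)
    (a n : ℕ) (lam : ℝ) (hlam : 0 < lam) :
    μ {ω | ∃ m, 1 ≤ m ∧ m ≤ n ∧ lam ≤ |∑ i ∈ Finset.Ico a (a + m), ξ i ω|}
      ≤ ENNReal.ofReal (n * (∫ ω, ξ 0 ω ^ 2 ∂μ) / lam ^ 2) := by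
  classical
  set V : ℝ := ∫ ω, ξ 0 ω ^ 2 ∂μ with hV
  have hVnn : 0 ≤ V := integral_nonneg fun ω => sq_nonneg _
  -- basic facts about the ξ i
  have hml2 : ∀ i, MemLp (ξ i) 2 μ := by
    intro i
    have h0 : MemLp (ξ 0) 2 μ := (memLp_two_iff_integrable_sq (hm 0).aestronglyMeasurable).mpr hsq
    exact (hid i).symm.memLp_snd h0
  have hint : ∀ i, Integrable (ξ i) μ := fun i => ((hid i).integrable_iff).mpr
    ((hid 0).integrable_iff.mp ((hml2 0).integrable one_le_two))
  have hintegral : ∀ i, ∫ ω, ξ i ω ∂μ = 0 := fun i => by rw [(hid i).integral_eq, hmean]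
  have hsqint : ∀ i, ∫ ω, ξ i ω ^ 2 ∂μ = V := fun i => by
    rw [hV]
    exact ((hid i).comp (measurable_id.pow_const 2)).integral_eq
  -- the partial sums of the block
  set T : ℕ → Ω → ℝ := fun m ω => ∑ i ∈ Finset.Ico a (a + m), ξ i ω with hT
  have hTmeas : ∀ m, Measurable (T m) := fun m => Finset.measurable_sum _ fun i _ => hm i
  have hTml2 : ∀ m, MemLp (T m) 2 μ := fun m => memLp_finsetSum _ fun i _ => hml2 i
  have hTint : ∀ m, Integrable (T m) μ := fun m => (hTml2 m).integrable one_le_two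
  have hTsq_int : ∀ m, Integrable (fun ω => T m ω ^ 2) μ := fun m =>
    (memLp_two_iff_integrable_sq (hTmeas m).aestronglyMeasurable).mp (hTml2 m)
  -- ∫ (T n)^2 = n * V
  have hTvar : ∫ ω, T n ω ^ 2 ∂μ = n * V := by
    have hvs : variance (∑ i ∈ Finset.Ico a (a + n), ξ i) μ
        = ∑ i ∈ Finset.Ico a (a + n), variance (ξ i) μ :=
      IndepFun.variance_sum (fun i _ => hml2 i)
        (fun i _ j _ hij => hind.indepFun hij)
    have hsum : (∑ i ∈ Finset.Ico a (a + n), ξ i) = T n := by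
      funext ω; simp [hT, Finset.sum_apply]
    have hvi : ∀ i, variance (ξ i) μ = V := by
      intro i
      rw [variance_eq_sub (hml2 i), hintegral i]
      simp [hsqint i]
    have hvT : variance (T n) μ = n * V := by
      rw [← hsum, hvs]
      simp only [hvi, Finset.sum_const, Nat.card_Ico, nsmul_eq_mul, Nat.add_sub_cancel_left]
    have := variance_eq_sub (hTml2 n)
    rw [hvT] at this
    have hTn0 : ∫ ω, T n ω ∂μ = 0 := by
      rw [hT]
      simp only
      rw [integral_finset_sum _ fun i _ => hint i]
      simp [hintegral]
    simp only [Pi.pow_apply] at this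
    rw [hTn0] at this
    linarith
  -- the disjoint first-crossing events
  set A : ℕ → Set Ω := fun k =>
    {ω | (∀ j < k, |T (j + 1) ω| < lam) ∧ lam ≤ |T (k + 1) ω|} with hA
  have hAmeas : ∀ k, MeasurableSet (A k) := by
    intro k
    have : A k = (⋂ j ∈ Set.Iio k, {ω | |T (j + 1) ω| < lam}) ∩ {ω | lam ≤ |T (k + 1) ω|} := by
      ext ω; simp [hA]
    rw [this]
    exact (MeasurableSet.biInter (Set.to_countable _) fun j _ =>
      measurableSet_lt ((hTmeas (j+1)).abs) measurable_const).inter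
      (measurableSet_le measurable_const ((hTmeas (k+1)).abs))
  -- the bad set is contained in the union
  have hsub : {ω | ∃ m, 1 ≤ m ∧ m ≤ n ∧ lam ≤ |T m ω|} ⊆ ⋃ k ∈ Finset.range n, A k := by
    intro ω hω
    obtain ⟨m, hm1, hmn, hmlam⟩ := hω
    have hex : ∃ j, j < n ∧ lam ≤ |T (j + 1) ω| := ⟨m - 1, by omega, by
      have : m - 1 + 1 = m := by omega
      rw [this]; exact hmlam⟩
    set k := Nat.find hex with hk
    obtain ⟨hkn, hklam⟩ := Nat.find_spec hex
    refine Set.mem_biUnion (Finset.mem_range.mpr hkn) ?_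
    refine ⟨fun j hj => ?_, hklam⟩
    have := Nat.find_min hex hj
    push_neg at this
    exact this (by omega)
  -- key step : lam ^ 2 * μ (A k) ≤ ∫_{A k} (T n)^2
  have hkey : ∀ k, k < n → lam ^ 2 * (μ (A k)).toReal ≤ ∫ ω in A k, T n ω ^ 2 ∂μ := by
    intro k hkn
    set Y : Ω → ℝ := fun ω => ∑ i ∈ Finset.Ico (a + (k + 1)) (a + n), ξ i ω with hY
    have hYml2 : MemLp Y 2 μ := memLp_finsetSum _ fun i _ => hml2 i
    have hYint : Integrable Y μ := hYml2.integrable one_le_two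
    have hTY : ∀ ω, T n ω = T (k + 1) ω + Y ω := by
      intro ω
      rw [hT, hY]
      simp only
      rw [Finset.sum_Ico_consecutive]
      · omega
      · omega
    -- independence of the indicator-weighted first block and the second block
    set X : Ω → ℝ := fun ω => Set.indicator (A k) (T (k + 1)) ω with hX
    have hXint : Integrable X μ := (hTint (k + 1)).indicator (hAmeas k)
    have hindXY : IndepFun X Y μ := by
      set S₁ : Finset ℕ := Finset.Ico a (a + (k + 1)) with hS₁
      set S₂ : Finset ℕ := Finset.Ico (a + (k + 1)) (a + n) with hS₂
      have hdisj : Disjoint S₁ S₂ := by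
        rw [Finset.disjoint_left]
        intro x hx1 hx2
        simp only [hS₁, hS₂, Finset.mem_Ico] at hx1 hx2
        omega
      have hbase := hind.indepFun_finset S₁ S₂ hdisj hm
      -- the coordinate-sum functions
      set sf : ℕ → ((i : S₁) → ℝ) → ℝ := fun m v =>
        ∑ i ∈ S₁.attach, if (i : ℕ) < a + m then v i else 0 with hsf
      have hsfmeas : ∀ m, Measurable (sf m) := by
        intro m
        apply Finset.measurable_sum
        intro i _
        by_cases h : (i : ℕ) < a + m
        · simpa [h] using measurable_pi_apply i
        · simp [h]
      have hsfval : ∀ m, m ≤ k + 1 → ∀ ω, sf m (fun i : S₁ => ξ i ω) = T m ω := by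
        intro m hmk ω
        rw [hsf, hT]
        simp only
        rw [Finset.sum_attach S₁ (fun i => if i < a + m then ξ i ω else 0),
          ← Finset.sum_filter]
        apply Finset.sum_congr _ fun _ _ => rfl
        ext x
        simp only [Finset.mem_filter, Finset.mem_Ico, hS₁]
        omega
      -- now build X and Y as compositions
      set phi : ((i : S₁) → ℝ) → ℝ := fun v =>
        Set.indicator {v | (∀ j < k, |sf (j + 1) v| < lam) ∧ lam ≤ |sf (k + 1) v|}
          (sf (k + 1)) v with hphi
      set psi : ((i : S₂) → ℝ) → ℝ := fun w => ∑ i ∈ S₂.attach, w i with hpsi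
      have hphimeas : Measurable phi := by
        apply Measurable.indicator (hsfmeas (k + 1))
        have : {v : (i : S₁) → ℝ | (∀ j < k, |sf (j + 1) v| < lam) ∧ lam ≤ |sf (k + 1) v|}
            = (⋂ j ∈ Set.Iio k, {v | |sf (j + 1) v| < lam}) ∩ {v | lam ≤ |sf (k + 1) v|} := by
          ext v; simp
        rw [this]
        exact (MeasurableSet.biInter (Set.to_countable _) fun j _ =>
          measurableSet_lt ((hsfmeas (j + 1)).abs) measurable_const).inter
          (measurableSet_le measurable_const ((hsfmeas (k + 1)).abs))
      have hpsimeas : Measurable psi :=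
        Finset.measurable_sum _ fun i _ => measurable_pi_apply i
      have hXeq : X = phi ∘ (fun ω (i : S₁) => ξ i ω) := by
        funext ω
        simp only [hX, hphi, Function.comp_apply]
        have hmem : (fun i : S₁ => ξ i ω) ∈
            {v : (i : S₁) → ℝ | (∀ j < k, |sf (j + 1) v| < lam) ∧ lam ≤ |sf (k + 1) v|}
            ↔ ω ∈ A k := by
          simp only [Set.mem_setOf_eq, hA]
          constructor
          · rintro ⟨h1, h2⟩
            refine ⟨fun j hj => ?_, ?_⟩
            · have := h1 j hj; rwa [hsfval (j + 1) (by omega) ω] at this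
            · rwa [hsfval (k + 1) le_rfl ω] at h2
          · rintro ⟨h1, h2⟩
            refine ⟨fun j hj => ?_, ?_⟩
            · rw [hsfval (j + 1) (by omega) ω]; exact h1 j hj
            · rwa [hsfval (k + 1) le_rfl ω]
        by_cases hω : ω ∈ A k
        · rw [Set.indicator_of_mem hω, Set.indicator_of_mem (hmem.mpr hω),
            hsfval (k + 1) le_rfl ω]
        · rw [Set.indicator_of_notMem hω,
            Set.indicator_of_notMem (fun hc => hω (hmem.mp hc))]
      have hYeq : Y = psi ∘ (fun ω (i : S₂) => ξ i ω) := by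
        funext ω
        simp only [hY, hpsi, Function.comp_apply]
        rw [Finset.sum_attach S₂ (fun i => ξ i ω)]
      rw [hXeq, hYeq]
      exact hbase.comp hphimeas hpsimeas
    -- the cross term vanishes
    have hEY : ∫ ω, Y ω ∂μ = 0 := by
      rw [hY]
      simp only
      rw [integral_finset_sum _ fun i _ => hint i]
      simp [hintegral]
    have hEXY : ∫ ω, X ω * Y ω ∂μ = 0 := by
      have heq : (fun ω => X ω * Y ω) = X * Y := rfl
      rw [heq, hindXY.integral_mul_eq_mul_integral hXint.aestronglyMeasurable hYint.aestronglyMeasurable, hEY, mul_zero]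
    -- lower bound on the set integral
    have hTkY_int : Integrable (fun ω => T (k + 1) ω * Y ω) μ :=
      aux_integrable_mul (hTml2 (k + 1)) hYml2
    have h1 : ∫ ω in A k, T (k + 1) ω ^ 2 ∂μ + 2 * ∫ ω in A k, T (k + 1) ω * Y ω ∂μ
        ≤ ∫ ω in A k, T n ω ^ 2 ∂μ := by
      rw [← integral_const_mul,
        ← integral_add ((hTsq_int (k + 1)).integrableOn) ((hTkY_int.integrableOn).const_mul 2)]
      apply setIntegral_mono_on
      · exact ((hTsq_int (k + 1)).integrableOn).add ((hTkY_int.integrableOn).const_mul 2)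
      · exact (hTsq_int n).integrableOn
      · exact hAmeas k
      · intro ω _
        rw [hTY ω]
        nlinarith [sq_nonneg (Y ω)]
    have h2 : ∫ ω in A k, T (k + 1) ω * Y ω ∂μ = 0 := by
      rw [← integral_indicator (hAmeas k)]
      rw [← hEXY]
      apply integral_congr_ae
      filter_upwards with ω
      by_cases hω : ω ∈ A k
      · simp [Set.indicator_of_mem hω, hX]
      · simp [Set.indicator_of_notMem hω, hX]
    have h3 : lam ^ 2 * (μ (A k)).toReal ≤ ∫ ω in A k, T (k + 1) ω ^ 2 ∂μ := by
      rw [mul_comm, ← smul_eq_mul, ← measureReal_def]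
      apply setIntegral_ge_of_const_le (hAmeas k) (measure_ne_top μ _)
      · intro ω hω
        have := hω.2
        calc lam ^ 2 ≤ |T (k + 1) ω| ^ 2 := pow_le_pow_left₀ hlam.le this 2
          _ = T (k + 1) ω ^ 2 := sq_abs _
      · exact (hTsq_int (k + 1)).integrableOn
    linarith
  -- sum the inequalities
  have hd : ∀ i j, i < j → Disjoint (A i) (A j) := by
    intro i j h
    rw [Set.disjoint_left]
    intro ω hωi hωj
    exact absurd hωi.2 (not_le.mpr (hωj.1 i h))
  have hdisj : (↑(Finset.range n) : Set ℕ).Pairwise (Function.onFun Disjoint A) := by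
    intro i _ j _ hij
    rcases lt_or_gt_of_ne hij with h | h
    · exact hd i j h
    · exact (hd j i h).symm
  have hsum_le : lam ^ 2 * (μ (⋃ k ∈ Finset.range n, A k)).toReal ≤ n * V := by
    have hmeq : (μ (⋃ k ∈ Finset.range n, A k)).toReal
        = ∑ k ∈ Finset.range n, (μ (A k)).toReal := by
      rw [measure_biUnion_finset hdisj fun k _ => hAmeas k]
      rw [ENNReal.toReal_sum fun k _ => measure_ne_top μ _]
    rw [hmeq, Finset.mul_sum]
    calc ∑ k ∈ Finset.range n, lam ^ 2 * (μ (A k)).toReal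
        ≤ ∑ k ∈ Finset.range n, ∫ ω in A k, T n ω ^ 2 ∂μ :=
          Finset.sum_le_sum fun k hk => hkey k (Finset.mem_range.mp hk)
      _ = ∫ ω in ⋃ k ∈ Finset.range n, A k, T n ω ^ 2 ∂μ :=
          (integral_biUnion_finset _ (fun k _ => hAmeas k) hdisj
            fun k _ => (hTsq_int n).integrableOn).symm
      _ ≤ ∫ ω, T n ω ^ 2 ∂μ :=
          setIntegral_le_integral (hTsq_int n) (by filter_upwards with ω using sq_nonneg _)
      _ = n * V := hTvar
  -- conclude
  calc μ {ω | ∃ m, 1 ≤ m ∧ m ≤ n ∧ lam ≤ |∑ i ∈ Finset.Ico a (a + m), ξ i ω|}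
      ≤ μ (⋃ k ∈ Finset.range n, A k) := measure_mono hsub
    _ ≤ ENNReal.ofReal (n * V / lam ^ 2) := by
        rw [← ENNReal.ofReal_toReal (measure_ne_top μ (⋃ k ∈ Finset.range n, A k))]
        apply ENNReal.ofReal_le_ofReal
        rw [le_div_iff₀ (by positivity)]
        linarith [hsum_le]


end Kolm

section Renewal

variable {L : ℕ → ℝ} {ℓ : ℝ}

lemma tau_tendsto_atTop (hℓ : 0 < ℓ)
    (hτ : Tendsto (fun n : ℕ => (∑ k ∈ Finset.range n, L k) / n) atTop (𝓝 ℓ)) :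
    Tendsto (fun n : ℕ => ∑ k ∈ Finset.range n, L k) atTop atTop := by
  have h2 : ∀ᶠ n : ℕ in atTop, ℓ / 2 < (∑ k ∈ Finset.range n, L k) / n :=
    hτ.eventually (eventually_gt_nhds (by linarith))
  have h3 : ∀ᶠ n : ℕ in atTop, ℓ / 2 * n ≤ ∑ k ∈ Finset.range n, L k := by
    filter_upwards [h2, eventually_gt_atTop 0] with n hn hn0
    have hn0' : (0:ℝ) < n := by exact_mod_cast hn0
    rw [lt_div_iff₀ hn0'] at hn
    exact hn.le
  apply tendsto_atTop_mono' _ h3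
  exact (tendsto_natCast_atTop_atTop).const_mul_atTop (by linarith)

lemma renewal_bddAbove (hℓ : 0 < ℓ)
    (hτ : Tendsto (fun n : ℕ => (∑ k ∈ Finset.range n, L k) / n) atTop (𝓝 ℓ)) (t : ℝ) :
    BddAbove {n : ℕ | ∑ k ∈ Finset.range n, L k ≤ t} := by
  obtain ⟨N, hN⟩ := eventually_atTop.mp ((tendsto_atTop.mp (tau_tendsto_atTop hℓ hτ)) (t + 1))
  refine ⟨N, fun n hn => ?_⟩
  by_contra h
  push_neg at h
  have h2 := hN n h.le
  have h3 : (∑ k ∈ Finset.range n, L k) ≤ t := hn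
  linarith

lemma renewal_le (hℓ : 0 < ℓ)
    (hτ : Tendsto (fun n : ℕ => (∑ k ∈ Finset.range n, L k) / n) atTop (𝓝 ℓ))
    {t : ℝ} {n : ℕ} (h : ∑ k ∈ Finset.range n, L k ≤ t) : n ≤ renewalCount L t :=
  le_csSup (renewal_bddAbove hℓ hτ t) h

lemma renewal_tau_le (hℓ : 0 < ℓ)
    (hτ : Tendsto (fun n : ℕ => (∑ k ∈ Finset.range n, L k) / n) atTop (𝓝 ℓ))
    {t : ℝ} (ht : 0 ≤ t) : ∑ k ∈ Finset.range (renewalCount L t), L k ≤ t :=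
  Nat.sSup_mem ⟨0, by simp [ht]⟩ (renewal_bddAbove hℓ hτ t)

lemma renewal_lt_tau_succ (hℓ : 0 < ℓ)
    (hτ : Tendsto (fun n : ℕ => (∑ k ∈ Finset.range n, L k) / n) atTop (𝓝 ℓ))
    {t : ℝ} : t < ∑ k ∈ Finset.range (renewalCount L t + 1), L k := by
  by_contra h
  push_neg at h
  have := renewal_le hℓ hτ h
  omega

lemma renewal_mono (hℓ : 0 < ℓ)
    (hτ : Tendsto (fun n : ℕ => (∑ k ∈ Finset.range n, L k) / n) atTop (𝓝 ℓ))
    {s t : ℝ} (hs : 0 ≤ s) (hst : s ≤ t) : renewalCount L s ≤ renewalCount L t :=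
  renewal_le hℓ hτ (le_trans (renewal_tau_le hℓ hτ hs) hst)

lemma renewal_tendsto_atTop (hℓ : 0 < ℓ)
    (hτ : Tendsto (fun n : ℕ => (∑ k ∈ Finset.range n, L k) / n) atTop (𝓝 ℓ)) :
    Tendsto (fun t : ℝ => renewalCount L t) atTop atTop := by
  rw [tendsto_atTop]
  intro n
  rw [eventually_atTop]
  exact ⟨∑ k ∈ Finset.range n, L k, fun t ht => renewal_le hℓ hτ ht⟩

/-- The renewal theorem (elementary form): `g t / t → 1 / ℓ`. -/
lemma renewal_tendsto_div (hℓ : 0 < ℓ)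
    (hτ : Tendsto (fun n : ℕ => (∑ k ∈ Finset.range n, L k) / n) atTop (𝓝 ℓ)) :
    Tendsto (fun t : ℝ => (renewalCount L t : ℝ) / t) atTop (𝓝 ℓ⁻¹) := by
  set τ : ℕ → ℝ := fun n => ∑ k ∈ Finset.range n, L k with hτdef
  set g : ℝ → ℕ := fun t => renewalCount L t with hgdef
  have hgtop : Tendsto (fun t : ℝ => g t) atTop atTop := renewal_tendsto_atTop hℓ hτ
  have hg1 : ∀ᶠ t : ℝ in atTop, 1 ≤ g t := hgtop.eventually (eventually_ge_atTop 1)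
  -- lower squeeze function
  have hlow : Tendsto (fun t : ℝ => τ (g t) / (g t : ℝ)) atTop (𝓝 ℓ) := hτ.comp hgtop
  -- upper squeeze function
  have hup' : Tendsto (fun n : ℕ => τ (n + 1) / (n : ℝ)) atTop (𝓝 ℓ) := by
    have h1 : Tendsto (fun n : ℕ => τ (n + 1) / ((n : ℝ) + 1)) atTop (𝓝 ℓ) := by
      apply (hτ.comp (tendsto_add_atTop_nat 1)).congr
      intro n
      simp only [Function.comp_apply]
      push_cast
      rfl
    have h2 : Tendsto (fun n : ℕ => ((n : ℝ) + 1) / (n : ℝ)) atTop (𝓝 1) := by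
      have h3 : Tendsto (fun n : ℕ => 1 + (n:ℝ)⁻¹) atTop (𝓝 (1 + 0)) :=
        tendsto_const_nhds.add tendsto_inv_atTop_nhds_zero_nat
      rw [add_zero] at h3
      apply h3.congr'
      filter_upwards [eventually_gt_atTop 0] with n hn
      have : (n:ℝ) ≠ 0 := Nat.cast_ne_zero.mpr hn.ne'
      field_simp
    have := h1.mul h2
    rw [mul_one] at this
    apply this.congr'
    filter_upwards [eventually_gt_atTop 0] with n hn
    have : (n:ℝ) ≠ 0 := Nat.cast_ne_zero.mpr hn.ne'
    field_simp
  have hup : Tendsto (fun t : ℝ => τ (g t + 1) / (g t : ℝ)) atTop (𝓝 ℓ) := hup'.comp hgtop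
  -- squeeze t / g t between them
  have hmid : Tendsto (fun t : ℝ => t / (g t : ℝ)) atTop (𝓝 ℓ) := by
    apply tendsto_of_tendsto_of_tendsto_of_le_of_le' hlow hup
    · filter_upwards [hg1, eventually_ge_atTop (0:ℝ)] with t h1 h0
      have hpos : (0:ℝ) < (g t : ℝ) := by exact_mod_cast h1
      gcongr
      exact renewal_tau_le hℓ hτ h0
    · filter_upwards [hg1] with t h1
      have hpos : (0:ℝ) < (g t : ℝ) := by exact_mod_cast h1
      gcongr
      exact (renewal_lt_tau_succ hℓ hτ).le
  have hinv : Tendsto (fun t : ℝ => (t / (g t : ℝ))⁻¹) atTop (𝓝 ℓ⁻¹) :=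
    hmid.inv₀ hℓ.ne'
  apply hinv.congr'
  filter_upwards [hg1, eventually_gt_atTop (0:ℝ)] with t h1 h0
  exact inv_div _ _

end Renewal

section RunMax

/-- The running maximum changes by at most the maximal increment. -/
lemma runMax_diff_le (ξ : ℕ → ℝ) {a b : ℕ} (hab : a ≤ b) {x : ℝ} (hx : 0 ≤ x)
    (h : ∀ k, a < k → k ≤ b →
      |∑ i ∈ Finset.range k, ξ i - ∑ i ∈ Finset.range a, ξ i| ≤ x) :
    |runMax ξ b - runMax ξ a| ≤ x := by
  rcases Nat.eq_zero_or_pos b with hb | hb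
  · have ha : a = 0 := by omega
    simp [runMax, hb, ha, hx]
  have hbne : b ≠ 0 := hb.ne'
  rw [runMax]
  rw [dif_neg hbne]
  obtain ⟨j, hj, hjeq⟩ := Finset.exists_mem_eq_sup' (Finset.nonempty_range_iff.mpr hbne)
    (fun j => ∑ i ∈ Finset.range (j + 1), ξ i)
  rw [hjeq]
  rw [Finset.mem_range] at hj
  rcases Nat.eq_zero_or_pos a with ha | ha
  · -- a = 0 : runMax ξ a = 0 and S_0 = 0
    subst ha
    rw [runMax, dif_pos rfl, sub_zero]
    have := h (j + 1) (by omega) (by omega)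
    simpa using this
  · have hane : a ≠ 0 := ha.ne'
    rw [runMax, dif_neg hane]
    set Ma := (Finset.range a).sup' (Finset.nonempty_range_iff.mpr hane)
      (fun j => ∑ i ∈ Finset.range (j + 1), ξ i) with hMa
    have hSa_le : (∑ i ∈ Finset.range a, ξ i) ≤ Ma := by
      have hmem : a - 1 ∈ Finset.range a := by simp; omega
      have := Finset.le_sup' (fun j => ∑ i ∈ Finset.range (j + 1), ξ i) hmem
      have heq : a - 1 + 1 = a := by omega
      rwa [heq] at this
    have hMa_le : Ma ≤ ∑ i ∈ Finset.range (j + 1), ξ i := by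
      rw [hMa, ← hjeq]
      exact Finset.sup'_mono _ (Finset.range_subset_range.mpr hab) _
    rw [abs_of_nonneg (by linarith)]
    by_cases hja : j + 1 ≤ a
    · have : (∑ i ∈ Finset.range (j + 1), ξ i) ≤ Ma :=
        Finset.le_sup' (fun j => ∑ i ∈ Finset.range (j + 1), ξ i)
          (Finset.mem_range.mpr (show j < a by omega))
      linarith
    · have h1 := h (j + 1) (by omega) (by omega)
      have h2 := (abs_le.mp h1).2
      linarith

/-- bound on `|runMax|` by the maximum of `|S_m|`. -/
lemma abs_runMax_le (ξ : ℕ → ℝ) {a B : ℕ} (haB : a ≤ B) {y : ℝ} (hy : 0 ≤ y)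
    (h : ∀ m, 1 ≤ m → m ≤ B → |∑ i ∈ Finset.range m, ξ i| ≤ y) :
    |runMax ξ a| ≤ y := by
  rcases Nat.eq_zero_or_pos a with ha | ha
  · simp [runMax, ha, hy]
  have hane : a ≠ 0 := ha.ne'
  rw [runMax, dif_neg hane]
  obtain ⟨j, hj, hjeq⟩ := Finset.exists_mem_eq_sup' (Finset.nonempty_range_iff.mpr hane)
    (fun j => ∑ i ∈ Finset.range (j + 1), ξ i)
  rw [hjeq]
  rw [Finset.mem_range] at hj
  exact h (j + 1) (by omega) (by omega)

end RunMax

section MeasRenewal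

variable {Ω : Type*} [MeasurableSpace Ω]

lemma measurable_renewalCount (L : ℕ → Ω → ℝ) (hL : ∀ k, Measurable (L k)) (t : ℝ) :
    Measurable fun ω => renewalCount (fun i => L i ω) t := by
  have hτ : ∀ n, Measurable fun ω => ∑ k ∈ Finset.range n, L k ω :=
    fun n => Finset.measurable_sum _ fun k _ => hL k
  have hfiber : ∀ n : ℕ, (fun ω => renewalCount (fun i => L i ω) t) ⁻¹' {n + 1}
      = {ω | ∑ k ∈ Finset.range (n + 1), L k ω ≤ t}
        ∩ ⋂ m : ℕ, {ω | t < ∑ k ∈ Finset.range (n + 2 + m), L k ω} := by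
    intro n
    ext ω
    simp only [Set.mem_preimage, Set.mem_singleton_iff, Set.mem_inter_iff, Set.mem_iInter,
      Set.mem_setOf_eq, renewalCount]
    set S := {m : ℕ | ∑ k ∈ Finset.range m, L k ω ≤ t} with hS
    constructor
    · intro hsup
      by_cases hbdd : BddAbove S
      · by_cases hne : S.Nonempty
        · have hmem : sSup S ∈ S := Nat.sSup_mem hne hbdd
          rw [hsup] at hmem
          refine ⟨hmem, fun m => ?_⟩
          by_contra hc
          push_neg at hc
          have := le_csSup hbdd (show n + 2 + m ∈ S from hc)
          omega
        · rw [Set.not_nonempty_iff_eq_empty] at hne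
          rw [hne] at hsup
          simp [csSup_empty] at hsup
      · rw [csSup_of_not_bddAbove hbdd] at hsup
        simp [csSup_empty] at hsup
    · rintro ⟨h1, h2⟩
      have hub : ∀ m ∈ S, m ≤ n + 1 := by
        intro m hm
        by_contra hc
        push_neg at hc
        have := h2 (m - (n + 2))
        have heq : n + 2 + (m - (n + 2)) = m := by omega
        rw [heq] at this
        exact absurd hm (by simp [hS]; linarith)
      exact le_antisymm (csSup_le ⟨n + 1, h1⟩ hub) (le_csSup ⟨n + 1, hub⟩ h1)
  apply measurable_to_countable'
  intro n
  match n with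
  | 0 =>
    have : (fun ω => renewalCount (fun i => L i ω) t) ⁻¹' {0}
        = (⋃ m : ℕ, (fun ω => renewalCount (fun i => L i ω) t) ⁻¹' {m + 1})ᶜ := by
      ext ω
      simp only [Set.mem_preimage, Set.mem_singleton_iff, Set.mem_compl_iff, Set.mem_iUnion]
      constructor
      · rintro h0 ⟨m, hm⟩; omega
      · intro h
        by_contra hc
        exact h ⟨renewalCount (fun i => L i ω) t - 1, by omega⟩
    rw [this]
    apply MeasurableSet.compl
    apply MeasurableSet.iUnion
    intro m
    rw [hfiber m]
    exact (measurableSet_le (hτ (m + 1)) measurable_const).inter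
      (MeasurableSet.iInter fun k => measurableSet_lt measurable_const (hτ (m + 2 + k)))
  | Nat.succ m =>
    rw [hfiber m]
    exact (measurableSet_le (hτ (m + 1)) measurable_const).inter
      (MeasurableSet.iInter fun k => measurableSet_lt measurable_const (hτ (m + 2 + k)))

end MeasRenewal


/-- For i.i.d. pairs `(ξ_k, L_k)` with `E[ξ₁] = 0`,
`Var(ξ₁) = σ² ∈ (0,∞)`, `L_k > 0` a.s. and `E[L₁] < ∞`, and an increasing function
`ε : (0,∞) → (0,∞)` with `ε(t) → ∞` and `ε(t)/t → 0`, one has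
`M_{g_t}/√t − M_{g_{t−ε(t)}}/√(t−ε(t)) → 0` in probability as `t → ∞`. -/
theorem stmt10 {Ω : Type*} [MeasurableSpace Ω] (μ : Measure Ω) [IsProbabilityMeasure μ]
    (ξ L : ℕ → Ω → ℝ) (σ : ℝ) (hσ : 0 < σ)
    (hmeas : ∀ k, Measurable fun ω => (ξ k ω, L k ω))
    (hindep : iIndepFun (fun k ω => (ξ k ω, L k ω)) μ)
    (hident : ∀ k, IdentDistrib (fun ω => (ξ k ω, L k ω)) (fun ω => (ξ 0 ω, L 0 ω)) μ μ)
    (hξint : Integrable (ξ 0) μ)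
    (hmean : ∫ ω, ξ 0 ω ∂μ = 0)
    (hsqint : Integrable (fun ω => (ξ 0 ω) ^ 2) μ)
    (hvar : ∫ ω, (ξ 0 ω) ^ 2 ∂μ = σ ^ 2)
    (hLpos : ∀ k, ∀ᵐ ω ∂μ, 0 < L k ω)
    (hLint : Integrable (L 0) μ)
    (ε : ℝ → ℝ)
    (hεpos : ∀ t > (0 : ℝ), 0 < ε t)
    (hεmono : ∀ s t : ℝ, 0 < s → s ≤ t → ε s ≤ ε t)
    (hεtop : Tendsto ε atTop atTop)
    (hεsmall : Tendsto (fun t => ε t / t) atTop (𝓝 0)) :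
    TendstoInMeasure μ
      (fun (t : ℝ) ω =>
        runMax (fun i => ξ i ω) (renewalCount (fun i => L i ω) t) / Real.sqrt t
          - runMax (fun i => ξ i ω) (renewalCount (fun i => L i ω) (t - ε t))
              / Real.sqrt (t - ε t))
      atTop (fun _ => (0 : ℝ)) := by
  classical
  -- basic consequences of the hypotheses
  have hLmeas : ∀ k, Measurable (L k) := fun k => measurable_snd.comp (hmeas k)
  have hξmeas : ∀ k, Measurable (ξ k) := fun k => measurable_fst.comp (hmeas k)
  have hindL : iIndepFun L μ :=
    hindep.comp (fun _ => Prod.snd) (fun _ => measurable_snd)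
  have hindξ : iIndepFun ξ μ :=
    hindep.comp (fun _ => Prod.fst) (fun _ => measurable_fst)
  have hidL : ∀ k, IdentDistrib (L k) (L 0) μ μ := fun k => (hident k).comp measurable_snd
  have hidξ : ∀ k, IdentDistrib (ξ k) (ξ 0) μ μ := fun k => (hident k).comp measurable_fst
  set ℓ : ℝ := ∫ ω, L 0 ω ∂μ with hℓdef
  have hℓpos : 0 < ℓ := by
    rw [hℓdef, integral_pos_iff_support_of_nonneg_ae (((hLpos 0)).mono fun ω h => h.le) hLint]
    rw [pos_iff_ne_zero]
    intro hzero
    have h1 : ∀ᵐ ω ∂μ, L 0 ω = 0 := by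
      have : ∀ᵐ ω ∂μ, ω ∉ Function.support (L 0) := measure_eq_zero_iff_ae_notMem.mp hzero
      exact this.mono fun ω h => Function.notMem_support.mp h
    have h2 := (hLpos 0).and h1
    obtain ⟨ω, hω1, hω2⟩ := h2.exists
    rw [hω2] at hω1
    exact lt_irrefl 0 hω1
  set c' : ℝ := ℓ⁻¹ with hc'def
  have hc' : 0 < c' := inv_pos.mpr hℓpos
  -- strong law of large numbers for the L's
  have hslln : ∀ᵐ ω ∂μ, Tendsto (fun n : ℕ => (∑ k ∈ Finset.range n, L k ω) / n)
      atTop (𝓝 ℓ) := by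
    have := strong_law_ae_real L hLint (fun i j hij => hindL.indepFun hij) hidL
    exact this
  have hgconv : ∀ᵐ ω ∂μ, Tendsto (fun t : ℝ => (renewalCount (fun i => L i ω) t : ℝ) / t)
      atTop (𝓝 c') := hslln.mono fun ω h => renewal_tendsto_div hℓpos h
  -- `t - ε t → ∞` and the ratio `t/(t - ε t) → 1`
  have hstop : Tendsto (fun t : ℝ => t - ε t) atTop atTop := by
    have h1 : Tendsto (fun t : ℝ => 1 - ε t / t) atTop (𝓝 (1 - 0)) :=
      tendsto_const_nhds.sub hεsmall
    rw [sub_zero] at h1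
    have h2 : Tendsto (fun t : ℝ => t * (1 - ε t / t)) atTop atTop :=
      Filter.Tendsto.atTop_mul_pos one_pos tendsto_id h1
    apply h2.congr'
    filter_upwards [eventually_ne_atTop (0:ℝ)] with t ht
    field_simp
  have hratio : Tendsto (fun t : ℝ => t / (t - ε t)) atTop (𝓝 1) := by
    have h1 : Tendsto (fun t : ℝ => 1 - ε t / t) atTop (𝓝 (1 - 0)) :=
      tendsto_const_nhds.sub hεsmall
    rw [sub_zero] at h1
    have h2 : Tendsto (fun t : ℝ => 1 / (1 - ε t / t)) atTop (𝓝 (1 / 1)) :=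
      tendsto_const_nhds.div h1 one_ne_zero
    rw [div_one] at h2
    apply h2.congr'
    filter_upwards [eventually_ne_atTop (0:ℝ), hstop.eventually (eventually_gt_atTop (0:ℝ))]
      with t ht hst
    have hd : 1 - ε t / t = (t - ε t) / t := by field_simp
    rw [hd, one_div_div]
  -- unfold convergence in measure and reduce to sequences
  rw [tendstoInMeasure_iff_dist]
  intro δ hδ
  rw [tendsto_iff_seq_tendsto]
  intro u hu
  rw [ENNReal.tendsto_nhds_zero]
  intro ρ hρ
  -- a positive real `r` below `ρ`
  obtain ⟨r, hr, hrρ⟩ : ∃ r : ℝ, 0 < r ∧ ENNReal.ofReal r ≤ ρ := by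
    rcases eq_or_ne ρ ⊤ with h | h
    · exact ⟨1, one_pos, h ▸ le_top⟩
    · exact ⟨ρ.toReal, ENNReal.toReal_pos hρ.ne' h, by rw [ENNReal.ofReal_toReal h]⟩
  -- choose the constants K and θ
  obtain ⟨K, hK, hKb⟩ : ∃ K : ℝ, 0 < K ∧ (2 * c' + 1) * σ ^ 2 / K ^ 2 < r / 4 := by
    have h1 : Tendsto (fun K : ℝ => (2 * c' + 1) * σ ^ 2 / K ^ 2) atTop (𝓝 0) :=
      tendsto_const_nhds.div_atTop (tendsto_pow_atTop two_ne_zero)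
    obtain ⟨K, hK1, hK2⟩ :=
      ((h1.eventually (gt_mem_nhds (by positivity : (0:ℝ) < r / 4))).and
        (eventually_gt_atTop 0)).exists
    exact ⟨K, hK2, hK1⟩
  set θ : ℝ := min (c' / 2) (r * δ ^ 2 / (2048 * (σ ^ 2 + 1))) with hθdef
  have hθpos : 0 < θ := lt_min (by positivity) (by positivity)
  have hθc : θ < c' := lt_of_le_of_lt (min_le_left _ _) (by linarith)
  have hθr : 128 * θ * σ ^ 2 / δ ^ 2 ≤ r / 16 := by
    have h1 : θ ≤ r * δ ^ 2 / (2048 * (σ ^ 2 + 1)) := min_le_right _ _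
    have h1' : θ * (2048 * (σ ^ 2 + 1)) ≤ r * δ ^ 2 := by
      rw [← le_div_iff₀ (by positivity)]
      exact h1
    rw [div_le_iff₀ (by positivity)]
    nlinarith [sq_nonneg σ, hθpos.le]
  -- the deterministic sqrt-correction bound
  have hsqrtcorr : Tendsto (fun t : ℝ => K * (Real.sqrt (t / (t - ε t)) - 1)) atTop (𝓝 0) := by
    have h1 : Tendsto (fun t : ℝ => Real.sqrt (t / (t - ε t))) atTop (𝓝 (Real.sqrt 1)) :=
      (Real.continuous_sqrt.continuousAt).tendsto.comp hratio
    rw [Real.sqrt_one] at h1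
    have h2 : Tendsto (fun t : ℝ => K * (Real.sqrt (t / (t - ε t)) - 1)) atTop
        (𝓝 (K * (1 - 1))) := (h1.sub tendsto_const_nhds).const_mul K
    simpa using h2
  -- the bundle of deterministic eventual facts
  have hdet : ∀ᶠ t : ℝ in atTop,
      1 ≤ t ∧ 1 ≤ t - ε t ∧ 0 < ε t ∧
      K * (Real.sqrt (t / (t - ε t)) - 1) < δ / 4 ∧
      ((⌈(c' + θ) * t⌉₊ : ℝ) * σ ^ 2 / (K * Real.sqrt t) ^ 2 ≤ r / 4) ∧
      ((↑(⌈(c' + θ) * t⌉₊ - ⌊(c' - θ) * t⌋₊) : ℝ) * σ ^ 2 / ((δ / 8) * Real.sqrt t) ^ 2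
        ≤ r / 4) := by
    filter_upwards [eventually_ge_atTop (1:ℝ),
      hstop.eventually (eventually_ge_atTop (1:ℝ)),
      hsqrtcorr.eventually (gt_mem_nhds (by positivity : (0:ℝ) < δ / 4)),
      eventually_ge_atTop (2048 * σ ^ 2 / (δ ^ 2 * r))] with t h1 h2 h3 h4
    have ht0 : (0:ℝ) < t := by linarith
    have hεt : 0 < ε t := hεpos t ht0
    refine ⟨h1, h2, hεt, h3, ?_, ?_⟩
    · -- the E2 bound
      have hsq : (K * Real.sqrt t) ^ 2 = K ^ 2 * t := by
        rw [mul_pow, Real.sq_sqrt ht0.le]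
      have hB : ((⌈(c' + θ) * t⌉₊ : ℕ) : ℝ) ≤ (c' + θ) * t + 1 :=
        (Nat.ceil_lt_add_one (by positivity)).le
      rw [hsq, div_le_iff₀ (by positivity)]
      have hKb' : (2 * c' + 1) * σ ^ 2 ≤ r / 4 * K ^ 2 := by
        rw [div_lt_iff₀ (by positivity)] at hKb
        linarith
      have hBle : ((⌈(c' + θ) * t⌉₊ : ℕ) : ℝ) ≤ (2 * c' + 1) * t := by
        have : (c' + θ) * t + 1 ≤ (2 * c' + 1) * t := by nlinarith
        linarith
      nlinarith [sq_nonneg σ, sq_nonneg K]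
    · -- the E3 bound
      set A := ⌊(c' - θ) * t⌋₊ with hA
      set B := ⌈(c' + θ) * t⌉₊ with hB
      have hc'θ : 0 ≤ c' - θ := by linarith
      have hAB : A ≤ B :=
        le_trans (Nat.floor_le_floor (by nlinarith)) (Nat.floor_le_ceil _)
      have hBA : ((B - A : ℕ) : ℝ) ≤ 2 * θ * t + 2 := by
        rw [Nat.cast_sub hAB]
        have h5 : (B : ℝ) ≤ (c' + θ) * t + 1 := (Nat.ceil_lt_add_one (by positivity)).le
        have h6 : (c' - θ) * t - 1 ≤ (A : ℝ) := by
          have := Nat.lt_floor_add_one ((c' - θ) * t)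
          linarith
        linarith
      have hsq : ((δ / 8) * Real.sqrt t) ^ 2 = δ ^ 2 / 64 * t := by
        rw [mul_pow, Real.sq_sqrt ht0.le]
        ring
      rw [hsq, div_le_iff₀ (by positivity)]
      -- from `hθr` : θ * σ^2 ≤ r * δ^2 / 2048
      have h7 : θ * σ ^ 2 ≤ r * δ ^ 2 / 2048 := by
        rw [div_le_iff₀ (by positivity)] at hθr
        nlinarith
      -- from h4 : 2048 σ² ≤ δ² r t
      have h8 : 2048 * σ ^ 2 ≤ δ ^ 2 * r * t := by
        rw [div_le_iff₀ (by positivity)] at h4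
        linarith
      have h9 : ((B - A : ℕ) : ℝ) * σ ^ 2 ≤ (2 * θ * t + 2) * σ ^ 2 := by
        nlinarith [sq_nonneg σ]
      nlinarith [sq_nonneg σ, ht0.le]
  -- convergence in measure of the renewal counts along the sequence
  set G : ℕ → Ω → ℝ := fun j ω => (renewalCount (fun i => L i ω) (u j) : ℝ) / u j with hGdef
  set H : ℕ → Ω → ℝ :=
    fun j ω => (renewalCount (fun i => L i ω) (u j - ε (u j)) : ℝ) / u j with hHdef
  have hGmeas : ∀ j, AEStronglyMeasurable (G j) μ := fun j =>
    ((measurable_from_top.comp (measurable_renewalCount L hLmeas (u j))).div_const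
      (u j)).aestronglyMeasurable
  have hHmeas : ∀ j, AEStronglyMeasurable (H j) μ := fun j =>
    ((measurable_from_top.comp (measurable_renewalCount L hLmeas (u j - ε (u j)))).div_const
      (u j)).aestronglyMeasurable
  have hGae : ∀ᵐ ω ∂μ, Tendsto (fun j => G j ω) atTop (𝓝 c') :=
    hgconv.mono fun ω h => h.comp hu
  have hsu : Tendsto (fun j => u j - ε (u j)) atTop atTop := hstop.comp hu
  have hHae : ∀ᵐ ω ∂μ, Tendsto (fun j => H j ω) atTop (𝓝 c') := by
    refine hgconv.mono fun ω h => ?_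
    have h1 : Tendsto (fun j => (renewalCount (fun i => L i ω) (u j - ε (u j)) : ℝ)
        / (u j - ε (u j))) atTop (𝓝 c') := h.comp hsu
    have h2 : Tendsto (fun j => (u j - ε (u j)) / u j) atTop (𝓝 1) := by
      have h3 : Tendsto (fun j => 1 - ε (u j) / (u j)) atTop (𝓝 (1 - 0)) :=
        tendsto_const_nhds.sub (hεsmall.comp hu)
      rw [sub_zero] at h3
      apply h3.congr'
      filter_upwards [hu.eventually (eventually_ne_atTop (0:ℝ))] with j hj
      field_simp
    have h4 := h1.mul h2
    rw [mul_one] at h4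
    apply h4.congr'
    filter_upwards [hsu.eventually (eventually_gt_atTop (0:ℝ)),
      hu.eventually (eventually_gt_atTop (0:ℝ))] with j hj1 hj2
    rw [div_mul_div_comm, div_eq_div_iff (by positivity) (by positivity)]
    ring
  have hGm : Tendsto (fun j => μ {x | θ ≤ dist (G j x) c'}) atTop (𝓝 0) :=
    (tendstoInMeasure_iff_dist.mp (tendstoInMeasure_of_tendsto_ae hGmeas hGae)) θ hθpos
  have hHm : Tendsto (fun j => μ {x | θ ≤ dist (H j x) c'}) atTop (𝓝 0) :=
    (tendstoInMeasure_iff_dist.mp (tendstoInMeasure_of_tendsto_ae hHmeas hHae)) θ hθpos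
  have hr4 : (0:ENNReal) < ENNReal.ofReal (r / 4) := ENNReal.ofReal_pos.mpr (by positivity)
  -- final eventual estimate
  filter_upwards [(ENNReal.tendsto_nhds_zero.mp hGm) _ hr4,
    (ENNReal.tendsto_nhds_zero.mp hHm) _ hr4, hu.eventually hdet] with j hGj hHj hdetj
  obtain ⟨ht1, hs1, hεt, hcorr, hE2, hE3⟩ := hdetj
  set t : ℝ := u j with htdef
  set s : ℝ := t - ε t with hsdef
  have ht0 : (0:ℝ) < t := by linarith
  have hs0 : (0:ℝ) < s := by linarith
  set A := ⌊(c' - θ) * t⌋₊ with hAdef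
  set B := ⌈(c' + θ) * t⌉₊ with hBdef
  set Bad2 : Set Ω := {ω | ∃ m, 1 ≤ m ∧ m ≤ B ∧
    K * Real.sqrt t ≤ |∑ i ∈ Finset.Ico 0 (0 + m), ξ i ω|} with hBad2def
  set Bad3 : Set Ω := {ω | ∃ m, 1 ≤ m ∧ m ≤ B - A ∧
    (δ / 8) * Real.sqrt t ≤ |∑ i ∈ Finset.Ico A (A + m), ξ i ω|} with hBad3def
  set Bad0 : Set Ω := {ω | ¬ Tendsto (fun n : ℕ => (∑ k ∈ Finset.range n, L k ω) / n)
      atTop (𝓝 ℓ)} with hBad0def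
  have hμBad0 : μ Bad0 = 0 := by
    rw [hBad0def]
    exact ae_iff.mp hslln
  have hμBad2 : μ Bad2 ≤ ENNReal.ofReal (r / 4) := by
    have h := kolmogorov_max_ineq ξ hξmeas hindξ hidξ hmean hsqint 0 B
      (K * Real.sqrt t) (by positivity)
    rw [hvar] at h
    exact h.trans (ENNReal.ofReal_le_ofReal hE2)
  have hμBad3 : μ Bad3 ≤ ENNReal.ofReal (r / 4) := by
    have h := kolmogorov_max_ineq ξ hξmeas hindξ hidξ hmean hsqint A (B - A)
      ((δ / 8) * Real.sqrt t) (by positivity)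
    rw [hvar] at h
    exact h.trans (ENNReal.ofReal_le_ofReal hE3)
  -- the inclusion of the bad set
  have hincl : {x | δ ≤ dist
      (runMax (fun i => ξ i x) (renewalCount (fun i => L i x) t) / Real.sqrt t
        - runMax (fun i => ξ i x) (renewalCount (fun i => L i x) s) / Real.sqrt s) 0}
      ⊆ Bad0 ∪ ({x | θ ≤ dist (G j x) c'} ∪ ({x | θ ≤ dist (H j x) c'} ∪ (Bad2 ∪ Bad3))) := by
    intro x hx
    by_contra hnot
    simp only [Set.mem_union, not_or] at hnot
    obtain ⟨h0, h1, h2, h3, h4⟩ := hnot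
    -- the pointwise hypotheses
    rw [hBad0def, Set.mem_setOf_eq, not_not] at h0
    rw [Set.mem_setOf_eq, not_le, Real.dist_eq] at h1 h2
    rw [hBad2def, Set.mem_setOf_eq] at h3
    rw [hBad3def, Set.mem_setOf_eq] at h4
    push_neg at h3 h4
    set a := renewalCount (fun i => L i x) s with hadef
    set b := renewalCount (fun i => L i x) t with hbdef
    have hab : a ≤ b := renewal_mono hℓpos h0 hs0.le (by rw [hsdef]; linarith)
    -- bounds on a and b
    have hGx : |(b : ℝ) / t - c'| < θ := h1
    have hHx : |(a : ℝ) / t - c'| < θ := h2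
    have hb_ub : (b : ℝ) ≤ (c' + θ) * t := by
      have := (abs_lt.mp hGx).2
      rw [div_sub' ht0.ne'] at this
      rw [div_lt_iff₀ ht0] at this
      nlinarith
    have ha_lb : (c' - θ) * t ≤ (a : ℝ) := by
      have := (abs_lt.mp hHx).1
      rw [div_sub' ht0.ne'] at this
      rw [lt_div_iff₀ ht0] at this
      nlinarith
    have ha_ub : (a : ℝ) ≤ (c' + θ) * t := by
      have h5 : (a : ℝ) ≤ (b : ℝ) := by exact_mod_cast hab
      linarith
    have hbB : b ≤ B := by
      have : (b:ℝ) ≤ (B:ℝ) := hb_ub.trans (Nat.le_ceil _)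
      exact_mod_cast this
    have haB : a ≤ B := le_trans hab hbB
    have hAa : A ≤ a := by
      have h5 : (A:ℝ) ≤ (c' - θ) * t := Nat.floor_le (by nlinarith)
      have : (A:ℝ) ≤ (a:ℝ) := h5.trans ha_lb
      exact_mod_cast this
    -- bound on |M_a|
    have hMa : |runMax (fun i => ξ i x) a| ≤ K * Real.sqrt t := by
      apply abs_runMax_le _ haB (by positivity)
      intro m hm1 hmB
      have := h3 m hm1 hmB
      rw [Nat.zero_add, ← Finset.range_eq_Ico] at this
      exact this.le
    -- bound on the increments
    have hstep : ∀ k, A < k → k ≤ B →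
        |∑ i ∈ Finset.range k, ξ i x - ∑ i ∈ Finset.range A, ξ i x|
          ≤ (δ / 8) * Real.sqrt t := by
      intro k hAk hkB
      have h5 := h4 (k - A) (by omega) (by omega)
      have h6 : A + (k - A) = k := by omega
      rw [h6] at h5
      rw [← Finset.sum_Ico_eq_sub _ (by omega : A ≤ k)]
      exact h5.le
    have hdiff : |runMax (fun i => ξ i x) b - runMax (fun i => ξ i x) a|
        ≤ (δ / 4) * Real.sqrt t := by
      apply runMax_diff_le _ hab (by positivity)
      intro k hak hkb
      have h7 : |∑ i ∈ Finset.range k, ξ i x - ∑ i ∈ Finset.range A, ξ i x|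
          ≤ (δ / 8) * Real.sqrt t := hstep k (by omega) (by omega)
      have h8 : |∑ i ∈ Finset.range a, ξ i x - ∑ i ∈ Finset.range A, ξ i x|
          ≤ (δ / 8) * Real.sqrt t := by
        rcases eq_or_lt_of_le hAa with hEq | hlt
        · rw [← hEq]
          simp
          positivity
        · exact hstep a hlt haB
      calc |∑ i ∈ Finset.range k, ξ i x - ∑ i ∈ Finset.range a, ξ i x|
          = |(∑ i ∈ Finset.range k, ξ i x - ∑ i ∈ Finset.range A, ξ i x)
            - (∑ i ∈ Finset.range a, ξ i x - ∑ i ∈ Finset.range A, ξ i x)| := by ring_nf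
        _ ≤ |∑ i ∈ Finset.range k, ξ i x - ∑ i ∈ Finset.range A, ξ i x|
            + |∑ i ∈ Finset.range a, ξ i x - ∑ i ∈ Finset.range A, ξ i x| := abs_sub _ _
        _ ≤ (δ / 8) * Real.sqrt t + (δ / 8) * Real.sqrt t := add_le_add h7 h8
        _ = (δ / 4) * Real.sqrt t := by ring
    -- final numeric estimate
    set Ma := runMax (fun i => ξ i x) a with hMadef
    set Mb := runMax (fun i => ξ i x) b with hMbdef
    set st := Real.sqrt t with hstdef
    set ss := Real.sqrt s with hssdef
    have hst1 : 1 ≤ st := by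
      rw [hstdef, show (1:ℝ) = Real.sqrt 1 from (Real.sqrt_one).symm]
      exact Real.sqrt_le_sqrt ht1
    have hss1 : 1 ≤ ss := by
      rw [hssdef, show (1:ℝ) = Real.sqrt 1 from (Real.sqrt_one).symm]
      exact Real.sqrt_le_sqrt hs1
    have hsle : ss ≤ st := Real.sqrt_le_sqrt (by rw [hsdef]; linarith)
    have hst0 : (0:ℝ) < st := by linarith
    have hss0 : (0:ℝ) < ss := by linarith
    have hkey : Mb / st - Ma / ss = (Mb - Ma) / st + Ma * (1 / st - 1 / ss) := by
      field_simp
      ring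
    have hterm1 : |(Mb - Ma) / st| ≤ δ / 4 := by
      rw [abs_div, abs_of_pos hst0, div_le_iff₀ hst0]
      calc |Mb - Ma| ≤ (δ / 4) * st := hdiff
        _ = δ / 4 * st := by ring
    have hterm2 : |Ma * (1 / st - 1 / ss)| < δ / 4 := by
      rw [abs_mul]
      have h9 : |1 / st - 1 / ss| = 1 / ss - 1 / st := by
        rw [abs_of_nonpos]
        · ring
        · have : 1 / st ≤ 1 / ss := one_div_le_one_div_of_le hss0 hsle
          linarith
      rw [h9]
      have h10 : |Ma| * (1 / ss - 1 / st) ≤ (K * st) * (1 / ss - 1 / st) := by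
        apply mul_le_mul_of_nonneg_right hMa
        have : 1 / st ≤ 1 / ss := one_div_le_one_div_of_le hss0 hsle
        linarith
      have h11 : (K * st) * (1 / ss - 1 / st) = K * (st / ss - 1) := by
        field_simp
      have h12 : st / ss = Real.sqrt (t / s) := by
        rw [hstdef, hssdef, Real.sqrt_div ht0.le]
      calc |Ma| * (1 / ss - 1 / st) ≤ (K * st) * (1 / ss - 1 / st) := h10
        _ = K * (st / ss - 1) := h11
        _ = K * (Real.sqrt (t / s) - 1) := by rw [h12]
        _ < δ / 4 := hcorr
    have hfinal : |Mb / st - Ma / ss| < δ := by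
      rw [hkey]
      calc |(Mb - Ma) / st + Ma * (1 / st - 1 / ss)|
          ≤ |(Mb - Ma) / st| + |Ma * (1 / st - 1 / ss)| := abs_add_le _ _
        _ < δ / 4 + δ / 4 := add_lt_add_of_le_of_lt hterm1 hterm2
        _ < δ := by linarith
    rw [Set.mem_setOf_eq, Real.dist_eq, sub_zero] at hx
    exact absurd hx (not_le.mpr hfinal)
  -- put the measure bounds together
  refine le_trans (measure_mono hincl) (le_trans ?_ hrρ)
  calc μ (Bad0 ∪ ({x | θ ≤ dist (G j x) c'} ∪ ({x | θ ≤ dist (H j x) c'}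
          ∪ (Bad2 ∪ Bad3))))
      ≤ μ Bad0 + (μ {x | θ ≤ dist (G j x) c'} + (μ {x | θ ≤ dist (H j x) c'}
          + (μ Bad2 + μ Bad3))) := by
        refine le_trans (measure_union_le _ _) (add_le_add_right ?_ _)
        refine le_trans (measure_union_le _ _) (add_le_add_right ?_ _)
        refine le_trans (measure_union_le _ _) (add_le_add_right ?_ _)
        exact measure_union_le _ _
    _ ≤ 0 + (ENNReal.ofReal (r / 4) + (ENNReal.ofReal (r / 4)
          + (ENNReal.ofReal (r / 4) + ENNReal.ofReal (r / 4)))) :=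
        add_le_add (le_of_eq hμBad0)
          (add_le_add hGj (add_le_add hHj (add_le_add hμBad2 hμBad3)))
    _ = ENNReal.ofReal (r / 4 + (r / 4 + (r / 4 + r / 4))) := by
        rw [zero_add, ← ENNReal.ofReal_add (by positivity) (by positivity),
          ← ENNReal.ofReal_add (by positivity) (by positivity),
          ← ENNReal.ofReal_add (by positivity) (by positivity)]
    _ = ENNReal.ofReal r := by congr 1; ring
end

section
/- Let Z, A, B be nonnegative real random variables with Z independent of the pair (A, B), such that Z has the same distribution as AZ + B. Let m ≥ 1 be an integer and suppose E[Z^m] < ∞, E[A^m] < ∞, and E[A^k B^{m−k}] < ∞ for all 0 ≤ k ≤ m−1. Then E[Z^m]·(1 − E[A^m]) = Σ_{k=0}^{m−1} binom(m, k) · E[A^k B^{m−k}] · E[Z^k]. -/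
open MeasureTheory ProbabilityTheory Filter Topology

/-- **moment recursion for the fixed point of `Z =d AZ + B`.**
Let `Z, A, B` be nonnegative real random variables with `Z` independent of the pair
`(A, B)` and `Z =d AZ + B`.  Let `m ≥ 1` and suppose `E[Z^m] < ∞`, `E[A^m] < ∞` and
`E[A^k B^{m−k}] < ∞` for all `0 ≤ k ≤ m − 1`.  Then
`E[Z^m]·(1 − E[A^m]) = Σ_{k=0}^{m−1} C(m,k) · E[A^k B^{m−k}] · E[Z^k]`. -/
theorem stmt13 {Ω : Type*} [MeasurableSpace Ω] (μ : Measure Ω) [IsProbabilityMeasure μ]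
    (Z A B : Ω → ℝ)
    (hZmeas : Measurable Z) (hAmeas : Measurable A) (hBmeas : Measurable B)
    (hZnn : ∀ᵐ ω ∂μ, 0 ≤ Z ω) (hAnn : ∀ᵐ ω ∂μ, 0 ≤ A ω) (hBnn : ∀ᵐ ω ∂μ, 0 ≤ B ω)
    (hindep : IndepFun Z (fun ω => (A ω, B ω)) μ)
    (hfix : IdentDistrib Z (fun ω => A ω * Z ω + B ω) μ μ)
    (m : ℕ) (hm : 1 ≤ m)
    (hZm : Integrable (fun ω => Z ω ^ m) μ)
    (hAm : Integrable (fun ω => A ω ^ m) μ)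
    (hABk : ∀ k ≤ m - 1, Integrable (fun ω => A ω ^ k * B ω ^ (m - k)) μ) :
    (∫ ω, Z ω ^ m ∂μ) * (1 - ∫ ω, A ω ^ m ∂μ)
      = ∑ k ∈ Finset.range m,
          (m.choose k : ℝ) * (∫ ω, A ω ^ k * B ω ^ (m - k) ∂μ) * ∫ ω, Z ω ^ k ∂μ := by
  -- integrability of Z^k for k ≤ m
  have hZk : ∀ k ≤ m, Integrable (fun ω => Z ω ^ k) μ := by
    intro k hk
    have h1 : Integrable (fun ω => 1 + Z ω ^ m) μ := (integrable_const 1).add hZm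
    refine h1.mono ((hZmeas.pow_const k).aestronglyMeasurable) ?_
    filter_upwards [hZnn] with ω hω
    have h2 : Z ω ^ k ≤ 1 + Z ω ^ m := by
      rcases le_total (Z ω) 1 with h | h
      · calc Z ω ^ k ≤ 1 ^ k := pow_le_pow_left₀ hω h k
          _ = 1 := one_pow k
          _ ≤ 1 + Z ω ^ m := le_add_of_nonneg_right (pow_nonneg hω m)
      · calc Z ω ^ k ≤ Z ω ^ m := pow_le_pow_right₀ h hk
          _ ≤ 1 + Z ω ^ m := le_add_of_nonneg_left one_pos.le
    simp only [Real.norm_eq_abs]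
    rw [abs_of_nonneg (pow_nonneg hω k), abs_of_nonneg (by positivity)]
    exact h2
  -- integrability of A^k B^(m-k) for all k ≤ m
  have hAB : ∀ k ≤ m, Integrable (fun ω => A ω ^ k * B ω ^ (m - k)) μ := by
    intro k hk
    rcases eq_or_lt_of_le hk with rfl | hlt
    · simpa using hAm
    · exact hABk k (Nat.le_sub_one_of_lt hlt)
  -- independence of A^k B^(m-k) and Z^k
  have hind : ∀ k : ℕ, IndepFun (fun ω => A ω ^ k * B ω ^ (m - k)) (fun ω => Z ω ^ k) μ := by
    intro k
    have := (hindep.comp (measurable_id.pow_const k)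
      ((measurable_fst.pow_const k).mul (measurable_snd.pow_const (m - k)))).symm
    exact this
  -- each summand integrable
  have hint : ∀ k ∈ Finset.range (m + 1),
      Integrable (fun ω => (m.choose k : ℝ) *
        ((A ω ^ k * B ω ^ (m - k)) * Z ω ^ k)) μ := by
    intro k hk
    rw [Finset.mem_range, Nat.lt_succ_iff] at hk
    exact ((hind k).integrable_mul (hAB k hk) (hZk k hk)).const_mul _
  -- the key identity
  have key : ∫ ω, Z ω ^ m ∂μ = ∑ k ∈ Finset.range (m + 1),
      (m.choose k : ℝ) * (∫ ω, A ω ^ k * B ω ^ (m - k) ∂μ) * ∫ ω, Z ω ^ k ∂μ := by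
    have h0 : ∫ ω, Z ω ^ m ∂μ = ∫ ω, (A ω * Z ω + B ω) ^ m ∂μ :=
      (hfix.comp (measurable_id.pow_const m)).integral_eq
    have h1 : ∀ ω, (A ω * Z ω + B ω) ^ m = ∑ k ∈ Finset.range (m + 1),
        (m.choose k : ℝ) * ((A ω ^ k * B ω ^ (m - k)) * Z ω ^ k) := by
      intro ω
      rw [add_pow]
      refine Finset.sum_congr rfl fun k _ => ?_
      rw [mul_pow]; ring
    rw [h0]
    calc ∫ ω, (A ω * Z ω + B ω) ^ m ∂μ
        = ∫ ω, ∑ k ∈ Finset.range (m + 1),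
            (m.choose k : ℝ) * ((A ω ^ k * B ω ^ (m - k)) * Z ω ^ k) ∂μ := by
          simp_rw [h1]
      _ = ∑ k ∈ Finset.range (m + 1),
            ∫ ω, (m.choose k : ℝ) * ((A ω ^ k * B ω ^ (m - k)) * Z ω ^ k) ∂μ :=
          integral_finset_sum _ hint
      _ = ∑ k ∈ Finset.range (m + 1),
            (m.choose k : ℝ) * (∫ ω, A ω ^ k * B ω ^ (m - k) ∂μ) * ∫ ω, Z ω ^ k ∂μ := by
          refine Finset.sum_congr rfl fun k hk => ?_
          rw [Finset.mem_range, Nat.lt_succ_iff] at hk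
          rw [integral_const_mul, mul_assoc]
          congr 1
          exact (hind k).integral_mul_eq_mul_integral (hAB k hk).aestronglyMeasurable (hZk k hk).aestronglyMeasurable
  have hsplit := Finset.sum_range_succ
    (fun k => (m.choose k : ℝ) * (∫ ω, A ω ^ k * B ω ^ (m - k) ∂μ) * ∫ ω, Z ω ^ k ∂μ) m
  rw [hsplit] at key
  have hmm : (m.choose m : ℝ) * (∫ ω, A ω ^ m * B ω ^ (m - m) ∂μ) * ∫ ω, Z ω ^ m ∂μ
      = (∫ ω, A ω ^ m ∂μ) * ∫ ω, Z ω ^ m ∂μ := by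
    simp [Nat.choose_self]
  rw [hmm] at key
  linarith [key]
end
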